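/- arXiv:1903.03977 — 8 statements merged into one kernel-verified Lean document; each statement's English description precedes it below -/
import Mathlib

section
/- Let H₊, H₋ be complex Hilbert spaces and H = H₊ × H₋ their Hilbert direct sum. Let S₊, S₋ be self-adjoint operators in H₊, H₋, let M be a densely defined operator from H₋ to H₊ with adjoint M*, with dom S₋ ⊆ dom M, dom S₊ ⊆ dom M*, and suppose there are constants a₋, a₊ ≥ 0 and 0 ≤ b₋, b₊ < 1 such that ‖M f₋‖² ≤ a₋‖f₋‖² + b₋‖S₋ f₋‖² for all f₋ ∈ dom S₋ and ‖M* f₊‖² ≤ a₊‖f₊‖² + b₊‖S₊ f₊‖² for all f₊ ∈ dom S₊. Define S on dom S = dom S₊ × dom S₋ by S(f₊, f₋) = (S₊ f₊ + M f₋, −M* f₊ + S₋ f₋), and let J be the bounded operator J(f₊, f₋) = (f₊, −f₋). Then the operator J∘S, with domain dom S, is self-adjoint in H. -/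
noncomputable section

open Filter Topology

/-- `R` is the (bounded, everywhere defined) resolvent of the possibly unbounded
operator `S` at the point `lam`: the range of `R` lies in the domain of `S`,
`(S - lam) ∘ R = id` on the whole space and `R ∘ (S - lam) = id` on the domain of `S`. -/
def ResolventAt {H : Type*} [NormedAddCommGroup H] [InnerProductSpace ℂ H]
    (S : H →ₗ.[ℂ] H) (lam : ℂ) (R : H →L[ℂ] H) : Prop :=
  (∀ f : H, ∃ h : R f ∈ S.domain, S ⟨R f, h⟩ - lam • R f = f) ∧
  ∀ g : S.domain, R (S g - lam • (g : H)) = g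

/-- `lam` belongs to the resolvent set of `S`. -/
def InResolventSet {H : Type*} [NormedAddCommGroup H] [InnerProductSpace ℂ H]
    (S : H →ₗ.[ℂ] H) (lam : ℂ) : Prop :=
  ∃ R : H →L[ℂ] H, ResolventAt S lam R

/-- The spectrum of a possibly unbounded operator. -/
def Spec {H : Type*} [NormedAddCommGroup H] [InnerProductSpace ℂ H]
    (S : H →ₗ.[ℂ] H) : Set ℂ :=
  {lam | ¬ InResolventSet S lam}

section KatoRellich

open Complex LinearPMap

variable {E : Type*} [NormedAddCommGroup E] [InnerProductSpace ℂ E] [CompleteSpace E]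

local notation "⟪" x ", " y "⟫" => @inner ℂ _ _ x y

set_option linter.unusedSectionVars false

lemma KR.apply_eq_of_eq {A B : E →ₗ.[ℂ] E} (h : A = B) {x : E} (hx : x ∈ A.domain) :
    A ⟨x, hx⟩ = B ⟨x, h ▸ hx⟩ := by subst h; rfl

/-- A possibly unbounded operator is symmetric. -/
def KR.PSymm (S : E →ₗ.[ℂ] E) : Prop := ∀ x y : S.domain, ⟪S x, (y : E)⟫ = ⟪(x : E), S y⟫

open KR

lemma KR.isSymm_of_selfAdjoint {S : E →ₗ.[ℂ] E} (hS : IsSelfAdjoint S) : PSymm S := by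
  have hd := hS.dense_domain
  have h := LinearPMap.adjoint_isFormalAdjoint (T := S) hd
  have heq : S.adjoint = S := LinearPMap.isSelfAdjoint_def.mp hS
  have hdom : S.domain = S.adjoint.domain := (congrArg LinearPMap.domain heq).symm
  intro x y
  have := h ⟨(x : E), hdom ▸ x.2⟩ y
  rwa [apply_eq_of_eq heq] at this

lemma KR.sq_le_imp {a b : ℝ} (hb : 0 ≤ b) (h : a ^ 2 ≤ b ^ 2) : a ≤ b := by
  nlinarith [abs_nonneg a, le_abs_self a, _root_.sq_abs a]
lemma KR.norm_sq_eq {S : E →ₗ.[ℂ] E} (hS : PSymm S) (μ : ℝ) (f : S.domain) :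
    ‖S f + ((μ : ℂ) * Complex.I) • (f : E)‖ ^ 2 = ‖S f‖ ^ 2 + μ ^ 2 * ‖(f : E)‖ ^ 2 := by
  have hreal : (⟪S f, (f : E)⟫).im = 0 := by
    have h1 : (starRingEnd ℂ) ⟪S f, (f : E)⟫ = ⟪S f, (f : E)⟫ := by
      rw [inner_conj_symm]; exact (hS f f).symm
    exact Complex.conj_eq_iff_im.mp h1
  have hre : RCLike.re ⟪S f, ((μ : ℂ) * Complex.I) • (f : E)⟫ = 0 := by
    rw [inner_smul_right]
    simp [Complex.mul_re, Complex.mul_im, hreal]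
  rw [@norm_add_sq ℂ, hre, norm_smul]
  have h2 : ‖(μ : ℂ) * Complex.I‖ = |μ| := by simp
  rw [h2, mul_pow, _root_.sq_abs]
  ring

lemma KR.norm_f_le {S : E →ₗ.[ℂ] E} (hS : PSymm S) (μ : ℝ) (f : S.domain) :
    |μ| * ‖(f : E)‖ ≤ ‖S f + ((μ : ℂ) * Complex.I) • (f : E)‖ := by
  refine sq_le_imp (norm_nonneg _) ?_
  rw [norm_sq_eq hS μ f, mul_pow, _root_.sq_abs]
  nlinarith [sq_nonneg ‖S f‖]

lemma KR.norm_Sf_le {S : E →ₗ.[ℂ] E} (hS : PSymm S) (μ : ℝ) (f : S.domain) :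
    ‖S f‖ ≤ ‖S f + ((μ : ℂ) * Complex.I) • (f : E)‖ := by
  refine sq_le_imp (norm_nonneg _) ?_
  rw [norm_sq_eq hS μ f]
  nlinarith [sq_nonneg (|μ| * ‖(f : E)‖), _root_.sq_abs μ, mul_pow |μ| ‖(f : E)‖ 2]

lemma KR.pmap_inj {S : E →ₗ.[ℂ] E} (hS : PSymm S) {μ : ℝ} (hμ : μ ≠ 0) {f g : S.domain}
    (h : S f + ((μ : ℂ) * Complex.I) • (f : E) = S g + ((μ : ℂ) * Complex.I) • (g : E)) :
    f = g := by
  have h0 : S (f - g) + ((μ : ℂ) * Complex.I) • ((f - g : S.domain) : E) = 0 := by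
    rw [LinearPMap.map_sub]
    push_cast
    rw [smul_sub]
    abel_nf
    rw [← sub_eq_zero] at h ⊢
    abel_nf at h ⊢
    convert h using 2 <;> abel
  have := norm_f_le hS μ (f - g)
  rw [h0, norm_zero] at this
  have : ‖((f - g : S.domain) : E)‖ = 0 := by
    have habs : 0 < |μ| := abs_pos.mpr hμ
    nlinarith [norm_nonneg ((f - g : S.domain) : E)]
  have : ((f - g : S.domain) : E) = 0 := norm_eq_zero.mp this
  have : (f - g : S.domain) = 0 := Subtype.ext (by simpa using this)
  exact sub_eq_zero.mp this
lemma KR.pmap_surj {S : E →ₗ.[ℂ] E} (hS : IsSelfAdjoint S) {μ : ℝ} (hμ : μ ≠ 0) (g : E) :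
    ∃ f : S.domain, S f + ((μ : ℂ) * Complex.I) • (f : E) = g := by
  classical
  set c : ℂ := (μ : ℂ) * Complex.I with hc
  have hsym : PSymm S := isSymm_of_selfAdjoint hS
  have heq : S.adjoint = S := LinearPMap.isSelfAdjoint_def.mp hS
  have hd := hS.dense_domain
  have hdom : S.domain = S.adjoint.domain := (congrArg LinearPMap.domain heq).symm
  set L : S.domain →ₗ[ℂ] E := S.toFun + c • S.domain.subtype with hL
  have hLapp : ∀ f : S.domain, L f = S f + c • (f : E) := fun f => rfl
  -- range is closed
  have hclosed : IsClosed ((LinearMap.range L : Submodule ℂ E) : Set E) := by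
    apply IsSeqClosed.isClosed
    intro u g hu hug
    choose f hf using hu
    have hcauchy : CauchySeq (fun n => ((f n : E))) := by
      rw [Metric.cauchySeq_iff]
      intro ε hε
      have hu' : CauchySeq u := hug.cauchySeq
      rw [Metric.cauchySeq_iff] at hu'
      obtain ⟨N, hN⟩ := hu' (|μ| * ε) (by positivity)
      refine ⟨N, fun m hm n hn => ?_⟩
      have h1 := hN m hm n hn
      have h2 : |μ| * ‖((f m - f n : S.domain) : E)‖ ≤ ‖u m - u n‖ := by
        have := norm_f_le hsym μ (f m - f n)
        rw [LinearPMap.map_sub] at this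
        calc |μ| * ‖((f m - f n : S.domain) : E)‖ ≤ ‖S (f m) - S (f n) + c • ((f m - f n : S.domain) : E)‖ := this
        _ = ‖u m - u n‖ := by
          rw [← hf m, ← hf n, hLapp, hLapp]
          congr 1
          push_cast
          rw [smul_sub]
          abel
      rw [dist_eq_norm] at h1 ⊢
      have : ‖((f m : E)) - (f n : E)‖ = ‖((f m - f n : S.domain) : E)‖ := by push_cast; ring_nf
      rw [this]
      have habs : 0 < |μ| := abs_pos.mpr hμ
      calc ‖((f m - f n : S.domain) : E)‖ ≤ ‖u m - u n‖ / |μ| := by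
            rw [le_div_iff₀ habs]; linarith [h2]
      _ < ε := by rw [div_lt_iff₀ habs]; linarith [h1]
    obtain ⟨flim, hflim⟩ := cauchySeq_tendsto_of_complete hcauchy
    have hSf : Tendsto (fun n => S (f n)) atTop (𝓝 (g - c • flim)) := by
      have : ∀ n, S (f n) = u n - c • ((f n : E)) := by
        intro n; rw [← hf n, hLapp]; abel
      simp_rw [this]
      exact hug.sub (hflim.const_smul c)
    have hkey : ∀ x : S.domain, ⟪g - c • flim, (x : E)⟫ = ⟪flim, S x⟫ := by
      intro x
      have t1 : Tendsto (fun n => ⟪S (f n), (x : E)⟫) atTop (𝓝 ⟪g - c • flim, (x : E)⟫) :=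
        hSf.inner tendsto_const_nhds
      have t2 : Tendsto (fun n => ⟪((f n : E)), S x⟫) atTop (𝓝 ⟪flim, S x⟫) :=
        hflim.inner tendsto_const_nhds
      have heqn : ∀ n, ⟪S (f n), (x : E)⟫ = ⟪((f n : E)), S x⟫ := fun n => hsym (f n) x
      rw [funext heqn] at t1
      exact tendsto_nhds_unique t1 t2
    have hmem' : flim ∈ S.adjoint.domain :=
      LinearPMap.mem_adjoint_domain_of_exists _ ⟨g - c • flim, hkey⟩
    have hmem : flim ∈ S.domain := hdom ▸ hmem'
    have hval : S ⟨flim, hmem⟩ = g - c • flim := by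
      have h1 : S.adjoint ⟨flim, hmem'⟩ = g - c • flim :=
        LinearPMap.adjoint_apply_eq hd _ (fun x => hkey x)
      have h2 := apply_eq_of_eq heq (x := flim) hmem'
      rw [h1] at h2
      exact h2.symm
    refine ⟨⟨flim, hmem⟩, ?_⟩
    rw [hLapp, hval]
    abel
  -- orthogonal complement trivial
  have horth : (LinearMap.range L)ᗮ = ⊥ := by
    rw [Submodule.eq_bot_iff]
    intro v hv
    rw [Submodule.mem_orthogonal] at hv
    have hv' : ∀ x : S.domain, ⟪v, S x⟫ = ⟪c • v, (x : E)⟫ := by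
      intro x
      have h0 : ⟪L x, v⟫ = 0 := hv _ (LinearMap.mem_range_self L x)
      rw [hLapp, inner_add_left, inner_smul_left] at h0
      have h1 : ⟪S x, v⟫ = -((starRingEnd ℂ) c * ⟪(x : E), v⟫) := by linear_combination h0
      have : ⟪v, S x⟫ = (starRingEnd ℂ) ⟪S x, v⟫ := (inner_conj_symm _ _).symm
      have hcc : (starRingEnd ℂ) c = -c := by simp [hc, Complex.ext_iff]
      calc ⟪v, S x⟫ = (starRingEnd ℂ) ⟪S x, v⟫ := (inner_conj_symm _ _).symm
      _ = (starRingEnd ℂ) (-((starRingEnd ℂ) c * ⟪(x : E), v⟫)) := by rw [h1]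
      _ = -(c * (starRingEnd ℂ) ⟪(x : E), v⟫) := by
            rw [_root_.map_neg, map_mul, starRingEnd_self_apply]
      _ = -(c * ⟪v, (x : E)⟫) := by rw [inner_conj_symm]
      _ = ⟪c • v, (x : E)⟫ := by rw [inner_smul_left, hcc]; ring
    have hvmem' : v ∈ S.adjoint.domain :=
      LinearPMap.mem_adjoint_domain_of_exists _ ⟨c • v, fun x => (hv' x).symm⟩
    have hvmem : v ∈ S.domain := hdom ▸ hvmem'
    have hSv : S ⟨v, hvmem⟩ = c • v := by
      have h1 : S.adjoint ⟨v, hvmem'⟩ = c • v :=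
        LinearPMap.adjoint_apply_eq hd _ (fun x => (hv' x).symm)
      have h2 := apply_eq_of_eq heq (x := v) hvmem'
      rw [h1] at h2
      exact h2.symm
    have hcne : c ≠ 0 := by
      simp [hc, hμ, Complex.ext_iff]
    have hsymv := hsym ⟨v, hvmem⟩ ⟨v, hvmem⟩
    rw [hSv, inner_smul_left, inner_smul_right] at hsymv
    have hcc : (starRingEnd ℂ) c = -c := by simp [hc, Complex.ext_iff]
    rw [hcc] at hsymv
    have ht : ⟪v, v⟫ = 0 := by
      have := hsymv
      have h2 : c * (2 * ⟪v, v⟫) = 0 := by ring_nf; linear_combination -this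
      rcases mul_eq_zero.mp h2 with h | h
      · exact absurd h hcne
      · have : (2 : ℂ) ≠ 0 := two_ne_zero
        exact (mul_eq_zero.mp h).resolve_left this
    exact inner_self_eq_zero.mp ht
  -- conclude
  haveI : CompleteSpace (LinearMap.range L) := hclosed.completeSpace_coe
  have htop : LinearMap.range L = ⊤ := Submodule.orthogonal_eq_bot_iff.mp horth
  have hg : g ∈ LinearMap.range L := htop ▸ Submodule.mem_top
  obtain ⟨f, hf⟩ := hg
  exact ⟨f, by rw [← hLapp, hf]⟩
lemma KR.selfAdjoint_of_symm_surj (T : E →ₗ.[ℂ] E) (hd : Dense (T.domain : Set E))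
    (hsym : PSymm T) {μ : ℝ} (hμ : μ ≠ 0)
    (hsurj : ∀ s : ℝ, (s = μ ∨ s = -μ) →
      ∀ g : E, ∃ f : T.domain, T f + ((s : ℂ) * Complex.I) • (f : E) = g) :
    IsSelfAdjoint T := by
  have hfa : T.IsFormalAdjoint T := hsym
  have le1 : T ≤ T.adjoint := hfa.le_adjoint hd
  set c : ℂ := (μ : ℂ) * Complex.I with hc
  have key : ∀ y : T.adjoint.domain, ∃ x : T.domain, ((y : E) = (x : E)) ∧
      T.adjoint y = T x := by
    intro y
    obtain ⟨x, hx⟩ := hsurj (-μ) (Or.inr rfl) (T.adjoint y + (((-μ : ℝ) : ℂ) * Complex.I) • (y : E))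
    have hcx : ((-μ : ℝ) : ℂ) * Complex.I = -c := by push_cast [hc]; ring
    rw [hcx] at hx
    -- hx : T x + (-c) • x = T† y + (-c) • y
    have hdiff : T.adjoint y - T x = c • ((y : E) - (x : E)) := by
      have hy' : T.adjoint y = T x + (-c) • ((x : E)) - (-c) • ((y : E)) := by
        rw [hx]; abel
      rw [hy']; module
    have horth : ∀ w : T.domain, ⟪(y : E) - (x : E), T w + c • (w : E)⟫ = 0 := by
      intro w
      rw [inner_add_right, inner_smul_right, inner_sub_left, inner_sub_left]
      have h1 : ⟪(y : E), T w⟫ = ⟪T.adjoint y, (w : E)⟫ :=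
        (LinearPMap.adjoint_isFormalAdjoint hd y w).symm
      have h2 : ⟪(x : E), T w⟫ = ⟪T x, (w : E)⟫ := (hsym x w).symm
      rw [h1, h2, ← inner_sub_left, hdiff, inner_smul_left]
      have hcc : (starRingEnd ℂ) c = -c := by simp [hc, Complex.ext_iff]
      rw [hcc, inner_sub_left]
      ring
    obtain ⟨w, hw⟩ := hsurj μ (Or.inl rfl) ((y : E) - (x : E))
    have h0 : ⟪(y : E) - (x : E), (y : E) - (x : E)⟫ = 0 := by
      nth_rewrite 2 [← hw]
      exact horth w
    have hu0 : (y : E) - (x : E) = 0 := inner_self_eq_zero.mp h0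
    have hyx : (y : E) = (x : E) := by rwa [sub_eq_zero] at hu0
    refine ⟨x, hyx, ?_⟩
    have : T.adjoint y - T x = 0 := by rw [hdiff, hu0, smul_zero]
    rw [sub_eq_zero] at this
    exact this
  have le2 : T.adjoint ≤ T := by
    constructor
    · intro v hv
      obtain ⟨x, hyx, _⟩ := key ⟨v, hv⟩
      rw [show v = (x : E) from hyx]
      exact x.2
    · intro a b hab
      obtain ⟨x, hyx, hval⟩ := key a
      have hbx : b = x := Subtype.ext (by rw [← hab]; exact hyx)
      rw [hval, hbx]
  exact LinearPMap.isSelfAdjoint_def.mpr (le_antisymm le2 le1)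

end KatoRellich

section Main

set_option maxHeartbeats 1600000

open Complex LinearPMap KR

variable {Hp Hm : Type*}
  [NormedAddCommGroup Hp] [InnerProductSpace ℂ Hp] [CompleteSpace Hp]
  [NormedAddCommGroup Hm] [InnerProductSpace ℂ Hm] [CompleteSpace Hm]

/-- **Theorem 4.1 (J-self-adjointness).**  If `S₊`, `S₋` are self-adjoint, `M` is densely
defined with `dom S₋ ⊆ dom M`, `dom S₊ ⊆ dom M*`, and the relative bounds of `M` (w.r.t. `S₋`)
and of `M*` (w.r.t. `S₊`) are `< 1`, then the operator `J ∘ S`,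
`(f₊, f₋) ↦ (S₊ f₊ + M f₋, M* f₊ - S₋ f₋)`, with domain `dom S₊ × dom S₋`, is self-adjoint
in the Hilbert space `H = H₊ ⊕ H₋ = WithLp 2 (H₊ × H₋)`. -/
theorem stmt0
    (Sp : Hp →ₗ.[ℂ] Hp) (Sm : Hm →ₗ.[ℂ] Hm)
    (hSp : IsSelfAdjoint Sp) (hSm : IsSelfAdjoint Sm)
    (M : Hm →ₗ.[ℂ] Hp) (hMdense : Dense (M.domain : Set Hm))
    (hdm : Sm.domain ≤ M.domain) (hdp : Sp.domain ≤ M.adjoint.domain)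
    (am ap bm bp : ℝ) (ham : 0 ≤ am) (hap : 0 ≤ ap)
    (hbm0 : 0 ≤ bm) (hbm1 : bm < 1) (hbp0 : 0 ≤ bp) (hbp1 : bp < 1)
    (hMbound : ∀ f : Sm.domain,
      ‖M ⟨(f : Hm), hdm f.2⟩‖ ^ 2 ≤ am * ‖(f : Hm)‖ ^ 2 + bm * ‖Sm f‖ ^ 2)
    (hMadjBound : ∀ f : Sp.domain,
      ‖M.adjoint ⟨(f : Hp), hdp f.2⟩‖ ^ 2 ≤ ap * ‖(f : Hp)‖ ^ 2 + bp * ‖Sp f‖ ^ 2)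
    (T : WithLp 2 (Hp × Hm) →ₗ.[ℂ] WithLp 2 (Hp × Hm))
    (hTdom : ∀ p : WithLp 2 (Hp × Hm),
      p ∈ T.domain ↔ p.ofLp.1 ∈ Sp.domain ∧ p.ofLp.2 ∈ Sm.domain)
    (hTval : ∀ (p : T.domain) (h1 : (p : WithLp 2 (Hp × Hm)).ofLp.1 ∈ Sp.domain)
        (h2 : (p : WithLp 2 (Hp × Hm)).ofLp.2 ∈ Sm.domain),
      T p = (WithLp.equiv 2 (Hp × Hm)).symm
        (Sp ⟨(p : WithLp 2 (Hp × Hm)).ofLp.1, h1⟩ + M ⟨(p : WithLp 2 (Hp × Hm)).ofLp.2, hdm h2⟩,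
         M.adjoint ⟨(p : WithLp 2 (Hp × Hm)).ofLp.1, hdp h1⟩ - Sm ⟨(p : WithLp 2 (Hp × Hm)).ofLp.2, h2⟩)) :
    IsSelfAdjoint T := by
  classical
  have hsymp : PSymm Sp := isSymm_of_selfAdjoint hSp
  have hsymm : PSymm Sm := isSymm_of_selfAdjoint hSm
  have hMfa := LinearPMap.adjoint_isFormalAdjoint (T := M) hMdense
  -- constants
  set b : ℝ := max bm bp with hbdef
  have hb0 : 0 ≤ b := le_trans hbm0 (le_max_left _ _)
  have hb1 : b < 1 := max_lt hbm1 hbp1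
  set a : ℝ := am + ap with hadef
  have ha0 : 0 ≤ a := add_nonneg ham hap
  set μ : ℝ := Real.sqrt ((a + 1) / (1 - b)) with hμdef
  have hfrac : 0 < (a + 1) / (1 - b) := div_pos (by linarith) (by linarith)
  have hμpos : 0 < μ := Real.sqrt_pos.mpr hfrac
  have hμsq : μ ^ 2 = (a + 1) / (1 - b) := Real.sq_sqrt hfrac.le
  set K : ℝ := a / μ ^ 2 + b with hKdef
  have hK0 : 0 ≤ K := add_nonneg (div_nonneg ha0 (sq_nonneg μ)) hb0
  have hKlt : K < 1 := by
    have h1 : a / μ ^ 2 < 1 - b := by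
      rw [hμsq, div_div_eq_mul_div, div_lt_iff₀ (by linarith : (0:ℝ) < a + 1)]
      nlinarith
    simp only [hKdef]; linarith
  -- density of the domain
  have hdense : Dense (T.domain : Set (WithLp 2 (Hp × Hm))) := by
    have h1 : Dense ((Sp.domain : Set Hp) ×ˢ (Sm.domain : Set Hm)) :=
      (hSp.dense_domain).prod (hSm.dense_domain)
    have heq : (T.domain : Set (WithLp 2 (Hp × Hm))) =
        (WithLp.prodContinuousLinearEquiv 2 ℂ Hp Hm) ⁻¹'
          ((Sp.domain : Set Hp) ×ˢ (Sm.domain : Set Hm)) := by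
      ext p
      simp only [Set.mem_preimage, Set.mem_prod, SetLike.mem_coe]
      exact hTdom p
    rw [heq]
    exact h1.preimage (WithLp.prodContinuousLinearEquiv 2 ℂ Hp Hm).toHomeomorph.isOpenMap
  -- symmetry of T
  have hTsym : PSymm T := by
    intro x y
    obtain ⟨hx1, hx2⟩ := (hTdom x).mp x.2
    obtain ⟨hy1, hy2⟩ := (hTdom y).mp y.2
    rw [hTval x hx1 hx2, hTval y hy1 hy2]
    rw [WithLp.prod_inner_apply, WithLp.prod_inner_apply]
    simp only [WithLp.equiv_symm_apply, WithLp.ofLp_toLp]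
    rw [inner_add_left, inner_sub_left, inner_add_right, inner_sub_right]
    have hp1 := hsymp ⟨(x : WithLp 2 (Hp × Hm)).ofLp.1, hx1⟩ ⟨(y : WithLp 2 (Hp × Hm)).ofLp.1, hy1⟩
    have hm1 := hsymm ⟨(x : WithLp 2 (Hp × Hm)).ofLp.2, hx2⟩ ⟨(y : WithLp 2 (Hp × Hm)).ofLp.2, hy2⟩
    have hM1 := hMfa ⟨(x : WithLp 2 (Hp × Hm)).ofLp.1, hdp hx1⟩ ⟨(y : WithLp 2 (Hp × Hm)).ofLp.2, hdm hy2⟩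
    have hM2 : inner ℂ (M ⟨(x : WithLp 2 (Hp × Hm)).ofLp.2, hdm hx2⟩) (y : WithLp 2 (Hp × Hm)).ofLp.1
        = (inner ℂ ((x : WithLp 2 (Hp × Hm)).ofLp.2) (M.adjoint ⟨(y : WithLp 2 (Hp × Hm)).ofLp.1, hdp hy1⟩) : ℂ) := by
      have h := hMfa ⟨(y : WithLp 2 (Hp × Hm)).ofLp.1, hdp hy1⟩ ⟨(x : WithLp 2 (Hp × Hm)).ofLp.2, hdm hx2⟩
      calc (inner ℂ (M ⟨(x : WithLp 2 (Hp × Hm)).ofLp.2, hdm hx2⟩) (y : WithLp 2 (Hp × Hm)).ofLp.1 : ℂ)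
          = (starRingEnd ℂ) (inner ℂ ((y : WithLp 2 (Hp × Hm)).ofLp.1) (M ⟨(x : WithLp 2 (Hp × Hm)).ofLp.2, hdm hx2⟩)) := (inner_conj_symm _ _).symm
        _ = (starRingEnd ℂ) (inner ℂ (M.adjoint ⟨(y : WithLp 2 (Hp × Hm)).ofLp.1, hdp hy1⟩) ((x : WithLp 2 (Hp × Hm)).ofLp.2)) := by rw [h]
        _ = inner ℂ ((x : WithLp 2 (Hp × Hm)).ofLp.2) (M.adjoint ⟨(y : WithLp 2 (Hp × Hm)).ofLp.1, hdp hy1⟩) := inner_conj_symm _ _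
    rw [hp1, hm1, hM1, hM2]
    ring
  -- surjectivity
  have hsurj : ∀ s : ℝ, (s = μ ∨ s = -μ) → ∀ g : WithLp 2 (Hp × Hm),
      ∃ f : T.domain, T f + ((s : ℂ) * Complex.I) • (f : WithLp 2 (Hp × Hm)) = g := by
    intro s hs g
    have hs0 : s ≠ 0 := by rcases hs with h | h <;> rw [h] <;> simp [hμpos.ne']
    have habs : |s| = μ := by rcases hs with h | h <;> rw [h] <;> simp [abs_of_pos hμpos]
    -- resolvents
    choose ρp hρp using fun v : Hp => pmap_surj hSp hs0 v
    choose ρm hρm0 using fun v : Hm => pmap_surj hSm (neg_ne_zero.mpr hs0) (-v)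
    have hcastneg : (((-s : ℝ)) : ℂ) * Complex.I = -((s : ℂ) * Complex.I) := by push_cast; ring
    have hρm : ∀ v : Hm, Sm (ρm v) + (-((s : ℂ) * Complex.I)) • ((ρm v : Hm)) = -v := by
      intro v
      have h := hρm0 v
      rwa [hcastneg] at h
    -- bounds
    have hρpb : ∀ v : Hp, μ * ‖(ρp v : Hp)‖ ≤ ‖v‖ := by
      intro v
      have h := norm_f_le hsymp s (ρp v)
      rw [hρp v, habs] at h
      exact h
    have hρpS : ∀ v : Hp, ‖Sp (ρp v)‖ ≤ ‖v‖ := by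
      intro v
      have h := norm_Sf_le hsymp s (ρp v)
      rwa [hρp v] at h
    have hρmb : ∀ v : Hm, μ * ‖(ρm v : Hm)‖ ≤ ‖v‖ := by
      intro v
      have h := norm_f_le hsymm (-s) (ρm v)
      rw [hcastneg, hρm v, abs_neg, habs, norm_neg] at h
      exact h
    have hρmS : ∀ v : Hm, ‖Sm (ρm v)‖ ≤ ‖v‖ := by
      intro v
      have h := norm_Sf_le hsymm (-s) (ρm v)
      rw [hcastneg, hρm v, norm_neg] at h
      exact h
    -- additivity of resolvents on differences
    have hρpsub : ∀ v w : Hp, ρp v - ρp w = ρp (v - w) := by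
      intro v w
      apply pmap_inj hsymp hs0
      rw [LinearPMap.map_sub, hρp (v - w)]
      push_cast
      rw [smul_sub]
      conv_rhs => rw [← hρp v, ← hρp w]
      abel
    have hρmsub : ∀ v w : Hm, ρm v - ρm w = ρm (v - w) := by
      intro v w
      apply pmap_inj hsymm (neg_ne_zero.mpr hs0)
      rw [hcastneg, LinearPMap.map_sub, hρm (v - w)]
      push_cast
      rw [smul_sub]
      rw [show (-(v - w) : Hm) = -v - -w by abel]
      conv_rhs => rw [← hρm v, ← hρm w]
      abel
    -- the contraction
    set Φ : WithLp 2 (Hp × Hm) → WithLp 2 (Hp × Hm) := fun h =>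
      (WithLp.equiv 2 (Hp × Hm)).symm
        (g.ofLp.1 - M ⟨(ρm h.ofLp.2 : Hm), hdm (ρm h.ofLp.2).2⟩,
         g.ofLp.2 - M.adjoint ⟨(ρp h.ofLp.1 : Hp), hdp (ρp h.ofLp.1).2⟩) with hΦ
    -- componentwise bounds
    have hMb : ∀ v : Hm, ‖M ⟨(ρm v : Hm), hdm (ρm v).2⟩‖ ^ 2 ≤ K * ‖v‖ ^ 2 := by
      intro v
      have h1 := hMbound (ρm v)
      have h2 : μ ^ 2 * ‖(ρm v : Hm)‖ ^ 2 ≤ ‖v‖ ^ 2 := by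
        calc μ ^ 2 * ‖(ρm v : Hm)‖ ^ 2 = (μ * ‖(ρm v : Hm)‖) ^ 2 := by ring
          _ ≤ ‖v‖ ^ 2 := pow_le_pow_left₀ (by positivity) (hρmb v) 2
      have h3 : ‖Sm (ρm v)‖ ^ 2 ≤ ‖v‖ ^ 2 :=
        pow_le_pow_left₀ (norm_nonneg _) (hρmS v) 2
      have hba : bm ≤ b := le_max_left _ _
      have haa : am ≤ a := by rw [hadef]; linarith
      have hμ2 : 0 < μ ^ 2 := by positivity
      have h4 : am * ‖(ρm v : Hm)‖ ^ 2 ≤ a / μ ^ 2 * ‖v‖ ^ 2 := by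
        rw [div_mul_eq_mul_div, le_div_iff₀ hμ2]
        nlinarith [sq_nonneg ‖(ρm v : Hm)‖, h2]
      have h5 : bm * ‖Sm (ρm v)‖ ^ 2 ≤ b * ‖v‖ ^ 2 := by
        nlinarith [sq_nonneg ‖Sm (ρm v)‖, sq_nonneg ‖v‖, h3]
      calc ‖M ⟨(ρm v : Hm), hdm (ρm v).2⟩‖ ^ 2 ≤ am * ‖(ρm v : Hm)‖ ^ 2 + bm * ‖Sm (ρm v)‖ ^ 2 := h1
        _ ≤ a / μ ^ 2 * ‖v‖ ^ 2 + b * ‖v‖ ^ 2 := add_le_add h4 h5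
        _ = K * ‖v‖ ^ 2 := by rw [hKdef]; ring
    have hMab : ∀ v : Hp, ‖M.adjoint ⟨(ρp v : Hp), hdp (ρp v).2⟩‖ ^ 2 ≤ K * ‖v‖ ^ 2 := by
      intro v
      have h1 := hMadjBound (ρp v)
      have h2 : μ ^ 2 * ‖(ρp v : Hp)‖ ^ 2 ≤ ‖v‖ ^ 2 := by
        calc μ ^ 2 * ‖(ρp v : Hp)‖ ^ 2 = (μ * ‖(ρp v : Hp)‖) ^ 2 := by ring
          _ ≤ ‖v‖ ^ 2 := pow_le_pow_left₀ (by positivity) (hρpb v) 2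
      have h3 : ‖Sp (ρp v)‖ ^ 2 ≤ ‖v‖ ^ 2 :=
        pow_le_pow_left₀ (norm_nonneg _) (hρpS v) 2
      have hba : bp ≤ b := le_max_right _ _
      have haa : ap ≤ a := by rw [hadef]; linarith
      have hμ2 : 0 < μ ^ 2 := by positivity
      have h4 : ap * ‖(ρp v : Hp)‖ ^ 2 ≤ a / μ ^ 2 * ‖v‖ ^ 2 := by
        rw [div_mul_eq_mul_div, le_div_iff₀ hμ2]
        nlinarith [sq_nonneg ‖(ρp v : Hp)‖, h2]
      have h5 : bp * ‖Sp (ρp v)‖ ^ 2 ≤ b * ‖v‖ ^ 2 := by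
        nlinarith [sq_nonneg ‖Sp (ρp v)‖, sq_nonneg ‖v‖, h3]
      calc ‖M.adjoint ⟨(ρp v : Hp), hdp (ρp v).2⟩‖ ^ 2 ≤ ap * ‖(ρp v : Hp)‖ ^ 2 + bp * ‖Sp (ρp v)‖ ^ 2 := h1
        _ ≤ a / μ ^ 2 * ‖v‖ ^ 2 + b * ‖v‖ ^ 2 := add_le_add h4 h5
        _ = K * ‖v‖ ^ 2 := by rw [hKdef]; ring
    -- Lipschitz estimate
    have hlip : ∀ x y : WithLp 2 (Hp × Hm), dist (Φ x) (Φ y) ≤ Real.sqrt K * dist x y := by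
      intro x y
      rw [dist_eq_norm, dist_eq_norm]
      have hc1 : (Φ x - Φ y).ofLp.1 = -(M ⟨(ρm (x.ofLp.2 - y.ofLp.2) : Hm), hdm (ρm (x.ofLp.2 - y.ofLp.2)).2⟩) := by
        show (g.ofLp.1 - M ⟨(ρm x.ofLp.2 : Hm), hdm (ρm x.ofLp.2).2⟩) - (g.ofLp.1 - M ⟨(ρm y.ofLp.2 : Hm), hdm (ρm y.ofLp.2).2⟩) = _
        have hsub : M ⟨(ρm x.ofLp.2 : Hm), hdm (ρm x.ofLp.2).2⟩ - M ⟨(ρm y.ofLp.2 : Hm), hdm (ρm y.ofLp.2).2⟩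
            = M ⟨(ρm (x.ofLp.2 - y.ofLp.2) : Hm), hdm (ρm (x.ofLp.2 - y.ofLp.2)).2⟩ := by
          rw [← LinearPMap.map_sub]
          congr 1
          apply Subtype.ext
          have := congrArg (Subtype.val) (hρmsub x.ofLp.2 y.ofLp.2)
          push_cast at this ⊢
          exact this
        rw [← hsub]
        abel
      have hc2 : (Φ x - Φ y).ofLp.2 = -(M.adjoint ⟨(ρp (x.ofLp.1 - y.ofLp.1) : Hp), hdp (ρp (x.ofLp.1 - y.ofLp.1)).2⟩) := by
        show (g.ofLp.2 - M.adjoint ⟨(ρp x.ofLp.1 : Hp), hdp (ρp x.ofLp.1).2⟩)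
            - (g.ofLp.2 - M.adjoint ⟨(ρp y.ofLp.1 : Hp), hdp (ρp y.ofLp.1).2⟩) = _
        have hsub : M.adjoint ⟨(ρp x.ofLp.1 : Hp), hdp (ρp x.ofLp.1).2⟩ - M.adjoint ⟨(ρp y.ofLp.1 : Hp), hdp (ρp y.ofLp.1).2⟩
            = M.adjoint ⟨(ρp (x.ofLp.1 - y.ofLp.1) : Hp), hdp (ρp (x.ofLp.1 - y.ofLp.1)).2⟩ := by
          rw [← LinearPMap.map_sub]
          congr 1
          apply Subtype.ext
          have := congrArg (Subtype.val) (hρpsub x.ofLp.1 y.ofLp.1)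
          push_cast at this ⊢
          exact this
        rw [← hsub]
        abel
      refine sq_le_imp (by positivity) ?_
      rw [WithLp.prod_norm_sq_eq_of_L2, ← WithLp.ofLp_fst, ← WithLp.ofLp_snd, hc1, hc2, norm_neg, norm_neg, mul_pow,
        Real.sq_sqrt hK0, WithLp.prod_norm_sq_eq_of_L2, ← WithLp.ofLp_fst, ← WithLp.ofLp_snd]
      have b1 := hMb (x.ofLp.2 - y.ofLp.2)
      have b2 := hMab (x.ofLp.1 - y.ofLp.1)
      have e1 : (x - y).ofLp.1 = x.ofLp.1 - y.ofLp.1 := rfl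
      have e2 : (x - y).ofLp.2 = x.ofLp.2 - y.ofLp.2 := rfl
      rw [e1, e2]
      nlinarith [b1, b2]
    -- contraction, fixed point
    set k : NNReal := Real.toNNReal (Real.sqrt K) with hkdef
    have hklt : k < 1 := by
      rw [← NNReal.coe_lt_coe, hkdef, Real.coe_toNNReal _ (Real.sqrt_nonneg _), NNReal.coe_one]
      nlinarith [Real.sq_sqrt hK0, Real.sqrt_nonneg K]
    have hlip' : LipschitzWith k Φ := by
      apply LipschitzWith.of_dist_le_mul
      intro x y
      rw [hkdef, Real.coe_toNNReal _ (Real.sqrt_nonneg _)]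
      exact hlip x y
    have hcontr : ContractingWith k Φ := ⟨hklt, hlip'⟩
    have hfix := hcontr.fixedPoint_isFixedPt
    set h0 : WithLp 2 (Hp × Hm) := ContractingWith.fixedPoint Φ hcontr with hh0
    have hfix1 : g.ofLp.1 - M ⟨(ρm h0.ofLp.2 : Hm), hdm (ρm h0.ofLp.2).2⟩ = h0.ofLp.1 := congrArg (fun z => z.ofLp.1) hfix
    have hfix2 : g.ofLp.2 - M.adjoint ⟨(ρp h0.ofLp.1 : Hp), hdp (ρp h0.ofLp.1).2⟩ = h0.ofLp.2 := congrArg (fun z => z.ofLp.2) hfix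
    -- the solution
    set f : WithLp 2 (Hp × Hm) :=
      (WithLp.equiv 2 (Hp × Hm)).symm ((ρp h0.ofLp.1 : Hp), (ρm h0.ofLp.2 : Hm)) with hf
    have h1 : (f : WithLp 2 (Hp × Hm)).ofLp.1 ∈ Sp.domain := (ρp h0.ofLp.1).2
    have h2 : (f : WithLp 2 (Hp × Hm)).ofLp.2 ∈ Sm.domain := (ρm h0.ofLp.2).2
    have hmem : f ∈ T.domain := (hTdom f).mpr ⟨h1, h2⟩
    refine ⟨⟨f, hmem⟩, ?_⟩
    rw [hTval ⟨f, hmem⟩ h1 h2]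
    refine WithLp.ofLp_injective 2 (Prod.ext ?_ ?_)
    · show Sp ⟨f.ofLp.1, h1⟩ + M ⟨f.ofLp.2, hdm h2⟩ + ((s : ℂ) * Complex.I) • f.ofLp.1 = g.ofLp.1
      have hcoe : (⟨f.ofLp.1, h1⟩ : Sp.domain) = ρp h0.ofLp.1 := rfl
      have hcoe2 : (⟨f.ofLp.2, hdm h2⟩ : M.domain) = ⟨(ρm h0.ofLp.2 : Hm), hdm (ρm h0.ofLp.2).2⟩ := rfl
      rw [hcoe, hcoe2]
      have hr := hρp h0.ofLp.1
      have hf1 : f.ofLp.1 = (ρp h0.ofLp.1 : Hp) := rfl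
      rw [hf1]
      calc Sp (ρp h0.ofLp.1) + M ⟨(ρm h0.ofLp.2 : Hm), hdm (ρm h0.ofLp.2).2⟩ + ((s : ℂ) * Complex.I) • (ρp h0.ofLp.1 : Hp)
          = (Sp (ρp h0.ofLp.1) + ((s : ℂ) * Complex.I) • (ρp h0.ofLp.1 : Hp))
            + M ⟨(ρm h0.ofLp.2 : Hm), hdm (ρm h0.ofLp.2).2⟩ := by abel
        _ = h0.ofLp.1 + M ⟨(ρm h0.ofLp.2 : Hm), hdm (ρm h0.ofLp.2).2⟩ := by rw [hr]
        _ = (g.ofLp.1 - M ⟨(ρm h0.ofLp.2 : Hm), hdm (ρm h0.ofLp.2).2⟩) + M ⟨(ρm h0.ofLp.2 : Hm), hdm (ρm h0.ofLp.2).2⟩ := by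
            rw [hfix1]
        _ = g.ofLp.1 := by abel
    · show M.adjoint ⟨f.ofLp.1, hdp h1⟩ - Sm ⟨f.ofLp.2, h2⟩ + ((s : ℂ) * Complex.I) • f.ofLp.2 = g.ofLp.2
      have hcoe : (⟨f.ofLp.2, h2⟩ : Sm.domain) = ρm h0.ofLp.2 := rfl
      have hcoe2 : (⟨f.ofLp.1, hdp h1⟩ : M.adjoint.domain) = ⟨(ρp h0.ofLp.1 : Hp), hdp (ρp h0.ofLp.1).2⟩ := rfl
      rw [hcoe, hcoe2]
      have hr := hρm h0.ofLp.2
      have hf2 : f.ofLp.2 = (ρm h0.ofLp.2 : Hm) := rfl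
      rw [hf2]
      have hr' : -(Sm (ρm h0.ofLp.2)) + ((s : ℂ) * Complex.I) • (ρm h0.ofLp.2 : Hm) = h0.ofLp.2 := by
        rw [neg_smul] at hr
        calc -(Sm (ρm h0.ofLp.2)) + ((s : ℂ) * Complex.I) • (ρm h0.ofLp.2 : Hm)
            = -(Sm (ρm h0.ofLp.2) + -(((s : ℂ) * Complex.I) • (ρm h0.ofLp.2 : Hm))) := by abel
          _ = -(-h0.ofLp.2) := by rw [hr]
          _ = h0.ofLp.2 := neg_neg _
      calc M.adjoint ⟨(ρp h0.ofLp.1 : Hp), hdp (ρp h0.ofLp.1).2⟩ - Sm (ρm h0.ofLp.2)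
            + ((s : ℂ) * Complex.I) • (ρm h0.ofLp.2 : Hm)
          = M.adjoint ⟨(ρp h0.ofLp.1 : Hp), hdp (ρp h0.ofLp.1).2⟩
            + (-(Sm (ρm h0.ofLp.2)) + ((s : ℂ) * Complex.I) • (ρm h0.ofLp.2 : Hm)) := by abel
        _ = M.adjoint ⟨(ρp h0.ofLp.1 : Hp), hdp (ρp h0.ofLp.1).2⟩ + h0.ofLp.2 := by rw [hr']
        _ = M.adjoint ⟨(ρp h0.ofLp.1 : Hp), hdp (ρp h0.ofLp.1).2⟩
            + (g.ofLp.2 - M.adjoint ⟨(ρp h0.ofLp.1 : Hp), hdp (ρp h0.ofLp.1).2⟩) := by rw [hfix2]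
        _ = g.ofLp.2 := by abel
  exact selfAdjoint_of_symm_surj T hdense hTsym hμpos.ne' hsurj

end Main
end
end

section
/- Let H₊, H₋ be complex Hilbert spaces and H = H₊ × H₋. Let S₊, S₋ be self-adjoint operators in H₊, H₋, let M be a densely defined operator from H₋ to H₊ with adjoint M*, with dom S₋ ⊆ dom M, dom S₊ ⊆ dom M*, and suppose there are constants a₋, a₊ ≥ 0 and 0 ≤ b₋, b₊ < 1 such that ‖M f₋‖² ≤ a₋‖f₋‖² + b₋‖S₋ f₋‖² for all f₋ ∈ dom S₋ and ‖M* f₊‖² ≤ a₊‖f₊‖² + b₊‖S₊ f₊‖² for all f₊ ∈ dom S₊. Define S on dom S = dom S₊ × dom S₋ by S(f₊, f₋) = (S₊ f₊ + M f₋, −M* f₊ + S₋ f₋). Let λ ∈ ℝ with λ ∈ ρ(S₋) and τ := ‖M (S₋ − λ)⁻¹‖ < 1. Then for every sequence (fₙ) = ((fₙ⁺, fₙ⁻)) in dom S with ‖fₙ‖ = 1 for all n and ‖(S − λ)fₙ‖ → 0 as n → ∞, one has liminf_{n→∞} (‖fₙ⁺‖² − ‖fₙ⁻‖²) ≥ (1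 − τ²)/(2(1 + τ²)) > 0. -/
noncomputable section

open Filter Topology
open scoped ComplexInnerProductSpace

variable {Hp Hm : Type*}
  [NormedAddCommGroup Hp] [InnerProductSpace ℂ Hp] [CompleteSpace Hp]
  [NormedAddCommGroup Hm] [InnerProductSpace ℂ Hm] [CompleteSpace Hm]

private lemma stmt3_aux (c q s e : ℝ) (hc0 : 0 ≤ c) (hc1 : c < 1) (hq0 : 0 ≤ q)
    (hql : q ≤ 1) (hs0 : 0 ≤ s) (he0 : 0 ≤ e) (he1 : e ≤ 1)
    (h1 : q ^ 2 + s ^ 2 = 1) (hs : s ≤ e + c * q) (hd1 : e ≤ (1 - c ^ 2) / 16) :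
    (1 - c ^ 2) / (2 * (1 + c ^ 2)) ≤ q ^ 2 - s ^ 2 := by
  have hc2 : (0:ℝ) < 1 + c ^ 2 := by positivity
  have hss := mul_self_le_mul_self hs0 hs
  have hsq : s ^ 2 ≤ c ^ 2 * q ^ 2 + (2 * c * e + e ^ 2) := by
    nlinarith [mul_nonneg hc0 he0, mul_nonneg (mul_nonneg hc0 he0) (sub_nonneg.2 hql)]
  have hdelta : 2 * c * e + e ^ 2 ≤ 3 * ((1 - c ^ 2) / 16) := by nlinarith
  have hqlb : 1 - (2 * c * e + e ^ 2) ≤ (1 + c ^ 2) * q ^ 2 := by nlinarith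
  rw [div_le_iff₀ (by positivity : (0:ℝ) < 2 * (1 + c ^ 2))]
  nlinarith

/-- **Theorem 4.1 (i).** If `lam` is real, `lam ∈ ρ(S₋)` and `τ = ‖M (S₋ - lam)⁻¹‖ < 1`
(`c` being any bound `τ ≤ c < 1`), then every approximate eigensequence
`fₙ = (fₙ⁺, fₙ⁻)` of `S` at `lam` with `‖fₙ‖ = 1` satisfies
`liminf (‖fₙ⁺‖² - ‖fₙ⁻‖²) ≥ (1 - c²)/(2(1 + c²)) > 0`. -/
theorem stmt3
    (Sp : Hp →ₗ.[ℂ] Hp) (Sm : Hm →ₗ.[ℂ] Hm)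
    (hSp : IsSelfAdjoint Sp) (hSm : IsSelfAdjoint Sm)
    (M : Hm →ₗ.[ℂ] Hp) (hMdense : Dense (M.domain : Set Hm))
    (hdm : Sm.domain ≤ M.domain) (hdp : Sp.domain ≤ M.adjoint.domain)
    (am ap bm bp : ℝ) (ham : 0 ≤ am) (hap : 0 ≤ ap)
    (hbm0 : 0 ≤ bm) (hbm1 : bm < 1) (hbp0 : 0 ≤ bp) (hbp1 : bp < 1)
    (hMbound : ∀ f : Sm.domain,
      ‖M ⟨(f : Hm), hdm f.2⟩‖ ^ 2 ≤ am * ‖(f : Hm)‖ ^ 2 + bm * ‖Sm f‖ ^ 2)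
    (hMadjBound : ∀ f : Sp.domain,
      ‖M.adjoint ⟨(f : Hp), hdp f.2⟩‖ ^ 2 ≤ ap * ‖(f : Hp)‖ ^ 2 + bp * ‖Sp f‖ ^ 2)
    (S : WithLp 2 (Hp × Hm) →ₗ.[ℂ] WithLp 2 (Hp × Hm))
    (hSdom : ∀ p : WithLp 2 (Hp × Hm),
      p ∈ S.domain ↔ p.ofLp.1 ∈ Sp.domain ∧ p.ofLp.2 ∈ Sm.domain)
    (hSval : ∀ (p : S.domain) (h1 : (p : WithLp 2 (Hp × Hm)).ofLp.1 ∈ Sp.domain)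
        (h2 : (p : WithLp 2 (Hp × Hm)).ofLp.2 ∈ Sm.domain),
      S p = (WithLp.equiv 2 (Hp × Hm)).symm
        (Sp ⟨(p : WithLp 2 (Hp × Hm)).ofLp.1, h1⟩ + M ⟨(p : WithLp 2 (Hp × Hm)).ofLp.2, hdm h2⟩,
         Sm ⟨(p : WithLp 2 (Hp × Hm)).ofLp.2, h2⟩
           - M.adjoint ⟨(p : WithLp 2 (Hp × Hm)).ofLp.1, hdp h1⟩))
    (lam : ℝ) (Rm : Hm →L[ℂ] Hm) (hRm : ResolventAt Sm (lam : ℂ) Rm)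
    (c : ℝ) (hc0 : 0 ≤ c) (hc1 : c < 1)
    (hbound : ∀ (f : Hm) (hf : Rm f ∈ Sm.domain), ‖M ⟨Rm f, hdm hf⟩‖ ≤ c * ‖f‖)
    (fn : ℕ → S.domain) (hnorm : ∀ n, ‖(fn n : WithLp 2 (Hp × Hm))‖ = 1)
    (hconv : Tendsto
      (fun n => ‖S (fn n) - (lam : ℂ) • ((fn n : WithLp 2 (Hp × Hm)))‖) atTop (𝓝 0)) :
    (1 - c ^ 2) / (2 * (1 + c ^ 2)) ≤
      liminf (fun n =>
        ‖((fn n : WithLp 2 (Hp × Hm))).ofLp.1‖ ^ 2 - ‖((fn n : WithLp 2 (Hp × Hm))).ofLp.2‖ ^ 2) atTop ∧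
    0 < (1 - c ^ 2) / (2 * (1 + c ^ 2)) := by
  have hc2 : (0:ℝ) < 1 + c ^ 2 := by positivity
  have hKpos : 0 < (1 - c ^ 2) / (2 * (1 + c ^ 2)) := by
    apply div_pos; · nlinarith
    · positivity
  refine ⟨?_, hKpos⟩
  -- `Sm` is symmetric
  have hsymmSm : Sm.IsFormalAdjoint Sm := by
    have h := LinearPMap.adjoint_isFormalAdjoint hSm.dense_domain
    rwa [LinearPMap.isSelfAdjoint_def.mp hSm] at h
  have hMadj : M.adjoint.IsFormalAdjoint M := LinearPMap.adjoint_isFormalAdjoint hMdense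
  -- `Rm` is symmetric
  have hRmsymm : ∀ u v : Hm, ⟪Rm u, v⟫ = ⟪u, Rm v⟫ := by
    intro u v
    obtain ⟨hu, hu'⟩ := hRm.1 u
    obtain ⟨hv, hv'⟩ := hRm.1 v
    calc ⟪Rm u, v⟫ = ⟪Rm u, Sm ⟨Rm v, hv⟩ - (lam : ℂ) • Rm v⟫ := by rw [hv']
    _ = ⟪Rm u, Sm ⟨Rm v, hv⟩⟫ - (lam : ℂ) * ⟪Rm u, Rm v⟫ := by
        rw [inner_sub_right, inner_smul_right]
    _ = ⟪Sm ⟨Rm u, hu⟩, Rm v⟫ - (lam : ℂ) * ⟪Rm u, Rm v⟫ := by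
        rw [hsymmSm ⟨Rm u, hu⟩ ⟨Rm v, hv⟩]
    _ = ⟪Sm ⟨Rm u, hu⟩ - (lam : ℂ) • Rm u, Rm v⟫ := by
        rw [inner_sub_left, inner_smul_left, Complex.conj_ofReal]
    _ = ⟪u, Rm v⟫ := by rw [hu']
  -- key bound : ‖Rm (M† u)‖ ≤ c‖u‖ on dom M†
  have hkey : ∀ (u : Hp) (hu : u ∈ M.adjoint.domain),
      ‖Rm (M.adjoint ⟨u, hu⟩)‖ ≤ c * ‖u‖ := by
    intro u hu
    set w := Rm (M.adjoint ⟨u, hu⟩) with hw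
    obtain ⟨hw2, -⟩ := hRm.1 w
    have hb := hbound w hw2
    have h1 : ⟪w, w⟫ = ⟪(M ⟨Rm w, hdm hw2⟩ : Hp), u⟫ := by
      calc ⟪w, w⟫ = ⟪w, Rm ((M.adjoint ⟨u, hu⟩ : Hm))⟫ := by rw [hw]
      _ = ⟪Rm w, (M.adjoint ⟨u, hu⟩ : Hm)⟫ := (hRmsymm w _).symm
      _ = ⟪(M ⟨Rm w, hdm hw2⟩ : Hp), u⟫ := (hMadj.symm ⟨Rm w, hdm hw2⟩ ⟨u, hu⟩).symm
    have h2 : ‖w‖ * ‖w‖ ≤ c * ‖w‖ * ‖u‖ := by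
      calc ‖w‖ * ‖w‖ = RCLike.re ⟪w, w⟫ := (inner_self_eq_norm_mul_norm w).symm
      _ = RCLike.re ⟪(M ⟨Rm w, hdm hw2⟩ : Hp), u⟫ := by rw [h1]
      _ ≤ ‖(⟪(M ⟨Rm w, hdm hw2⟩ : Hp), u⟫ : ℂ)‖ := RCLike.re_le_norm _
      _ ≤ ‖M ⟨Rm w, hdm hw2⟩‖ * ‖u‖ := norm_inner_le_norm _ _
      _ ≤ c * ‖w‖ * ‖u‖ := mul_le_mul_of_nonneg_right hb (norm_nonneg u)
    rcases (norm_nonneg w).eq_or_lt with h | h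
    · rw [← h]; positivity
    · nlinarith
  -- the error sequence
  set g : ℕ → WithLp 2 (Hp × Hm) :=
    fun n => S (fn n) - (lam : ℂ) • ((fn n : WithLp 2 (Hp × Hm))) with hg
  have hgn : Tendsto (fun n => ‖g n‖) atTop (𝓝 0) := hconv
  have hq1 : ∀ n, ‖((fn n : WithLp 2 (Hp × Hm))).ofLp.1‖ ^ 2
      + ‖((fn n : WithLp 2 (Hp × Hm))).ofLp.2‖ ^ 2 = 1 := by
    intro n
    have h := WithLp.prod_norm_sq_eq_of_L2 (fn n : WithLp 2 (Hp × Hm))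
    rw [hnorm n, one_pow] at h
    exact h.symm
  have hq1le : ∀ n, ‖((fn n : WithLp 2 (Hp × Hm))).ofLp.1‖ ≤ 1 := by
    intro n
    have h := hq1 n
    nlinarith [norm_nonneg ((fn n : WithLp 2 (Hp × Hm))).ofLp.1,
      sq_nonneg ‖((fn n : WithLp 2 (Hp × Hm))).ofLp.2‖]
  -- main estimate on the second component
  have key : ∀ n, ‖((fn n : WithLp 2 (Hp × Hm))).ofLp.2‖
      ≤ ‖Rm‖ * ‖g n‖ + c * ‖((fn n : WithLp 2 (Hp × Hm))).ofLp.1‖ := by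
    intro n
    obtain ⟨h1, h2⟩ := (hSdom _).mp (fn n).2
    set p : WithLp 2 (Hp × Hm) := (fn n : WithLp 2 (Hp × Hm)) with hp
    have hSv := hSval (fn n) h1 h2
    have hg2 : (g n).ofLp.2 = (Sm ⟨p.ofLp.2, h2⟩ - M.adjoint ⟨p.ofLp.1, hdp h1⟩) - (lam : ℂ) • p.ofLp.2 := by
      show (S (fn n) - (lam : ℂ) • p).ofLp.2 = _
      rw [hSv]
      rfl
    have hcomp : Sm ⟨p.ofLp.2, h2⟩ - (lam : ℂ) • p.ofLp.2 = (g n).ofLp.2 + M.adjoint ⟨p.ofLp.1, hdp h1⟩ := by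
      rw [hg2]; abel
    have hid : Rm (Sm ⟨p.ofLp.2, h2⟩ - (lam : ℂ) • p.ofLp.2) = p.ofLp.2 := hRm.2 ⟨p.ofLp.2, h2⟩
    have hrep : p.ofLp.2 = Rm ((g n).ofLp.2) + Rm (M.adjoint ⟨p.ofLp.1, hdp h1⟩) := by
      rw [← map_add, ← hcomp, hid]
    have hg2le : ‖(g n).ofLp.2‖ ≤ ‖g n‖ := by
      have : ‖g n‖ ^ 2 = ‖(g n).ofLp.1‖ ^ 2 + ‖(g n).ofLp.2‖ ^ 2 := WithLp.prod_norm_sq_eq_of_L2 (g n)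
      nlinarith [norm_nonneg (g n), norm_nonneg (g n).ofLp.2, sq_nonneg ‖(g n).ofLp.1‖]
    calc ‖p.ofLp.2‖ ≤ ‖Rm ((g n).ofLp.2)‖ + ‖Rm (M.adjoint ⟨p.ofLp.1, hdp h1⟩)‖ := by
          rw [hrep]; exact norm_add_le _ _
    _ ≤ ‖Rm‖ * ‖(g n).ofLp.2‖ + c * ‖p.ofLp.1‖ := add_le_add (Rm.le_opNorm _) (hkey _ _)
    _ ≤ ‖Rm‖ * ‖g n‖ + c * ‖p.ofLp.1‖ := by
          have : ‖Rm‖ * ‖(g n).ofLp.2‖ ≤ ‖Rm‖ * ‖g n‖ :=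
            mul_le_mul_of_nonneg_left hg2le (norm_nonneg _)
          linarith
  -- pass to the liminf
  have heps : Tendsto (fun n => ‖Rm‖ * ‖g n‖) atTop (𝓝 0) := by
    simpa using hgn.const_mul ‖Rm‖
  have hev : ∀ᶠ n in atTop, ‖Rm‖ * ‖g n‖ ≤ (1 - c ^ 2) / 16 ∧ ‖Rm‖ * ‖g n‖ ≤ 1 := by
    have h1 : ∀ᶠ n in atTop, ‖Rm‖ * ‖g n‖ < (1 - c ^ 2) / 16 := by
      have : (0:ℝ) < (1 - c ^ 2) / 16 := by nlinarith
      exact heps.eventually (eventually_lt_nhds this) |>.mono (fun n h => h)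
    have h2 : ∀ᶠ n in atTop, ‖Rm‖ * ‖g n‖ < 1 :=
      heps.eventually (eventually_lt_nhds one_pos) |>.mono (fun n h => h)
    filter_upwards [h1, h2] with n ha hb
    exact ⟨ha.le, hb.le⟩
  apply le_liminf_of_le
  · refine IsBoundedUnder.isCoboundedUnder_ge ⟨1, eventually_map.2 ?_⟩
    filter_upwards with n
    have := hq1 n
    nlinarith [sq_nonneg ‖((fn n : WithLp 2 (Hp × Hm))).ofLp.2‖]
  · filter_upwards [hev] with n hn
    exact stmt3_aux c ‖((fn n : WithLp 2 (Hp × Hm))).ofLp.1‖ ‖((fn n : WithLp 2 (Hp × Hm))).ofLp.2‖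
      (‖Rm‖ * ‖g n‖) hc0 hc1 (norm_nonneg _) (hq1le n) (norm_nonneg _)
      (by positivity) hn.2 (hq1 n) (key n) hn.1
end
end

section
/- Let H₊, H₋ be complex Hilbert spaces and H = H₊ × H₋. Let S₊, S₋ be self-adjoint operators in H₊, H₋, let M be a densely defined operator from H₋ to H₊ with adjoint M*, with dom S₋ ⊆ dom M, dom S₊ ⊆ dom M*, and suppose there are constants a₋, a₊ ≥ 0 and 0 ≤ b₋, b₊ < 1 such that ‖M f₋‖² ≤ a₋‖f₋‖² + b₋‖S₋ f₋‖² for all f₋ ∈ dom S₋ and ‖M* f₊‖² ≤ a₊‖f₊‖² + b₊‖S₊ f₊‖² for all f₊ ∈ dom S₊. Define S on dom S = dom S₊ × dom S₋ by S(f₊, f₋) = (S₊ f₊ + M f₋, −M* f₊ + S₋ f₋). Let λ ∈ ℝ be such that |λ − t| > √(a₋ + b₋ t²) for every t ∈ σ(S₋). Then for every sequence (fₙ) = ((fₙ⁺, fₙ⁻)) in dom S with ‖fₙ‖ = 1 for all n and ‖(S − λ)fₙ‖ → 0 as n → ∞, one has liminf_{n→∞} (‖fₙ⁺‖² − ‖fₙ⁻‖²)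 > 0. -/
noncomputable section

open Filter Topology

section Aux

variable {H : Type*} [NormedAddCommGroup H] [InnerProductSpace ℂ H]

local notation "⟪" x ", " y "⟫" => @inner ℂ _ _ x y

lemma pmap_apply_congr {S T : H →ₗ.[ℂ] H} (h : S = T) (x : S.domain)
    (hx : (x : H) ∈ T.domain) : S x = T ⟨(x : H), hx⟩ := by
  subst h; cases x; rfl

lemma symm_of_isSelfAdjoint [CompleteSpace H] {S : H →ₗ.[ℂ] H} (hS : IsSelfAdjoint S) :
    ∀ x y : S.domain, ⟪S x, (y : H)⟫ = ⟪(x : H), S y⟫ := by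
  intro x y
  have hd := hS.dense_domain
  have heq : S.adjoint = S := LinearPMap.isSelfAdjoint_def.mp hS
  have hx : (x : H) ∈ S.adjoint.domain := by rw [heq]; exact x.2
  have h := LinearPMap.adjoint_isFormalAdjoint hd ⟨(x : H), hx⟩ y
  rwa [← pmap_apply_congr heq.symm x hx] at h

end Aux

section Aux2

variable {H : Type*} [NormedAddCommGroup H] [InnerProductSpace ℂ H] [CompleteSpace H]

local notation "⟪" x ", " y "⟫" => @inner ℂ _ _ x y

lemma resolventAt_isSelfAdjoint {S : H →ₗ.[ℂ] H}
    (hsym : ∀ x y : S.domain, ⟪S x, (y : H)⟫ = ⟪(x : H), S y⟫)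
    {mu : ℝ} {R : H →L[ℂ] H} (hR : ResolventAt S (mu : ℂ) R) :
    IsSelfAdjoint R := by
  rw [ContinuousLinearMap.isSelfAdjoint_iff_isSymmetric]
  intro f h
  obtain ⟨hf, hfe⟩ := hR.1 f
  obtain ⟨hh, hhe⟩ := hR.1 h
  have key : ⟪(R f : H), S ⟨R h, hh⟩ - (mu : ℂ) • R h⟫
      = ⟪S ⟨R f, hf⟩ - (mu : ℂ) • R f, (R h : H)⟫ := by
    rw [inner_sub_right, inner_sub_left, inner_smul_right, inner_smul_left,
      hsym ⟨R f, hf⟩ ⟨R h, hh⟩]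
    simp [Complex.conj_ofReal]
  calc ⟪R f, h⟫ = ⟪(R f : H), S ⟨R h, hh⟩ - (mu : ℂ) • R h⟫ := by rw [hhe]
    _ = ⟪S ⟨R f, hf⟩ - (mu : ℂ) • R f, (R h : H)⟫ := key
    _ = ⟪f, R h⟫ := by rw [hfe]

lemma inResolventSet_of_close {S : H →ₗ.[ℂ] H} {lam0 : ℂ} {R0 : H →L[ℂ] H}
    (h : ResolventAt S lam0 R0) {lam : ℂ} (hlt : ‖lam - lam0‖ * ‖R0‖ < 1) :
    InResolventSet S lam := by
  set c := lam - lam0 with hc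
  have h1 : ‖c • R0‖ < 1 := lt_of_le_of_lt (norm_smul_le _ _) hlt
  set u : (H →L[ℂ] H)ˣ := Units.oneSub (c • R0) h1 with hu
  have huval : (u : H →L[ℂ] H) = 1 - c • R0 := Units.val_oneSub _ _
  have hcomm : Commute R0 (u : H →L[ℂ] H) := by
    rw [huval]
    simp only [Commute, SemiconjBy, mul_sub, sub_mul, mul_one, one_mul, mul_smul_comm,
      smul_mul_assoc]
  have hcomm' : R0 * (↑u⁻¹ : H →L[ℂ] H) = ↑u⁻¹ * R0 := (hcomm.units_inv_right).eq
  refine ⟨R0 * ↑u⁻¹, ?_, ?_⟩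
  · intro f
    obtain ⟨hmem, heq⟩ := h.1 ((↑u⁻¹ : H →L[ℂ] H) f)
    have hmem' : (R0 * ↑u⁻¹) f ∈ S.domain := hmem
    refine ⟨hmem', ?_⟩
    have : S ⟨(R0 * ↑u⁻¹) f, hmem'⟩ - lam • (R0 * ↑u⁻¹) f
        = (S ⟨R0 ((↑u⁻¹ : H →L[ℂ] H) f), hmem⟩
            - lam0 • R0 ((↑u⁻¹ : H →L[ℂ] H) f))
          - c • R0 ((↑u⁻¹ : H →L[ℂ] H) f) := by
      simp only [ContinuousLinearMap.mul_apply, hc]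
      rw [sub_sub]
      congr 1
      rw [← add_smul]
      ring_nf
    rw [this, heq]
    have := congrArg (fun (A : H →L[ℂ] H) => A f) u.mul_inv
    simpa [huval, ContinuousLinearMap.mul_apply, sub_smul,
      ContinuousLinearMap.sub_apply, ContinuousLinearMap.smul_apply] using this
  · intro g
    have hkey : S g - lam • (g : H) = (S g - lam0 • (g : H)) - c • (g : H) := by
      rw [sub_sub]; congr 1; rw [← add_smul]; rw [hc, add_sub_cancel]
    rw [hkey]
    have h2 : R0 (S g - lam0 • (g : H)) = g := h.2 g
    calc (R0 * ↑u⁻¹) ((S g - lam0 • (g:H)) - c • (g:H))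
        = (↑u⁻¹ * R0) ((S g - lam0 • (g:H)) - c • (g:H)) := by rw [hcomm']
      _ = (↑u⁻¹ : H →L[ℂ] H) (R0 (S g - lam0 • (g:H)) - c • R0 (g:H)) := by
          simp [ContinuousLinearMap.mul_apply, map_sub, map_smul]
      _ = (↑u⁻¹ : H →L[ℂ] H) ((u : H →L[ℂ] H) (g : H)) := by
          rw [h2, huval]
          simp [ContinuousLinearMap.sub_apply, ContinuousLinearMap.smul_apply,
            sub_smul]
      _ = g := by
          rw [← ContinuousLinearMap.mul_apply, u.inv_mul, ContinuousLinearMap.one_apply]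

lemma isClosed_spec (S : H →ₗ.[ℂ] H) : IsClosed (Spec S) := by
  rw [← isOpen_compl_iff]
  rw [Metric.isOpen_iff]
  intro lam0 hlam0
  simp only [Set.mem_compl_iff, Spec, Set.mem_setOf_eq, not_not] at hlam0
  obtain ⟨R0, hR0⟩ := hlam0
  refine ⟨(1 + ‖R0‖)⁻¹, by positivity, ?_⟩
  intro lam hlam
  simp only [Metric.mem_ball, Complex.dist_eq] at hlam
  simp only [Set.mem_compl_iff, Spec, Set.mem_setOf_eq, not_not]
  refine inResolventSet_of_close hR0 ?_
  have h0 : (0:ℝ) ≤ ‖R0‖ := norm_nonneg _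
  have h1 : ‖lam - lam0‖ < (1 + ‖R0‖)⁻¹ := by
    exact hlam
  have h2 : (0:ℝ) < 1 + ‖R0‖ := by positivity
  have h3 : (1 + ‖R0‖)⁻¹ * (1 + ‖R0‖) = 1 := by field_simp
  nlinarith [norm_nonneg (lam - lam0)]


end Aux2

section Aux3

variable {H : Type*} [NormedAddCommGroup H] [InnerProductSpace ℂ H] [CompleteSpace H]

local notation "⟪" x ", " y "⟫" => @inner ℂ _ _ x y

/-- pointwise first resolvent identity -/
lemma resolvent_identity {S : H →ₗ.[ℂ] H} {mu nu : ℂ} {R R' : H →L[ℂ] H}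
    (hR : ResolventAt S mu R) (hR' : ResolventAt S nu R') (f : H) :
    R f - R' f = (mu - nu) • R (R' f) := by
  obtain ⟨hmem, heq⟩ := hR'.1 f
  have h2 : R (S ⟨R' f, hmem⟩ - mu • (R' f)) = R' f := hR.2 ⟨R' f, hmem⟩
  have hS : (S ⟨R' f, hmem⟩ : H) = f + nu • (R' f) := by
    have := eq_add_of_sub_eq heq
    rw [this]
  have h3 : S ⟨R' f, hmem⟩ - mu • (R' f) = f + (nu - mu) • (R' f) := by
    rw [hS, sub_smul]; abel
  rw [h3] at h2
  rw [map_add, map_smul] at h2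
  have h4 : R f = R' f - (nu - mu) • R (R' f) := eq_sub_of_add_eq h2
  rw [h4]
  module

lemma mem_spec_of_spectrum {S : H →ₗ.[ℂ] H} {mu : ℂ} {R : H →L[ℂ] H}
    (hR : ResolventAt S mu R) {z : ℂ} (hz : z ∈ spectrum ℂ R) (hz0 : z ≠ 0) :
    mu + z⁻¹ ∈ Spec S := by
  by_contra hns
  simp only [Spec, Set.mem_setOf_eq, not_not] at hns
  obtain ⟨R', hR'⟩ := hns
  set nu : ℂ := mu + z⁻¹ with hnu
  have hmn : mu - nu = -z⁻¹ := by rw [hnu]; ring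
  have idA : ∀ f, R (R' f) = z • R' f - z • R f := by
    intro f
    have h := resolvent_identity hR hR' f
    rw [hmn] at h
    have h5 : (-z) • (R f - R' f) = ((-z) * (-z⁻¹)) • R (R' f) := by
      rw [h, smul_smul]
    rw [show (-z) * (-z⁻¹) = 1 by field_simp, one_smul] at h5
    rw [← h5]; module
  have idB : ∀ f, R' (R f) = z • R' f - z • R f := by
    intro f
    have h := resolvent_identity hR' hR f
    have hnm : nu - mu = z⁻¹ := by rw [hnu]; ring
    rw [hnm] at h
    have h5 : z • (R' f - R f) = (z * z⁻¹) • R' (R f) := by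
      rw [h, smul_smul]
    rw [show z * z⁻¹ = 1 by field_simp, one_smul] at h5
    rw [← h5]; module
  -- the inverse of z•1 - R
  set C : H →L[ℂ] H := z⁻¹ • 1 + (z⁻¹ * z⁻¹) • R' with hC
  have hval_inv : (z • (1:H →L[ℂ] H) - R) * C = 1 := by
    ext f
    simp only [ContinuousLinearMap.mul_apply, ContinuousLinearMap.coe_sub',
      Pi.sub_apply, ContinuousLinearMap.smul_apply, ContinuousLinearMap.one_apply,
      ContinuousLinearMap.add_apply, hC, map_add, map_smul]
    rw [idA f]
    match_scalars <;> field_simp <;> ring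
  have hinv_val : C * (z • (1:H →L[ℂ] H) - R) = 1 := by
    ext f
    simp only [ContinuousLinearMap.mul_apply, ContinuousLinearMap.coe_sub',
      Pi.sub_apply, ContinuousLinearMap.smul_apply, ContinuousLinearMap.one_apply,
      ContinuousLinearMap.add_apply, hC, map_sub, map_smul]
    rw [idB f]
    match_scalars <;> field_simp <;> ring
  have : IsUnit ((algebraMap ℂ (H →L[ℂ] H)) z - R) := by
    rw [Algebra.algebraMap_eq_smul_one]
    exact ⟨⟨z • 1 - R, C, hval_inv, hinv_val⟩, rfl⟩
  exact (spectrum.notMem_iff.mpr this) hz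

end Aux3

section Aux4

variable {H : Type*} [NormedAddCommGroup H] [InnerProductSpace ℂ H] [CompleteSpace H]

local notation "⟪" x ", " y "⟫" => @inner ℂ _ _ x y

lemma norm_resolvent_le {S : H →ₗ.[ℂ] H}
    (hsym : ∀ x y : S.domain, ⟪S x, (y : H)⟫ = ⟪(x : H), S y⟫)
    {mu r : ℝ} (hr : 0 < r)
    (hsep2 : ∀ z ∈ Spec S, r ≤ ‖(mu : ℂ) - z‖)
    {R : H →L[ℂ] H} (hR : ResolventAt S (mu : ℂ) R) :
    ‖R‖ ≤ 1 / r := by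
  have hsa : IsSelfAdjoint R := resolventAt_isSelfAdjoint hsym hR
  have hspec : ∀ z ∈ spectrum ℂ R, ‖z‖ ≤ 1 / r := by
    intro z hz
    rcases eq_or_ne z 0 with h0 | h0
    · simp [h0]; positivity
    · have hmem := mem_spec_of_spectrum hR hz h0
      have := hsep2 _ hmem
      have h2 : ‖(mu : ℂ) - (mu + z⁻¹)‖ = ‖z‖⁻¹ := by
        rw [show (mu : ℂ) - (mu + z⁻¹) = -z⁻¹ by ring, norm_neg, norm_inv]
      rw [h2] at this
      have hz' : 0 < ‖z‖ := norm_pos_iff.mpr h0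
      rw [le_inv_comm₀ hr hz'] at this
      rw [one_div]
      exact this
  have hrad : spectralRadius ℂ R ≤ ENNReal.ofReal (1 / r) := by
    rw [spectralRadius]
    refine iSup₂_le fun z hz => ?_
    rw [← enorm_eq_nnnorm, ← ofReal_norm]
    exact ENNReal.ofReal_le_ofReal (hspec z hz)
  rw [hsa.spectralRadius_eq_nnnorm] at hrad
  rw [← enorm_eq_nnnorm, ← ofReal_norm] at hrad
  exact (ENNReal.ofReal_le_ofReal_iff (by positivity)).mp hrad

lemma spec_lower_bound {S : H →ₗ.[ℂ] H}
    (hsym : ∀ x y : S.domain, ⟪S x, (y : H)⟫ = ⟪(x : H), S y⟫)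
    {mu r : ℝ} (hr : 0 < r)
    (hsep2 : ∀ z ∈ Spec S, r ≤ ‖(mu : ℂ) - z‖) :
    ∀ g : S.domain, r * ‖(g : H)‖ ≤ ‖S g - (mu : ℂ) • (g : H)‖ := by
  have hmu : (mu : ℂ) ∉ Spec S := by
    intro hmem
    have := hsep2 _ hmem
    simp only [sub_self, norm_zero] at this
    linarith
  simp only [Spec, Set.mem_setOf_eq, not_not] at hmu
  obtain ⟨R, hR⟩ := hmu
  have hRnorm := norm_resolvent_le hsym hr hsep2 hR
  intro g
  have h1 : R (S g - (mu : ℂ) • (g : H)) = g := hR.2 g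
  have h2 : ‖(g : H)‖ ≤ (1 / r) * ‖S g - (mu : ℂ) • (g : H)‖ := by
    calc ‖(g : H)‖ = ‖R (S g - (mu : ℂ) • (g : H))‖ := by rw [h1]
      _ ≤ ‖R‖ * ‖S g - (mu : ℂ) • (g : H)‖ := R.le_opNorm _
      _ ≤ (1 / r) * ‖S g - (mu : ℂ) • (g : H)‖ := by
          apply mul_le_mul_of_nonneg_right hRnorm (norm_nonneg _)
  have := mul_le_mul_of_nonneg_left h2 (le_of_lt hr)
  rw [← mul_assoc, mul_one_div, div_self (ne_of_gt hr), one_mul] at this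
  exact this

end Aux4

section Aux5

variable {H : Type*} [NormedAddCommGroup H] [InnerProductSpace ℂ H] [CompleteSpace H]

local notation "⟪" x ", " y "⟫" => @inner ℂ _ _ x y

lemma norm_ofReal_sub_sq (x : ℝ) (z : ℂ) :
    ‖(x : ℂ) - z‖ ^ 2 = x ^ 2 - 2 * x * z.re + ‖z‖ ^ 2 := by
  have h1 : ∀ w : ℂ, ‖w‖ ^ 2 = w.re ^ 2 + w.im ^ 2 := fun w => by
    rw [Complex.sq_norm, Complex.normSq_apply]; ring
  rw [h1, h1]
  simp only [Complex.sub_re, Complex.sub_im, Complex.ofReal_re, Complex.ofReal_im]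
  ring

lemma exists_delta (S : H →ₗ.[ℂ] H) {am bm lam : ℝ} (ham : 0 ≤ am)
    (hbm0 : 0 ≤ bm) (hbm1 : bm < 1)
    (hsep : ∀ t ∈ Spec S, Real.sqrt (am + bm * ‖t‖ ^ 2) < ‖(lam : ℂ) - t‖) :
    ∃ δ : ℝ, 0 < δ ∧ δ ≤ (1 - bm) / 2 ∧ ∀ z ∈ Spec S,
      δ * (1 + ‖z‖ ^ 2) ≤ ‖(lam : ℂ) - z‖ ^ 2 - am - bm * ‖z‖ ^ 2 := by
  set c : ℝ := (1 - bm) / 2 with hc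
  have hcpos : 0 < c := by rw [hc]; linarith
  set L : ℝ := |lam| with hL
  have hLnn : 0 ≤ L := abs_nonneg _
  set T : ℝ := max 1 ((2 * L + am + c) / c) with hT
  have hT1 : 1 ≤ T := le_max_left _ _
  have hTc : 2 * L + am + c ≤ c * T := by
    have := le_max_right 1 ((2 * L + am + c) / c)
    calc 2 * L + am + c = c * ((2 * L + am + c) / c) := by field_simp
      _ ≤ c * T := by
          apply mul_le_mul_of_nonneg_left _ hcpos.le
          rw [hT]; exact le_max_right _ _
  -- far region estimate
  have hFar : ∀ z : ℂ, T ≤ ‖z‖ →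
      c * (1 + ‖z‖ ^ 2) ≤ ‖(lam : ℂ) - z‖ ^ 2 - am - bm * ‖z‖ ^ 2 := by
    intro z hz
    have h1 : ‖z‖ - L ≤ ‖(lam : ℂ) - z‖ := by
      have := norm_sub_norm_le z ((lam : ℂ))
      have h2 : ‖(lam : ℂ)‖ = L := by rw [hL, Complex.norm_real, Real.norm_eq_abs]
      calc ‖z‖ - L = ‖z‖ - ‖(lam : ℂ)‖ := by rw [h2]
        _ ≤ ‖z - (lam : ℂ)‖ := norm_sub_norm_le _ _
        _ = ‖(lam : ℂ) - z‖ := by rw [norm_sub_rev]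
    have hzL : L ≤ ‖z‖ := by
      have : 2 * L + am + c ≤ c * ‖z‖ := le_trans hTc (mul_le_mul_of_nonneg_left hz hcpos.le)
      nlinarith [hcpos, norm_nonneg z]
    have h3 : (‖z‖ - L) ^ 2 ≤ ‖(lam : ℂ) - z‖ ^ 2 := by
      apply sq_le_sq' _ h1
      nlinarith [norm_nonneg ((lam : ℂ) - z)]
    have hbm2 : bm = 1 - 2 * c := by rw [hc]; ring
    have hcz : c * T * ‖z‖ ≤ c * ‖z‖ * ‖z‖ := by
      nlinarith [mul_nonneg (mul_nonneg hcpos.le (norm_nonneg z)) (sub_nonneg.mpr hz)]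
    have hz1 : 1 ≤ ‖z‖ := le_trans hT1 hz
    nlinarith [h3, hcz, hTc, mul_le_mul_of_nonneg_left hz1 (by positivity : (0:ℝ) ≤ 2*L + am + c)]
  -- min over the compact part
  set F : ℂ → ℝ := fun z => ‖(lam : ℂ) - z‖ ^ 2 - am - bm * ‖z‖ ^ 2 with hF
  set G : ℂ → ℝ := fun z => F z / (1 + ‖z‖ ^ 2) with hG
  have hGcont : Continuous G := by
    apply Continuous.div
    · fun_prop
    · fun_prop
    · intro z; positivity
  have hFpos : ∀ z ∈ Spec S, 0 < F z := by
    intro z hz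
    have h1 := hsep z hz
    have h2 : am + bm * ‖z‖ ^ 2 < ‖(lam : ℂ) - z‖ ^ 2 := by
      have h0 : 0 ≤ am + bm * ‖z‖ ^ 2 := by positivity
      nlinarith [Real.sq_sqrt h0, Real.sqrt_nonneg (am + bm * ‖z‖ ^ 2), h1]
    simp only [hF]; linarith
  set K : Set ℂ := Spec S ∩ Metric.closedBall 0 T with hK
  have hKcomp : IsCompact K := by
    apply (isCompact_closedBall (0:ℂ) T).of_isClosed_subset
    · exact (isClosed_spec S).inter Metric.isClosed_closedBall
    · exact Set.inter_subset_right
  rcases Set.eq_empty_or_nonempty K with hKe | hKne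
  · refine ⟨c, hcpos, le_refl _, ?_⟩
    intro z hz
    have hzT : T ≤ ‖z‖ := by
      by_contra hlt
      push_neg at hlt
      have : z ∈ K := ⟨hz, by simpa [Metric.mem_closedBall, Complex.dist_eq] using le_of_lt hlt⟩
      rw [hKe] at this; exact this
    exact hFar z hzT
  · obtain ⟨z0, hz0K, hz0min⟩ := hKcomp.exists_isMinOn hKne hGcont.continuousOn
    have hz0S : z0 ∈ Spec S := hz0K.1
    have hGz0 : 0 < G z0 := by
      apply div_pos (hFpos z0 hz0S)
      positivity
    refine ⟨min (G z0) c, lt_min hGz0 hcpos, min_le_right _ _, ?_⟩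
    intro z hz
    rcases le_or_gt ‖z‖ T with hle | hlt
    · have hzK : z ∈ K := ⟨hz, by simpa [Metric.mem_closedBall, Complex.dist_eq] using hle⟩
      have h1 : G z0 ≤ G z := hz0min hzK
      have h2 : min (G z0) c ≤ G z := le_trans (min_le_left _ _) h1
      have h3 : 0 < 1 + ‖z‖ ^ 2 := by positivity
      have := mul_le_mul_of_nonneg_right h2 h3.le
      calc min (G z0) c * (1 + ‖z‖ ^ 2) ≤ G z * (1 + ‖z‖ ^ 2) := this
        _ = F z := by rw [hG]; field_simp
    · calc min (G z0) c * (1 + ‖z‖ ^ 2) ≤ c * (1 + ‖z‖ ^ 2) := by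
            apply mul_le_mul_of_nonneg_right (min_le_right _ _) (by positivity)
      _ ≤ F z := hFar z hlt.le

end Aux5

section Aux6

variable {H : Type*} [NormedAddCommGroup H] [InnerProductSpace ℂ H] [CompleteSpace H]

local notation "⟪" x ", " y "⟫" => @inner ℂ _ _ x y

lemma norm_sub_real_smul_sq (x : ℝ) (a b : H) :
    ‖a - (x : ℂ) • b‖ ^ 2
      = ‖a‖ ^ 2 - 2 * x * (⟪a, b⟫).re + x ^ 2 * ‖b‖ ^ 2 := by
  rw [@norm_sub_sq ℂ]
  rw [inner_smul_right]
  rw [norm_smul]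
  simp only [Complex.mul_re, Complex.ofReal_re, Complex.ofReal_im, Complex.norm_real,
    Real.norm_eq_abs, RCLike.re_to_complex]
  rw [mul_pow, sq_abs]
  ring

lemma key_estimate {S : H →ₗ.[ℂ] H}
    (hsym : ∀ x y : S.domain, ⟪S x, (y : H)⟫ = ⟪(x : H), S y⟫)
    {am bm lam : ℝ} (ham : 0 ≤ am) (hbm0 : 0 ≤ bm) (hbm1 : bm < 1)
    (hsep : ∀ t ∈ Spec S, Real.sqrt (am + bm * ‖t‖ ^ 2) < ‖(lam : ℂ) - t‖) :
    ∃ δ : ℝ, 0 < δ ∧ δ ≤ (1 - bm) / 2 ∧ ∀ g : S.domain,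
      am * ‖(g : H)‖ ^ 2 + bm * ‖S g‖ ^ 2 + δ * (‖(g : H)‖ ^ 2 + ‖S g‖ ^ 2)
        ≤ ‖S g - (lam : ℂ) • (g : H)‖ ^ 2 := by
  obtain ⟨δ, hδpos, hδle, hδ⟩ := exists_delta S ham hbm0 hbm1 hsep
  refine ⟨δ, hδpos, hδle, ?_⟩
  set c : ℝ := 1 - bm - δ with hcdef
  have hcpos : 0 < c := by rw [hcdef]; linarith
  have hcne : c ≠ 0 := ne_of_gt hcpos
  have hcle1 : c ≤ 1 := by rw [hcdef]; linarith
  set mu : ℝ := lam / c with hmu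
  set r2 : ℝ := mu ^ 2 - (lam ^ 2 - am - δ) / c with hr2def
  have hcmu : c * mu = lam := by rw [hmu]; field_simp
  have hr2c : c * r2 = lam * mu - lam ^ 2 + am + δ := by
    rw [hr2def, hmu]; field_simp; ring
  have h2 : c * (lam * mu) = lam ^ 2 := by
    rw [show c * (lam * mu) = lam * (c * mu) by ring, hcmu]; ring
  have h4 : c * (c * r2) = lam ^ 2 * (1 - c) + c * am + c * δ := by
    calc c * (c * r2) = c * (lam * mu) - c * lam ^ 2 + c * am + c * δ := by
          rw [hr2c]; ring
      _ = lam ^ 2 * (1 - c) + c * am + c * δ := by rw [h2]; ring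
  have h5 : 0 < c * (c * r2) := by
    rw [h4]
    nlinarith [mul_nonneg (sq_nonneg lam) (sub_nonneg.mpr hcle1),
      mul_pos hcpos hδpos, mul_nonneg hcpos.le ham]
  have hr2pos : 0 < r2 := by
    by_contra h
    push_neg at h
    nlinarith [mul_nonneg hcpos.le (mul_nonneg hcpos.le (neg_nonneg.mpr h))]
  -- separation for mu
  have hsepmu : ∀ z ∈ Spec S, Real.sqrt r2 ≤ ‖(mu : ℂ) - z‖ := by
    intro z hz
    have hδz := hδ z hz
    rw [norm_ofReal_sub_sq] at hδz
    have hzim : z.re ^ 2 ≤ ‖z‖ ^ 2 := by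
      have : ‖z‖ ^ 2 = z.re ^ 2 + z.im ^ 2 := by
        rw [Complex.sq_norm, Complex.normSq_apply]; ring
      nlinarith [sq_nonneg z.im]
    have hgoal2 : r2 ≤ ‖(mu : ℂ) - z‖ ^ 2 := by
      rw [norm_ofReal_sub_sq]
      have he : c * (mu ^ 2 - 2 * mu * z.re + ‖z‖ ^ 2)
          = lam * mu - 2 * lam * z.re + c * ‖z‖ ^ 2 := by
        rw [show c * (mu ^ 2 - 2 * mu * z.re + ‖z‖ ^ 2)
            = (c * mu) * mu - 2 * (c * mu) * z.re + c * ‖z‖ ^ 2 by ring, hcmu]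
      have hcr : c * r2 ≤ c * (mu ^ 2 - 2 * mu * z.re + ‖z‖ ^ 2) := by
        rw [hr2c, he, hcdef]
        linarith [hδz]
      exact le_of_mul_le_mul_left hcr hcpos
    calc Real.sqrt r2 ≤ Real.sqrt (‖(mu : ℂ) - z‖ ^ 2) := Real.sqrt_le_sqrt hgoal2
      _ = ‖(mu : ℂ) - z‖ := Real.sqrt_sq (norm_nonneg _)
  -- lower bound at mu
  have hrpos : 0 < Real.sqrt r2 := Real.sqrt_pos.mpr hr2pos
  have hlow := spec_lower_bound hsym hrpos hsepmu
  intro g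
  have hsq : r2 * ‖(g : H)‖ ^ 2 ≤ ‖S g - (mu : ℂ) • (g : H)‖ ^ 2 := by
    have h := hlow g
    have := mul_le_mul h h (by positivity) (norm_nonneg _)
    calc r2 * ‖(g : H)‖ ^ 2
        = (Real.sqrt r2 * ‖(g : H)‖) * (Real.sqrt r2 * ‖(g : H)‖) := by
          rw [show (Real.sqrt r2 * ‖(g:H)‖) * (Real.sqrt r2 * ‖(g:H)‖)
              = (Real.sqrt r2 * Real.sqrt r2) * (‖(g:H)‖ * ‖(g:H)‖) by ring,
            Real.mul_self_sqrt hr2pos.le]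
          ring
      _ ≤ ‖S g - (mu : ℂ) • (g : H)‖ * ‖S g - (mu : ℂ) • (g : H)‖ := this
      _ = ‖S g - (mu : ℂ) • (g : H)‖ ^ 2 := by ring
  rw [norm_sub_real_smul_sq] at hsq
  rw [norm_sub_real_smul_sq]
  set G : ℝ := ‖(g : H)‖ ^ 2
  set SG : ℝ := ‖S g‖ ^ 2
  set w : ℝ := (⟪S g, (g : H)⟫).re
  -- multiply hsq by c and use hcmu, hr2c
  have hmul := mul_le_mul_of_nonneg_left hsq hcpos.le
  have he2 : c * (SG - 2 * mu * w + mu ^ 2 * G)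
      = c * SG - 2 * lam * w + (lam * mu) * G := by
    rw [show c * (SG - 2 * mu * w + mu ^ 2 * G)
        = c * SG - 2 * (c * mu) * w + ((c * mu) * mu) * G by ring, hcmu]
  have he3 : c * (r2 * G) = (lam * mu - lam ^ 2 + am + δ) * G := by
    rw [show c * (r2 * G) = (c * r2) * G by ring, hr2c]
  rw [he2, he3] at hmul
  have hGnn : 0 ≤ G := sq_nonneg _
  have hSGnn : 0 ≤ SG := sq_nonneg _
  nlinarith [hmul, hGnn, hSGnn, hcdef]

end Aux6

lemma final_arith {κ κ2 ρ γ e P Mn : ℝ} (hκsq : κ ^ 2 = κ2) (hκnn : 0 ≤ κ)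
    (hρ : 0 ≤ ρ) (he : 0 ≤ e) (h1 : P ^ 2 + Mn ^ 2 = 1) (h2 : Mn ≤ κ * P + ρ * e)
    (hPnn : 0 ≤ P) (hMnn : 0 ≤ Mn) (hκ2pos : 0 < κ2)
    (h5 : (1 + κ2) * γ = 1 - κ2) (hn : e * (2 * κ * ρ + ρ ^ 2 * e) < γ * (1 + κ2) / 4) :
    γ / 2 ≤ P ^ 2 - Mn ^ 2 := by
  have hP1 : P ≤ 1 := by nlinarith
  have h3 : 1 ≤ (1 + κ2) * P ^ 2 + e * (2 * κ * ρ + ρ ^ 2 * e) := by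
    nlinarith [mul_self_le_mul_self hMnn h2,
      mul_nonneg (mul_nonneg (mul_nonneg (sub_nonneg.mpr hP1) hκnn) hρ) he]
  have h6 : (1 + κ2) * (γ / 2) ≤ (1 + κ2) * (P ^ 2 - Mn ^ 2) := by
    have e1 : (1 + κ2) * (P ^ 2 - Mn ^ 2)
        = 2 * ((1 + κ2) * P ^ 2) - (1 + κ2) * (P ^ 2 + Mn ^ 2) := by ring
    rw [e1, h1]
    linarith [h3, hn, h5]
  exact le_of_mul_le_mul_left h6 (by linarith)


variable {Hp Hm : Type*}
  [NormedAddCommGroup Hp] [InnerProductSpace ℂ Hp] [CompleteSpace Hp]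
  [NormedAddCommGroup Hm] [InnerProductSpace ℂ Hm] [CompleteSpace Hm]

local notation "⟪" x ", " y "⟫" => @inner ℂ _ _ x y

set_option maxHeartbeats 1000000

/-- **Theorem 4.3 (i).** If `lam` is real with `|lam - t| > √(a₋ + b₋ t²)` for every
`t ∈ σ(S₋)`, then every normalized approximate eigensequence `fₙ = (fₙ⁺, fₙ⁻)` of `S` at
`lam` satisfies `liminf (‖fₙ⁺‖² - ‖fₙ⁻‖²) > 0` (spectral points of positive type). -/
theorem stmt5
    (Sp : Hp →ₗ.[ℂ] Hp) (Sm : Hm →ₗ.[ℂ] Hm)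
    (hSp : IsSelfAdjoint Sp) (hSm : IsSelfAdjoint Sm)
    (M : Hm →ₗ.[ℂ] Hp) (hMdense : Dense (M.domain : Set Hm))
    (hdm : Sm.domain ≤ M.domain) (hdp : Sp.domain ≤ M.adjoint.domain)
    (am ap bm bp : ℝ) (ham : 0 ≤ am) (hap : 0 ≤ ap)
    (hbm0 : 0 ≤ bm) (hbm1 : bm < 1) (hbp0 : 0 ≤ bp) (hbp1 : bp < 1)
    (hMbound : ∀ f : Sm.domain,
      ‖M ⟨(f : Hm), hdm f.2⟩‖ ^ 2 ≤ am * ‖(f : Hm)‖ ^ 2 + bm * ‖Sm f‖ ^ 2)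
    (hMadjBound : ∀ f : Sp.domain,
      ‖M.adjoint ⟨(f : Hp), hdp f.2⟩‖ ^ 2 ≤ ap * ‖(f : Hp)‖ ^ 2 + bp * ‖Sp f‖ ^ 2)
    (S : WithLp 2 (Hp × Hm) →ₗ.[ℂ] WithLp 2 (Hp × Hm))
    (hSdom : ∀ p : WithLp 2 (Hp × Hm),
      p ∈ S.domain ↔ p.ofLp.1 ∈ Sp.domain ∧ p.ofLp.2 ∈ Sm.domain)
    (hSval : ∀ (p : S.domain) (h1 : (p : WithLp 2 (Hp × Hm)).ofLp.1 ∈ Sp.domain)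
        (h2 : (p : WithLp 2 (Hp × Hm)).ofLp.2 ∈ Sm.domain),
      S p = (WithLp.equiv 2 (Hp × Hm)).symm
        (Sp ⟨(p : WithLp 2 (Hp × Hm)).ofLp.1, h1⟩ + M ⟨(p : WithLp 2 (Hp × Hm)).ofLp.2, hdm h2⟩,
         Sm ⟨(p : WithLp 2 (Hp × Hm)).ofLp.2, h2⟩
           - M.adjoint ⟨(p : WithLp 2 (Hp × Hm)).ofLp.1, hdp h1⟩))
    (lam : ℝ)
    (hsep : ∀ t ∈ Spec Sm, Real.sqrt (am + bm * ‖t‖ ^ 2) < ‖(lam : ℂ) - t‖)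
    (fn : ℕ → S.domain) (hnorm : ∀ n, ‖(fn n : WithLp 2 (Hp × Hm))‖ = 1)
    (hconv : Tendsto
      (fun n => ‖S (fn n) - (lam : ℂ) • ((fn n : WithLp 2 (Hp × Hm)))‖) atTop (𝓝 0)) :
    0 < liminf (fun n =>
      ‖((fn n : WithLp 2 (Hp × Hm))).ofLp.1‖ ^ 2 - ‖((fn n : WithLp 2 (Hp × Hm))).ofLp.2‖ ^ 2) atTop := by
  classical
  have hsymm := symm_of_isSelfAdjoint hSm
  obtain ⟨δ, hδpos, hδle, hkey⟩ := key_estimate hsymm ham hbm0 hbm1 hsep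
  set C : ℝ := 2 + 2 * lam ^ 2 with hCdef
  have hCpos : 0 < C := by positivity
  have hC2 : 2 ≤ C := by nlinarith [sq_nonneg lam]
  have hδlt : δ < C := by nlinarith
  set κ2 : ℝ := 1 - δ / C with hκ2def
  have hδCpos : 0 < δ / C := div_pos hδpos hCpos
  have hκ2pos : 0 < κ2 := by
    have : δ / C < 1 := (div_lt_one hCpos).mpr hδlt
    rw [hκ2def]; linarith
  have hκ2lt1 : κ2 < 1 := by rw [hκ2def]; linarith
  set κ : ℝ := Real.sqrt κ2 with hκdef
  have hκnn : 0 ≤ κ := Real.sqrt_nonneg _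
  have hκsq : κ ^ 2 = κ2 := Real.sq_sqrt hκ2pos.le
  have hκlt1 : κ < 1 := by nlinarith [hκsq, hκnn]
  -- step: relative bound of M by (Sm - lam)
  have hM2 : ∀ g : Sm.domain,
      ‖M ⟨(g : Hm), hdm g.2⟩‖ ^ 2 ≤ κ2 * ‖Sm g - (lam : ℂ) • (g : Hm)‖ ^ 2 := by
    intro g
    have h1 := hMbound g
    have h2 := hkey g
    set G : ℝ := ‖(g : Hm)‖ ^ 2 with hGdef
    set SG : ℝ := ‖Sm g‖ ^ 2 with hSGdef
    set X : ℝ := ‖Sm g - (lam : ℂ) • (g : Hm)‖ ^ 2 with hXdef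
    set w : ℝ := (⟪Sm g, (g : Hm)⟫).re with hwdef
    have h3 : X ≤ C * (G + SG) := by
      have hexp : X = SG - 2 * lam * w + lam ^ 2 * G := by
        rw [hXdef, norm_sub_real_smul_sq]
      have hw : |w| ≤ ‖Sm g‖ * ‖(g : Hm)‖ := by
        calc |w| ≤ ‖⟪Sm g, (g : Hm)⟫‖ := Complex.abs_re_le_norm _
          _ = ‖⟪Sm g, (g : Hm)⟫‖ := rfl
          _ ≤ ‖Sm g‖ * ‖(g : Hm)‖ := norm_inner_le_norm _ _
      have h5 : -(2 * lam * w) ≤ 2 * (|lam| * (‖Sm g‖ * ‖(g : Hm)‖)) := by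
        calc -(2 * lam * w) ≤ |2 * lam * w| := neg_le_abs _
          _ = 2 * (|lam| * |w|) := by
              rw [abs_mul, abs_mul, abs_two]; ring
          _ ≤ 2 * (|lam| * (‖Sm g‖ * ‖(g : Hm)‖)) := by
              have := mul_le_mul_of_nonneg_left hw (abs_nonneg lam)
              linarith
      nlinarith [hexp, h5, sq_nonneg (‖Sm g‖ - |lam| * ‖(g : Hm)‖), sq_abs lam,
        hGdef, hSGdef, hCdef]
    have h4 : (δ / C) * X ≤ δ * (G + SG) := by
      calc (δ / C) * X ≤ (δ / C) * (C * (G + SG)) := by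
            apply mul_le_mul_of_nonneg_left h3 hδCpos.le
        _ = δ * (G + SG) := by field_simp
    have he : κ2 * X = X - (δ / C) * X := by rw [hκ2def]; ring
    rw [he]
    linarith [h1, h2, h4]
  -- lam in resolvent set of Sm
  have hlamres : InResolventSet Sm (lam : ℂ) := by
    by_contra hmem
    have := hsep (lam : ℂ) hmem
    simp only [sub_self, norm_zero] at this
    exact absurd this (not_lt.mpr (Real.sqrt_nonneg _))
  obtain ⟨Rl, hRl⟩ := hlamres
  have hRlsa : IsSelfAdjoint Rl := resolventAt_isSelfAdjoint hsymm hRl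
  have hRlsym : ∀ x y : Hm, ⟪Rl x, y⟫ = ⟪x, Rl y⟫ := by
    have := ContinuousLinearMap.isSelfAdjoint_iff_isSymmetric.mp hRlsa
    exact fun x y => this x y
  -- the bounded operator T = M ∘ Rl
  have hmem : ∀ u : Hm, Rl u ∈ Sm.domain := fun u => (hRl.1 u).choose
  have hmemeq : ∀ u : Hm, Sm ⟨Rl u, hmem u⟩ - (lam : ℂ) • Rl u = u :=
    fun u => (hRl.1 u).choose_spec
  set TL : Hm →ₗ[ℂ] Hp :=
    M.toFun ∘ₗ LinearMap.codRestrict M.domain (Rl : Hm →ₗ[ℂ] Hm)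
      (fun u => hdm (hmem u)) with hTLdef
  have hTLbound : ∀ u : Hm, ‖TL u‖ ≤ κ * ‖u‖ := by
    intro u
    have h1 := hM2 ⟨Rl u, hmem u⟩
    rw [hmemeq u] at h1
    have h2 : ‖TL u‖ ^ 2 ≤ (κ * ‖u‖) ^ 2 := by
      rw [mul_pow, hκsq]
      exact h1
    have h3 : 0 ≤ κ * ‖u‖ := by positivity
    calc ‖TL u‖ = Real.sqrt (‖TL u‖ ^ 2) := (Real.sqrt_sq (norm_nonneg _)).symm
      _ ≤ Real.sqrt ((κ * ‖u‖) ^ 2) := Real.sqrt_le_sqrt h2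
      _ = κ * ‖u‖ := Real.sqrt_sq h3
  set T : Hm →L[ℂ] Hp := TL.mkContinuous κ hTLbound with hTdef
  have hTnorm : ‖T‖ ≤ κ := LinearMap.mkContinuous_norm_le _ hκnn _
  have hTapp : ∀ u : Hm, T u = M ⟨Rl u, hdm (hmem u)⟩ := fun u => rfl
  -- Rl ∘ M† is the adjoint of T on dom M†
  have hadj : ∀ (p : Hp) (hp : p ∈ M.adjoint.domain),
      Rl (M.adjoint ⟨p, hp⟩) = (ContinuousLinearMap.adjoint T) p := by
    intro p hp
    apply ext_inner_right ℂ
    intro u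
    calc ⟪Rl (M.adjoint ⟨p, hp⟩), u⟫ = ⟪M.adjoint ⟨p, hp⟩, Rl u⟫ := hRlsym _ _
      _ = ⟪p, M ⟨Rl u, hdm (hmem u)⟩⟫ :=
          LinearPMap.adjoint_isFormalAdjoint hMdense ⟨p, hp⟩ ⟨Rl u, hdm (hmem u)⟩
      _ = ⟪p, T u⟫ := by rw [hTapp]
      _ = ⟪(ContinuousLinearMap.adjoint T) p, u⟫ :=
          (ContinuousLinearMap.adjoint_inner_left T u p).symm
  have hadjnorm : ∀ (p : Hp) (hp : p ∈ M.adjoint.domain),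
      ‖Rl (M.adjoint ⟨p, hp⟩)‖ ≤ κ * ‖p‖ := by
    intro p hp
    rw [hadj p hp]
    calc ‖(ContinuousLinearMap.adjoint T) p‖ ≤ ‖ContinuousLinearMap.adjoint T‖ * ‖p‖ :=
          (ContinuousLinearMap.adjoint T).le_opNorm p
      _ ≤ κ * ‖p‖ := by
          apply mul_le_mul_of_nonneg_right _ (norm_nonneg p)
          have hnadj : ‖ContinuousLinearMap.adjoint T‖ = ‖T‖ :=
            (ContinuousLinearMap.adjoint : (Hm →L[ℂ] Hp) ≃ₗᵢ⋆[ℂ] (Hp →L[ℂ] Hm)).norm_map T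
          rw [hnadj]
          exact hTnorm
  -- the sequence estimates
  set ρ : ℝ := ‖Rl‖ with hρdef
  have hρnn : 0 ≤ ρ := norm_nonneg _
  set en : ℕ → ℝ := fun n => ‖S (fn n) - (lam : ℂ) • ((fn n : WithLp 2 (Hp × Hm)))‖ with hendef
  have hennn : ∀ n, 0 ≤ en n := fun n => norm_nonneg _
  have hmain : ∀ n, ‖((fn n : WithLp 2 (Hp × Hm))).ofLp.2‖
      ≤ κ * ‖((fn n : WithLp 2 (Hp × Hm))).ofLp.1‖ + ρ * en n := by
    intro n
    obtain ⟨h1, h2⟩ := (hSdom _).mp (fn n).2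
    have hval := hSval (fn n) h1 h2
    set x : WithLp 2 (Hp × Hm) := (fn n : WithLp 2 (Hp × Hm)) with hxdef
    set ε : WithLp 2 (Hp × Hm) := S (fn n) - (lam : ℂ) • x with hεdef
    have hsnd : ε.ofLp.2 = (Sm ⟨x.ofLp.2, h2⟩ - M.adjoint ⟨x.ofLp.1, hdp h1⟩) - (lam : ℂ) • x.ofLp.2 := by
      rw [hεdef, hval]; rfl
    have hrear : Sm ⟨x.ofLp.2, h2⟩ - (lam : ℂ) • x.ofLp.2 = M.adjoint ⟨x.ofLp.1, hdp h1⟩ + ε.ofLp.2 := by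
      rw [hsnd]; abel
    have hx2 : Rl (Sm ⟨x.ofLp.2, h2⟩ - (lam : ℂ) • x.ofLp.2) = x.ofLp.2 := hRl.2 ⟨x.ofLp.2, h2⟩
    have hx2' : x.ofLp.2 = Rl (M.adjoint ⟨x.ofLp.1, hdp h1⟩) + Rl ε.ofLp.2 := by
      rw [← hx2, hrear, map_add]
    have hε2 : ‖ε.ofLp.2‖ ≤ en n := by
      have hsq : ‖ε‖ ^ 2 = ‖ε.ofLp.1‖ ^ 2 + ‖ε.ofLp.2‖ ^ 2 := WithLp.prod_norm_sq_eq_of_L2 ε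
      have h5 : ‖ε.ofLp.2‖ ^ 2 ≤ ‖ε‖ ^ 2 := by nlinarith [sq_nonneg ‖ε.ofLp.1‖]
      have : en n = ‖ε‖ := rfl
      rw [this]
      nlinarith [norm_nonneg ε, norm_nonneg ε.ofLp.2]
    calc ‖x.ofLp.2‖ ≤ ‖Rl (M.adjoint ⟨x.ofLp.1, hdp h1⟩)‖ + ‖Rl ε.ofLp.2‖ := by
          rw [hx2']; exact norm_add_le _ _
      _ ≤ κ * ‖x.ofLp.1‖ + ρ * en n := by
          apply add_le_add (hadjnorm x.ofLp.1 (hdp h1))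
          calc ‖Rl ε.ofLp.2‖ ≤ ρ * ‖ε.ofLp.2‖ := Rl.le_opNorm _
            _ ≤ ρ * en n := mul_le_mul_of_nonneg_left hε2 hρnn
  have hone : ∀ n, ‖((fn n : WithLp 2 (Hp × Hm))).ofLp.1‖ ^ 2
      + ‖((fn n : WithLp 2 (Hp × Hm))).ofLp.2‖ ^ 2 = 1 := by
    intro n
    have := WithLp.prod_norm_sq_eq_of_L2 (fn n : WithLp 2 (Hp × Hm))
    rw [hnorm n] at this
    simpa using this.symm
  -- final liminf argument
  set γ : ℝ := (1 - κ2) / (1 + κ2) with hγdef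
  have hγpos : 0 < γ := by
    apply div_pos <;> linarith
  have hglim : Tendsto (fun n => en n * (2 * κ * ρ + ρ ^ 2 * en n)) atTop (𝓝 0) := by
    have h1 : Tendsto en atTop (𝓝 0) := hconv
    have h2 : Tendsto (fun n => 2 * κ * ρ + ρ ^ 2 * en n) atTop (𝓝 (2 * κ * ρ + ρ ^ 2 * 0)) :=
      tendsto_const_nhds.add (h1.const_mul _)
    simpa using h1.mul h2
  have hev : ∀ᶠ n in atTop, en n * (2 * κ * ρ + ρ ^ 2 * en n) < γ * (1 + κ2) / 4 := by
    apply hglim.eventually (gt_mem_nhds (by positivity))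
  have hev2 : ∀ᶠ n in atTop, γ / 2 ≤
      ‖((fn n : WithLp 2 (Hp × Hm))).ofLp.1‖ ^ 2 - ‖((fn n : WithLp 2 (Hp × Hm))).ofLp.2‖ ^ 2 := by
    filter_upwards [hev] with n hn
    have h5 : (1 + κ2) * γ = 1 - κ2 := by rw [hγdef]; field_simp
    exact final_arith hκsq hκnn hρnn (hennn n) (hone n) (hmain n)
      (norm_nonneg _) (norm_nonneg _) hκ2pos h5 hn
  have hcb : Filter.IsCoboundedUnder (· ≥ ·) atTop (fun n =>
      ‖((fn n : WithLp 2 (Hp × Hm))).ofLp.1‖ ^ 2 - ‖((fn n : WithLp 2 (Hp × Hm))).ofLp.2‖ ^ 2) := by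
    apply Filter.IsBoundedUnder.isCoboundedUnder_ge
    apply Filter.isBoundedUnder_of
    refine ⟨1, fun n => ?_⟩
    have h1 := hone n
    nlinarith [sq_nonneg ‖((fn n : WithLp 2 (Hp × Hm))).ofLp.2‖]
  calc (0:ℝ) < γ / 2 := by positivity
    _ ≤ _ := Filter.le_liminf_of_le hcb hev2
end
end

section
/- Let H and K be complex Hilbert spaces, let S be a self-adjoint operator in H, and let T : dom S → K be a linear map such that ‖T f‖² ≤ a‖f‖² + b‖S f‖² for all f ∈ dom S, where a, b ≥ 0 and b < 1. If λ ∈ ρ(S) satisfies |λ − t| > √(a + b t²) for every t ∈ σ(S), then the everywhere-defined operator T(S − λ)⁻¹ : H → K is bounded with ‖T(S − λ)⁻¹‖ ≤ sup_{t ∈ σ(S)} √(a + b t²)/|λ − t| < 1. -/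
noncomputable section

open Filter Topology

variable {H K : Type*}
  [NormedAddCommGroup H] [InnerProductSpace ℂ H] [CompleteSpace H]
  [NormedAddCommGroup K] [InnerProductSpace ℂ K] [CompleteSpace K]

namespace Stmt9Aux

open ComplexConjugate ContinuousLinearMap

local notation "⟪" x ", " y "⟫" => @inner ℂ _ _ x y

variable {S : H →ₗ.[ℂ] H} {lam mu nu : ℂ} {R Ra Rb : H →L[ℂ] H}

lemma pmap_apply_congr {S T : H →ₗ.[ℂ] H} (h : T = S) {x : H} (hx : x ∈ T.domain) :
    T ⟨x, hx⟩ = S ⟨x, h ▸ hx⟩ := by subst h; rfl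

omit [CompleteSpace H] in
lemma res_mem (hR : ResolventAt S lam R) (f : H) : R f ∈ S.domain := (hR.1 f).choose

omit [CompleteSpace H] in
lemma res_S_apply (hR : ResolventAt S lam R) (f : H) (hf : R f ∈ S.domain) :
    S ⟨R f, hf⟩ = f + lam • R f := by
  obtain ⟨h, hh⟩ := hR.1 f
  rw [sub_eq_iff_eq_add] at hh
  rw [hh, add_comm]

omit [CompleteSpace H] in
lemma res_inj (hR : ResolventAt S lam R) : Function.Injective R := by
  intro f g hfg
  obtain ⟨h1, hh1⟩ := hR.1 f
  obtain ⟨h2, hh2⟩ := hR.1 g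
  have hs : (S ⟨R f, h1⟩ : H) = S ⟨R g, h2⟩ := by congr 1; exact Subtype.ext hfg
  rw [← hh1, ← hh2, hs, hfg]

omit [CompleteSpace H] in
lemma res_id (hRa : ResolventAt S mu Ra) (hRb : ResolventAt S nu Rb) (f : H) :
    Rb f = Ra f + (nu - mu) • Ra (Rb f) := by
  have h1 := hRa.2 ⟨Rb f, res_mem hRb f⟩
  rw [res_S_apply hRb f (res_mem hRb f)] at h1
  have : f + nu • Rb f - mu • Rb f = f + (nu - mu) • Rb f := by module
  rw [this, map_add, map_smul] at h1
  exact h1.symm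

omit [CompleteSpace H] in
lemma res_unique (hRa : ResolventAt S mu Ra) (hRb : ResolventAt S mu Rb) : Ra = Rb := by
  ext f
  have := res_id hRa hRb f
  simpa using this.symm

omit [CompleteSpace H] in
lemma res_comm (hRa : ResolventAt S mu Ra) (hRb : ResolventAt S nu Rb) (f : H) :
    Ra (Rb f) = Rb (Ra f) := by
  by_cases h : mu = nu
  · subst h
    rw [res_unique hRa hRb]
  · have h1 := res_id hRa hRb f
    have h2 := res_id hRb hRa f
    have key : (nu - mu) • Ra (Rb f) = (nu - mu) • Rb (Ra f) := by
      have e1 : (nu - mu) • Ra (Rb f) = Rb f - Ra f :=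
        eq_sub_of_add_eq (by rw [add_comm]; exact h1.symm)
      have e2 : (mu - nu) • Rb (Ra f) = Ra f - Rb f :=
        eq_sub_of_add_eq (by rw [add_comm]; exact h2.symm)
      have e3 : (nu - mu) • Rb (Ra f) = -((mu - nu) • Rb (Ra f)) := by module
      rw [e1, e3, e2, neg_sub]
    exact smul_right_injective H (sub_ne_zero.mpr (fun hh => h hh.symm)) key

lemma sa_symm (S : H →ₗ.[ℂ] H) (hS : IsSelfAdjoint S) (x y : S.domain) :
    ⟪(S x : H), (y : H)⟫ = ⟪(x : H), S y⟫ := by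
  have hd : Dense (S.domain : Set H) := hS.dense_domain
  have h : S.adjoint = S := hS
  have hx : (x : H) ∈ S.adjoint.domain := h.symm ▸ x.2
  have h2 := LinearPMap.adjoint_isFormalAdjoint hd ⟨(x : H), hx⟩ y
  rw [pmap_apply_congr h hx] at h2
  exact h2

lemma sa_mem (S : H →ₗ.[ℂ] H) (hS : IsSelfAdjoint S) (v w : H)
    (hw : ∀ g : S.domain, ⟪w, (g : H)⟫ = ⟪v, S g⟫) :
    ∃ hv : v ∈ S.domain, S ⟨v, hv⟩ = w := by
  have hd : Dense (S.domain : Set H) := hS.dense_domain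
  have h : S.adjoint = S := hS
  have hv' : v ∈ S.adjoint.domain :=
    LinearPMap.mem_adjoint_domain_of_exists v ⟨w, hw⟩
  have h2 : S.adjoint ⟨v, hv'⟩ = w :=
    LinearPMap.adjoint_apply_eq hd _ (fun g => hw g)
  rw [pmap_apply_congr h hv'] at h2
  exact ⟨h ▸ hv', h2⟩

lemma res_adjoint (hS : IsSelfAdjoint S) (hR : ResolventAt S lam R) :
    ResolventAt S (conj lam) (adjoint R) := by
  constructor
  · intro f
    have key : ∀ g : S.domain, ⟪f + conj lam • adjoint R f, (g : H)⟫ = ⟪adjoint R f, S g⟫ := by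
      intro g
      have h1 : ⟪adjoint R f, (S g : H)⟫
          = ⟪adjoint R f, (S g : H) - lam • (g : H)⟫ + lam * ⟪adjoint R f, (g : H)⟫ := by
        rw [inner_sub_right, inner_smul_right]; ring
      rw [h1, adjoint_inner_left, hR.2 g, inner_add_left, inner_smul_left]
      rw [Complex.conj_conj]
    obtain ⟨hv, heq⟩ := sa_mem S hS _ _ key
    exact ⟨hv, by rw [heq]; module⟩
  · intro g
    apply ext_inner_right ℂ
    intro h
    rw [adjoint_inner_left, inner_sub_left, inner_smul_left, Complex.conj_conj,
      sa_symm S hS g ⟨R h, res_mem hR h⟩, res_S_apply hR h (res_mem hR h),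
      inner_add_right, inner_smul_right]
    ring

lemma res_normal (hS : IsSelfAdjoint S) (hR : ResolventAt S lam R) : IsStarNormal R := by
  constructor
  ext f
  rw [ContinuousLinearMap.mul_apply, ContinuousLinearMap.mul_apply, star_eq_adjoint]
  exact res_comm (res_adjoint hS hR) hR f

omit [CompleteSpace H] in
/-- Forward spectral mapping: a nonzero point of the spectrum of the resolvent gives a
point of the spectrum of `S`. -/
lemma spec_of_res_spec (hR : ResolventAt S lam R) {r : ℂ} (hr : r ≠ 0)
    (hrs : r ∈ spectrum ℂ R) : (lam + r⁻¹) ∈ Spec S := by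
  by_contra ht
  simp only [Spec, Set.mem_setOf_eq, not_not] at ht
  obtain ⟨Rt, hRt⟩ := ht
  set t : ℂ := lam + r⁻¹ with htdef
  have h1' : ∀ f, R (Rt f) = r • Rt f - r • R f := by
    intro f
    have h := res_id hR hRt f
    have he : t - lam = r⁻¹ := by rw [htdef]; ring
    rw [he] at h
    have h2 := congrArg (fun x : H => r • x) h
    simp only [smul_add, smul_smul] at h2
    rw [mul_inv_cancel₀ hr, one_smul] at h2
    rw [h2]; abel
  have h2' : ∀ f, Rt (R f) = r • Rt f - r • R f := by
    intro f
    rw [← res_comm hR hRt f]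
    exact h1' f
  set U : H →L[ℂ] H := r⁻¹ • (1 : H →L[ℂ] H) + (r⁻¹ * r⁻¹) • Rt with hUdef
  have hUl : (algebraMap ℂ (H →L[ℂ] H) r - R) * U = 1 := by
    ext f
    simp only [ContinuousLinearMap.mul_apply, ContinuousLinearMap.sub_apply, ContinuousLinearMap.one_apply, hUdef, ContinuousLinearMap.add_apply, ContinuousLinearMap.smul_apply,
      Algebra.algebraMap_eq_smul_one, map_add, map_smul]
    rw [h1' f]
    match_scalars <;> field_simp <;> ring
  have hUr : U * (algebraMap ℂ (H →L[ℂ] H) r - R) = 1 := by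
    ext f
    simp only [ContinuousLinearMap.mul_apply, ContinuousLinearMap.sub_apply, ContinuousLinearMap.one_apply, hUdef, ContinuousLinearMap.add_apply, ContinuousLinearMap.smul_apply,
      Algebra.algebraMap_eq_smul_one, map_add, map_smul, map_sub]
    rw [h2' f]
    match_scalars <;> field_simp <;> ring
  have : IsUnit (algebraMap ℂ (H →L[ℂ] H) r - R) :=
    ⟨⟨_, U, hUl, hUr⟩, rfl⟩
  exact (spectrum.mem_iff.mp hrs) this

omit [CompleteSpace H] in
/-- Backward spectral mapping: a point of the spectrum of `S` gives a point of the
spectrum of the resolvent. -/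
lemma res_spec_of_spec (hR : ResolventAt S lam R) {t : ℂ} (ht : t ∈ Spec S) :
    (t - lam)⁻¹ ∈ spectrum ℂ R := by
  have htlam : t ≠ lam := by
    intro h
    exact ht (h ▸ ⟨R, hR⟩)
  have hd : t - lam ≠ 0 := sub_ne_zero.mpr htlam
  set r : ℂ := (t - lam)⁻¹ with hrdef
  have hr0 : r ≠ 0 := inv_ne_zero hd
  have hr1 : r * (t - lam) = 1 := inv_mul_cancel₀ hd
  by_contra hrs
  rw [spectrum.notMem_iff] at hrs
  obtain ⟨u, hu⟩ := hrs
  set Q : H →L[ℂ] H := ↑u⁻¹ with hQdef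
  have hq1 : ∀ f : H, r • Q f - R (Q f) = f := by
    intro f
    have := congrArg (fun A : H →L[ℂ] H => A f) u.mul_inv
    simpa [hu, Algebra.algebraMap_eq_smul_one, ContinuousLinearMap.mul_apply, ContinuousLinearMap.sub_apply] using this
  have hq2 : ∀ f : H, r • Q f - Q (R f) = f := by
    intro f
    have := congrArg (fun A : H →L[ℂ] H => A f) u.inv_mul
    simpa [hu, Algebra.algebraMap_eq_smul_one, ContinuousLinearMap.mul_apply, ContinuousLinearMap.sub_apply, map_sub, map_smul] using this
  have hRQ : ∀ f : H, R (Q f) = r • Q f - f := by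
    intro f
    have h := hq1 f
    rw [sub_eq_iff_eq_add] at h
    rw [h]; abel
  have hQR : ∀ f : H, Q (R f) = R (Q f) := by
    intro f
    have h := (hq1 f).trans (hq2 f).symm
    exact (sub_right_injective h).symm
  refine ht ⟨r • (R.comp Q), ?_, ?_⟩
  · intro f
    have hm : (r • (R.comp Q)) f ∈ S.domain := by
      simp only [ContinuousLinearMap.smul_apply, comp_apply]
      exact S.domain.smul_mem r (res_mem hR (Q f))
    refine ⟨hm, ?_⟩
    have hsub : (⟨(r • (R.comp Q)) f, hm⟩ : S.domain)
        = r • (⟨R (Q f), res_mem hR (Q f)⟩ : S.domain) := by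
      apply Subtype.ext
      simp
    rw [hsub, S.map_smul, res_S_apply hR (Q f) (res_mem hR (Q f))]
    simp only [ContinuousLinearMap.smul_apply, comp_apply]
    rw [hRQ f]
    match_scalars
    · linear_combination (-r) * hr1
    · linear_combination hr1
  · intro g
    simp only [ContinuousLinearMap.smul_apply, comp_apply]
    have e1 : (S g : H) - t • (g : H) = ((S g : H) - lam • g) - (t - lam) • g := by module
    rw [e1, map_sub Q, map_smul Q, map_sub R, map_smul R, ← hQR ((S g : H) - lam • (g : H)),
      hR.2 g, hRQ (g : H)]
    match_scalars
    · linear_combination (-r) * hr1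
    · linear_combination hr1

/-- If `0` is in the spectrum of the (injective, normal) resolvent, it is not isolated. -/
lemma zero_acc (hS : IsSelfAdjoint S) (hR : ResolventAt S lam R)
    (h0 : (0 : ℂ) ∈ spectrum ℂ R) {ε : ℝ} (hε : 0 < ε) :
    ∃ r ∈ spectrum ℂ R, r ≠ 0 ∧ ‖r‖ < ε := by
  have hN : IsStarNormal R := res_normal hS hR
  by_contra hc
  push_neg at hc
  have hc' : ∀ r ∈ spectrum ℂ R, r ≠ 0 → ε ≤ ‖r‖ := fun r h1 h2 => hc r h1 h2
  set h : ℂ → ℂ := fun z => conj z * ((((max ‖z‖ (ε/2)) ^ 2)⁻¹ : ℝ) : ℂ) with hh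
  have hcont : Continuous h := by
    apply Continuous.mul
    · exact Complex.continuous_conj
    · apply Complex.continuous_ofReal.comp
      apply Continuous.inv₀
      · exact (continuous_norm.max continuous_const).pow 2
      · intro z
        have hz : (0:ℝ) < max ‖z‖ (ε/2) := lt_max_of_lt_right (by linarith)
        exact pow_ne_zero 2 (ne_of_gt hz)
  have hkey : (spectrum ℂ R).EqOn (fun z => z * h z * z) (fun z => z) := by
    intro z hz
    by_cases h0' : z = 0
    · simp [h0', hh]
    · have hεz : ε ≤ ‖z‖ := hc' z hz h0'
      have hmax : max ‖z‖ (ε/2) = ‖z‖ := max_eq_left (by linarith)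
      have hz0 : ‖z‖ ≠ 0 := norm_ne_zero_iff.mpr h0'
      simp only [hh, hmax]
      have hzc : z * conj z = ((‖z‖ ^ 2 : ℝ) : ℂ) := by
        rw [Complex.mul_conj]
        norm_cast
        simp [Complex.normSq_eq_norm_sq]
      have e : z * ((conj z) * ((((‖z‖ ^ 2)⁻¹ : ℝ)) : ℂ)) * z
          = (z * conj z) * ((((‖z‖ ^ 2)⁻¹ : ℝ)) : ℂ) * z := by ring
      show z * ((conj z) * ((((‖z‖ ^ 2)⁻¹ : ℝ)) : ℂ)) * z = z
      rw [e, hzc, ← Complex.ofReal_mul, mul_inv_cancel₀ (by positivity)]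
      simp
  have hD : R * cfc h R * R = R := by
    have e1 : cfc (fun z : ℂ => z * h z * z) R = R * cfc h R * R := by
      rw [cfc_mul (fun z : ℂ => z * h z) (fun z : ℂ => z) R
          ((continuous_id.mul hcont).continuousOn) (continuous_id.continuousOn),
        cfc_mul (fun z : ℂ => z) h R continuous_id.continuousOn hcont.continuousOn,
        cfc_id' ℂ R]
    rw [← e1, cfc_congr hkey, cfc_id' ℂ R]
  have hDR : cfc h R * R = 1 := by
    have h1 : R * (cfc h R * R - 1) = 0 := by
      rw [mul_sub, ← mul_assoc, hD, mul_one, sub_self]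
    have h2 : ∀ f : H, (cfc h R * R - 1) f = 0 := by
      intro f
      apply res_inj hR
      have := congrArg (fun A : H →L[ℂ] H => A f) h1
      simpa [ContinuousLinearMap.mul_apply] using this
    have h3 : cfc h R * R - 1 = 0 := by ext f; simpa using h2 f
    rw [sub_eq_zero] at h3
    exact h3
  have hRD : R * cfc h R = 1 := by
    have := cfc_commute_cfc h (fun z : ℂ => z) R
    rw [cfc_id' ℂ R] at this
    rw [← this.eq, hDR]
  exact (spectrum.not_isUnit_of_zero_mem ℂ h0) ⟨⟨R, cfc h R, hRD, hDR⟩, rfl⟩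

end Stmt9Aux

/-- **Lemma 3.1.** If `S` is self-adjoint, `‖T f‖² ≤ a ‖f‖² + b ‖S f‖²` on `dom S` with
`b < 1`, and `lam ∈ ρ(S)` satisfies `|lam - t| > √(a + b t²)` for every `t ∈ σ(S)`, then
`‖T (S - lam)⁻¹‖ ≤ sup_{t ∈ σ(S)} √(a + b t²)/|lam - t| < 1`. -/
theorem stmt9
    (S : H →ₗ.[ℂ] H) (hS : IsSelfAdjoint S)
    (T : S.domain →ₗ[ℂ] K)
    (a b : ℝ) (ha : 0 ≤ a) (hb0 : 0 ≤ b) (hb1 : b < 1)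
    (hT : ∀ f : S.domain, ‖T f‖ ^ 2 ≤ a * ‖(f : H)‖ ^ 2 + b * ‖S f‖ ^ 2)
    (lam : ℂ) (R : H →L[ℂ] H) (hR : ResolventAt S lam R)
    (hsep : ∀ t ∈ Spec S, Real.sqrt (a + b * ‖t‖ ^ 2) < ‖lam - t‖)
    (C : ℝ)
    (hC : C = sSup ((fun t : ℂ => Real.sqrt (a + b * ‖t‖ ^ 2) / ‖lam - t‖) '' Spec S)) :
    (∀ (f : H) (hf : R f ∈ S.domain), ‖T ⟨R f, hf⟩‖ ≤ C * ‖f‖) ∧ C < 1 := by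
  classical
  open ComplexConjugate ContinuousLinearMap Stmt9Aux in
  set v : ℂ → ℝ := fun t => Real.sqrt (a + b * ‖t‖ ^ 2) / ‖lam - t‖ with hv
  have hvnonneg : ∀ t, 0 ≤ v t := fun t => by positivity
  have hvlt1 : ∀ t ∈ Spec S, v t < 1 := by
    intro t ht
    have h1 := hsep t ht
    have h2 : 0 < ‖lam - t‖ := lt_of_le_of_lt (Real.sqrt_nonneg _) h1
    exact (div_lt_one h2).mpr h1
  have hbdd : BddAbove (v '' Spec S) := ⟨1, by rintro x ⟨t, ht, rfl⟩; exact (hvlt1 t ht).le⟩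
  have hC0 : 0 ≤ C := by
    rw [hC]
    apply Real.sSup_nonneg
    rintro x ⟨t, ht, rfl⟩
    exact hvnonneg t
  have hvleC : ∀ t ∈ Spec S, v t ≤ C := by
    intro t ht
    rw [hC]
    exact le_csSup hbdd ⟨t, ht, rfl⟩
  have hN : IsStarNormal R := res_normal hS hR
  -- the comparison operator
  set W : H →L[ℂ] H := 1 + lam • R with hW
  have hWf : ∀ f : H, W f = f + lam • R f := by
    intro f
    simp [hW]
  set M : H →L[ℂ] H := ((a : ℝ) : ℂ) • (star R * R) + ((b : ℝ) : ℂ) • (star W * W) with hM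
  have hMinner : ∀ f : H,
      (inner ℂ f (M f) : ℂ) = ((a * ‖R f‖ ^ 2 + b * ‖W f‖ ^ 2 : ℝ) : ℂ) := by
    intro f
    rw [hM]
    simp only [ContinuousLinearMap.add_apply, ContinuousLinearMap.smul_apply, ContinuousLinearMap.mul_apply, inner_add_right, inner_smul_right,
      star_eq_adjoint, adjoint_inner_right, inner_self_eq_norm_sq_to_K]
    push_cast
    rfl
  have hMsa : IsSelfAdjoint M := by
    rw [hM]
    show star _ = _
    simp [star_add, star_smul, star_mul, star_star, Complex.conj_ofReal, mul_assoc]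
  -- the symbol of M
  set g : ℂ → ℂ := fun z => ((a : ℝ) : ℂ) * (conj z * z)
      + ((b : ℝ) : ℂ) * (conj (1 + lam * z) * (1 + lam * z)) with hg
  have hgcont : Continuous g := by
    have h1 : Continuous fun z : ℂ => 1 + lam * z :=
      continuous_const.add (continuous_const.mul continuous_id)
    exact (continuous_const.mul (Complex.continuous_conj.mul continuous_id)).add
      (continuous_const.mul ((Complex.continuous_conj.comp h1).mul h1))
  set grv : ℂ → ℝ := fun z => a * ‖z‖ ^ 2 + b * ‖1 + lam * z‖ ^ 2 with hgrv
  have hgrv0 : ∀ z, 0 ≤ grv z := fun z => by positivity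
  have hgval : ∀ z : ℂ, g z = ((grv z : ℝ) : ℂ) := by
    intro z
    have hzc : ∀ w : ℂ, conj w * w = ((‖w‖ ^ 2 : ℝ) : ℂ) := by
      intro w
      rw [mul_comm, Complex.mul_conj]
      norm_cast
      simp [Complex.normSq_eq_norm_sq]
    rw [hg, hgrv]
    simp only [hzc]
    push_cast
    ring
  -- M = cfc g R
  have hMg : M = cfc g R := by
    have e2 : cfc (fun z : ℂ => 1 + lam * z) R = W := by
      rw [cfc_const_add (1 : ℂ) (fun z : ℂ => lam * z) R
        (continuous_const.mul continuous_id).continuousOn, cfc_const_mul_id lam R, map_one]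
    have e2s : cfc (fun z : ℂ => conj (1 + lam * z)) R = star W := by
      rw [← e2, ← cfc_star (fun z : ℂ => 1 + lam * z) R]
      rfl
    have hstar : cfc (fun z : ℂ => conj z) R = star R := by
      have h := cfc_star (fun z : ℂ => z) R
      rw [cfc_id' ℂ R] at h
      exact h
    have e1 : cfc (fun z : ℂ => conj z * z) R = star R * R := by
      rw [cfc_mul (fun z : ℂ => conj z) (fun z : ℂ => z) R
        Complex.continuous_conj.continuousOn continuous_id.continuousOn,
        cfc_id' ℂ R, hstar]
    have h1c : Continuous fun z : ℂ => 1 + lam * z :=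
      continuous_const.add (continuous_const.mul continuous_id)
    have e3 : cfc (fun z : ℂ => conj (1 + lam * z) * (1 + lam * z)) R = star W * W := by
      rw [cfc_mul (fun z : ℂ => conj (1 + lam * z)) (fun z : ℂ => 1 + lam * z) R
        (Complex.continuous_conj.comp h1c).continuousOn h1c.continuousOn, e2s, e2]
    rw [hg, hM]
    rw [cfc_add R (fun z : ℂ => ((a : ℝ) : ℂ) * (conj z * z))
      (fun z : ℂ => ((b : ℝ) : ℂ) * (conj (1 + lam * z) * (1 + lam * z)))
      (continuous_const.mul (Complex.continuous_conj.mul continuous_id)).continuousOn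
      (continuous_const.mul ((Complex.continuous_conj.comp h1c).mul h1c)).continuousOn,
      cfc_const_mul ((a : ℝ) : ℂ) (fun z : ℂ => conj z * z) R
      (Complex.continuous_conj.mul continuous_id).continuousOn,
      cfc_const_mul ((b : ℝ) : ℂ) (fun z : ℂ => conj (1 + lam * z) * (1 + lam * z)) R
      ((Complex.continuous_conj.comp h1c).mul h1c).continuousOn, e1, e3]
  have hspecM : spectrum ℂ M = g '' spectrum ℂ R := by
    rw [hMg]
    exact cfc_map_spectrum g R hN hgcont.continuousOn
  -- value identification
  have hgrv_eq : ∀ r : ℂ, r ≠ 0 → grv r = (v (lam + r⁻¹)) ^ 2 := by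
    intro r hr0
    set t : ℂ := lam + r⁻¹ with htdef
    have hlt : lam - t = -r⁻¹ := by rw [htdef]; ring
    have hnt : ‖lam - t‖ = ‖r‖⁻¹ := by rw [hlt, norm_neg, norm_inv]
    have hrt : (1 : ℂ) + lam * r = r * t := by
      rw [htdef]
      field_simp
      ring
    have hr0' : (0:ℝ) < ‖r‖ := norm_pos_iff.mpr hr0
    have hab : 0 ≤ a + b * ‖t‖ ^ 2 := by positivity
    rw [hgrv, hv]
    simp only [hrt, norm_mul, hnt]
    rw [div_pow, Real.sq_sqrt hab]
    have hr2 : ‖r‖ ^ 2 ≠ 0 := by positivity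
    field_simp
  -- the main estimate on the symbol over the spectrum of R
  have hgle_ne : ∀ r ∈ spectrum ℂ R, r ≠ 0 → grv r ≤ C ^ 2 := by
    intro r hrs hr0
    have ht : (lam + r⁻¹) ∈ Spec S := spec_of_res_spec hR hr0 hrs
    rw [hgrv_eq r hr0]
    exact pow_le_pow_left₀ (hvnonneg _) (hvleC _ ht) 2
  have hgle : ∀ r ∈ spectrum ℂ R, grv r ≤ C ^ 2 := by
    intro r hrs
    by_cases hr0 : r = 0
    · subst hr0
      -- accumulate at 0
      have hgrv00 : grv 0 = b := by
        rw [hgrv]; simp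
      rw [hgrv00]
      have hch : ∀ n : ℕ, ∃ r' ∈ spectrum ℂ R, r' ≠ 0 ∧ ‖r'‖ < 1 / (n + 1) :=
        fun n => zero_acc hS hR hrs (by positivity)
      choose u hu1 hu2 hu3 using hch
      have hu0 : Tendsto u atTop (𝓝 0) := by
        rw [tendsto_zero_iff_norm_tendsto_zero]
        apply squeeze_zero (fun n => norm_nonneg _) (fun n => (hu3 n).le)
        exact tendsto_one_div_add_atTop_nhds_zero_nat
      have hcont2 : Continuous fun r : ℂ => b * ‖1 + lam * r‖ ^ 2 := by
        apply continuous_const.mul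
        exact (continuous_const.add (continuous_const.mul continuous_id)).norm.pow 2
      have hlim : Tendsto (fun n => b * ‖1 + lam * u n‖ ^ 2) atTop (𝓝 b) := by
        have := (hcont2.tendsto 0).comp hu0
        simpa [Function.comp_def] using this
      refine le_of_tendsto hlim (Filter.Eventually.of_forall fun n => ?_)
      calc b * ‖1 + lam * u n‖ ^ 2 ≤ grv (u n) := by
            have h0 : 0 ≤ a * ‖u n‖ ^ 2 := by positivity
            have he : grv (u n) = a * ‖u n‖ ^ 2 + b * ‖1 + lam * u n‖ ^ 2 := rfl
            rw [he]
            linarith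
        _ ≤ C ^ 2 := hgle_ne (u n) (hu1 n) (hu2 n)
    · exact hgle_ne r hrs hr0
  -- norm bound on M
  have hspec_norm : ∀ μ ∈ spectrum ℂ M, ‖μ‖ ≤ C ^ 2 := by
    intro μ hμ
    rw [hspecM] at hμ
    obtain ⟨r, hrs, rfl⟩ := hμ
    rw [hgval r]
    rw [Complex.norm_real, Real.norm_eq_abs, abs_of_nonneg (hgrv0 r)]
    exact hgle r hrs
  have hMnorm : ‖M‖ ≤ C ^ 2 := by
    have h1 : spectralRadius ℂ M = ‖M‖₊ := hMsa.spectralRadius_eq_nnnorm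
    have h2 : spectralRadius ℂ M ≤ ENNReal.ofReal (C ^ 2) := by
      rw [spectralRadius]
      apply iSup₂_le
      intro k hk
      rw [← ENNReal.ofReal_coe_nnreal, coe_nnnorm]
      exact ENNReal.ofReal_le_ofReal (hspec_norm k hk)
    rw [h1, ← ENNReal.ofReal_coe_nnreal, coe_nnnorm] at h2
    exact (ENNReal.ofReal_le_ofReal_iff (by positivity)).mp h2
  constructor
  · -- the norm estimate
    intro f hf
    have hTf := hT ⟨R f, hf⟩
    have hSRf : (S ⟨R f, hf⟩ : H) = W f := by
      rw [res_S_apply hR f hf, hWf]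
    rw [hSRf] at hTf
    have hinner : a * ‖R f‖ ^ 2 + b * ‖W f‖ ^ 2 ≤ C ^ 2 * ‖f‖ ^ 2 := by
      have h1 : a * ‖R f‖ ^ 2 + b * ‖W f‖ ^ 2 = Complex.re (inner ℂ f (M f) : ℂ) := by
        rw [hMinner f, Complex.ofReal_re]
      rw [h1]
      calc Complex.re (inner ℂ f (M f) : ℂ) ≤ ‖(inner ℂ f (M f) : ℂ)‖ := Complex.re_le_norm _
        _ ≤ ‖f‖ * ‖M f‖ := norm_inner_le_norm f (M f)
        _ ≤ ‖f‖ * (‖M‖ * ‖f‖) := by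
            apply mul_le_mul_of_nonneg_left (M.le_opNorm f) (norm_nonneg f)
        _ ≤ ‖f‖ * (C ^ 2 * ‖f‖) := by
            apply mul_le_mul_of_nonneg_left
              (mul_le_mul_of_nonneg_right hMnorm (norm_nonneg f)) (norm_nonneg f)
        _ = C ^ 2 * ‖f‖ ^ 2 := by ring
    have hfinal : ‖T ⟨R f, hf⟩‖ ^ 2 ≤ (C * ‖f‖) ^ 2 := by
      calc ‖T ⟨R f, hf⟩‖ ^ 2 ≤ a * ‖R f‖ ^ 2 + b * ‖W f‖ ^ 2 := hTf
        _ ≤ C ^ 2 * ‖f‖ ^ 2 := hinner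
        _ = (C * ‖f‖) ^ 2 := by ring
    exact le_of_pow_le_pow_left₀ two_ne_zero (mul_nonneg hC0 (norm_nonneg f)) hfinal
  · -- strict inequality
    by_cases hSpec : (Spec S).Nonempty
    · obtain ⟨t₁, ht₁⟩ := hSpec
      have hr₁ : (t₁ - lam)⁻¹ ∈ spectrum ℂ R := res_spec_of_spec hR ht₁
      have hMne : (spectrum ℂ M).Nonempty := by
        rw [hspecM]
        exact ⟨g _, Set.mem_image_of_mem g hr₁⟩
      have hcomp : IsCompact (spectrum ℂ M) := spectrum.isCompact M
      obtain ⟨μ₀, hμ₀mem, hμ₀max⟩ :=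
        hcomp.exists_isMaxOn hMne Complex.continuous_re.continuousOn
      obtain ⟨r₀, hr₀mem, hr₀eq⟩ := hspecM ▸ hμ₀mem
      have hre : Complex.re μ₀ = grv r₀ := by
        rw [← hr₀eq, hgval r₀, Complex.ofReal_re]
      have hlam_ne : ∀ t ∈ Spec S, t ≠ lam := by
        intro t ht h
        exact ht (h ▸ ⟨R, hR⟩)
      have hclt1 : grv r₀ < 1 := by
        by_cases h0 : r₀ = 0
        · subst h0
          have : grv 0 = b := by rw [hgrv]; simp
          rw [this]
          exact hb1
        · have ht₀ : (lam + r₀⁻¹) ∈ Spec S := spec_of_res_spec hR h0 hr₀mem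
          rw [hgrv_eq r₀ h0]
          exact pow_lt_one₀ (hvnonneg _) (hvlt1 _ ht₀) two_ne_zero
      have hvle : ∀ t ∈ Spec S, v t ≤ Real.sqrt (grv r₀) := by
        intro t ht
        have hne : t - lam ≠ 0 := sub_ne_zero.mpr (hlam_ne t ht)
        have hrt : (t - lam)⁻¹ ∈ spectrum ℂ R := res_spec_of_spec hR ht
        have hrt0 : (t - lam)⁻¹ ≠ 0 := inv_ne_zero hne
        have hteq : lam + ((t - lam)⁻¹)⁻¹ = t := by
          rw [inv_inv]; ring
        have h1 : (v t) ^ 2 = grv ((t - lam)⁻¹) := by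
          rw [hgrv_eq _ hrt0, hteq]
        have h2 : grv ((t - lam)⁻¹) ≤ grv r₀ := by
          have h3 : g ((t - lam)⁻¹) ∈ spectrum ℂ M := by
            rw [hspecM]
            exact Set.mem_image_of_mem g hrt
          have h4 := hμ₀max h3
          rw [hre] at h4
          rw [hgval] at h4
          simpa using h4
        have h5 : (v t) ^ 2 ≤ grv r₀ := h1 ▸ h2
        calc v t = Real.sqrt ((v t) ^ 2) := (Real.sqrt_sq (hvnonneg t)).symm
          _ ≤ Real.sqrt (grv r₀) := Real.sqrt_le_sqrt h5
      have hCle : C ≤ Real.sqrt (grv r₀) := by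
        rw [hC]
        apply csSup_le (Set.Nonempty.image v ⟨t₁, ht₁⟩)
        rintro x ⟨t, ht, rfl⟩
        exact hvle t ht
      have hsq : Real.sqrt (grv r₀) < 1 := by
        rw [show (1:ℝ) = Real.sqrt 1 by rw [Real.sqrt_one]]
        exact Real.sqrt_lt_sqrt (hgrv0 r₀) hclt1
      exact lt_of_le_of_lt hCle hsq
    · rw [Set.not_nonempty_iff_eq_empty] at hSpec
      rw [hC, hSpec, Set.image_empty, Real.sSup_empty]
      exact one_pos
end
end

section
/- Let a ≥ 0 and 0 ≤ b < 1. Then ⋃_{t ∈ ℝ} {λ ∈ ℂ : |λ − t| ≤ √(a + b t²)} = {λ ∈ ℂ : (Im λ)² ≤ a + (b/(1 − b))·(Re λ)²}. -/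
/-- **Lemma 3.1, equality (2.2).** For `a ≥ 0` and `0 ≤ b < 1`, the union over all real
`t` of the closed discs centered at `t` of radius `√(a + b t²)` equals the closed
hyperbolic region `{lam : (Im lam)² ≤ a + (b/(1-b))·(Re lam)²}`. -/
theorem stmt10 (a b : ℝ) (ha : 0 ≤ a) (hb0 : 0 ≤ b) (hb1 : b < 1) :
    (⋃ t : ℝ, {lam : ℂ | ‖lam - (t : ℂ)‖ ≤ Real.sqrt (a + b * t ^ 2)}) =
      {lam : ℂ | lam.im ^ 2 ≤ a + b / (1 - b) * lam.re ^ 2} := by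
  have h1b : (0:ℝ) < 1 - b := by linarith
  ext lam
  simp only [Set.mem_iUnion, Set.mem_setOf_eq]
  constructor
  · rintro ⟨t, ht⟩
    have hnn : 0 ≤ a + b * t ^ 2 := by positivity
    have hsq : ‖lam - (t : ℂ)‖ ^ 2 ≤ a + b * t ^ 2 := by
      have := pow_le_pow_left₀ (norm_nonneg _) ht 2
      rwa [Real.sq_sqrt hnn] at this
    have hexp : ‖lam - (t : ℂ)‖ ^ 2 = (lam.re - t) ^ 2 + lam.im ^ 2 := by
      rw [Complex.sq_norm, Complex.normSq_apply]
      simp [Complex.sub_re, Complex.sub_im]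
      ring
    rw [hexp] at hsq
    have key : b / (1 - b) * lam.re ^ 2 - (b * t ^ 2 - (lam.re - t) ^ 2) ≥ 0 := by
      have h := sq_nonneg ((1 - b) * t - lam.re)
      have : (1 - b) * (b / (1 - b) * lam.re ^ 2) = b * lam.re ^ 2 := by
        field_simp
      nlinarith [sq_nonneg ((1 - b) * t - lam.re)]
    nlinarith
  · intro h
    refine ⟨lam.re / (1 - b), ?_⟩
    set t := lam.re / (1 - b) with htdef
    have hnn : 0 ≤ a + b * t ^ 2 := by positivity
    rw [show ‖lam - (t : ℂ)‖ = Real.sqrt ((lam.re - t) ^ 2 + lam.im ^ 2) by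
      rw [Complex.norm_def, Complex.normSq_apply]
      simp [Complex.sub_re, Complex.sub_im]
      ring_nf]
    apply Real.sqrt_le_sqrt
    have ht : lam.re = (1 - b) * t := by rw [htdef]; field_simp [h1b.ne']
    have hdiv : b / (1 - b) * lam.re ^ 2 = b * (1 - b) * t ^ 2 := by
      rw [ht]; field_simp
    rw [hdiv] at h
    have hre : (lam.re - t) ^ 2 = b ^ 2 * t ^ 2 := by rw [ht]; ring
    nlinarith [sq_nonneg t]
end

section
/- Let H be a complex Hilbert space, let S be a self-adjoint operator in H, and let T : dom S → H be a linear map such that ‖T f‖² ≤ a‖f‖² + b‖S f‖² for all f ∈ dom S, where a, b ≥ 0 and b < 1. Let σ₋ < σ₊ be real numbers with (σ₋, σ₊) ∩ σ(S) = ∅, and suppose σ₋' := σ₋ + √(a + b σ₋²) < σ₊ − √(a + b σ₊²) =: σ₊'. Then every λ ∈ ℂ with σ₋' < Re λ < σ₊' belongs to ρ(S + T), where S + T is the operator with domain dom S given by f ↦ S f + T f. -/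
noncomputable section

open Filter Topology

section Stmt14Aux
open scoped InnerProductSpace

variable {H' : Type*} [NormedAddCommGroup H'] [InnerProductSpace ℂ H'] [CompleteSpace H']
variable {S : H' →ₗ.[ℂ] H'}

namespace Stmt14Aux

omit [CompleteSpace H'] in
lemma res_mem {t : ℂ} {R : H' →L[ℂ] H'} (hR : ResolventAt S t R) (f : H') : R f ∈ S.domain :=
  (hR.1 f).choose

omit [CompleteSpace H'] in
lemma res_eq {t : ℂ} {R : H' →L[ℂ] H'} (hR : ResolventAt S t R) (f : H') (h : R f ∈ S.domain) :
    S ⟨R f, h⟩ = f + t • R f := by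
  have h2 := (hR.1 f).choose_spec
  have : (⟨R f, h⟩ : S.domain) = ⟨R f, (hR.1 f).choose⟩ := rfl
  rw [this, sub_eq_iff_eq_add'] at *
  rw [h2]; abel

omit [CompleteSpace H'] in
lemma res_id {t t' : ℂ} {R R' : H' →L[ℂ] H'} (hR : ResolventAt S t R)
    (hR' : ResolventAt S t' R') (g : H') :
    R g + (t' - t) • R (R' g) = R' g := by
  have hm := res_mem hR' g
  have he := res_eq hR' g hm
  have hl := hR.2 ⟨R' g, hm⟩
  simp only [LinearPMap.mk_apply] at hl
  rw [he] at hl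
  have : g + t' • R' g - t • R' g = g + (t' - t) • R' g := by
    rw [sub_smul]; abel
  rw [this, map_add, map_smul] at hl
  linear_combination (norm := abel) hl

omit [CompleteSpace H'] in
lemma res_symm (hsymm : ∀ x y : S.domain, ⟪(S x : H'), (y : H')⟫_ℂ = ⟪(x : H'), (S y : H')⟫_ℂ)
    {t : ℝ} {R : H' →L[ℂ] H'} (hR : ResolventAt S (t : ℂ) R) (x y : H') :
    ⟪R x, y⟫_ℂ = ⟪x, R y⟫_ℂ := by
  have hmx := res_mem hR x
  have hmy := res_mem hR y
  have hex := res_eq hR x hmx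
  have hey := res_eq hR y hmy
  have hx' : x = (S ⟨R x, hmx⟩ : H') - (t : ℂ) • R x := by rw [hex]; abel
  have hy' : y = (S ⟨R y, hmy⟩ : H') - (t : ℂ) • R y := by rw [hey]; abel
  calc ⟪R x, y⟫_ℂ = ⟪R x, (S ⟨R y, hmy⟩ : H') - (t : ℂ) • R y⟫_ℂ := by rw [← hy']
    _ = ⟪R x, (S ⟨R y, hmy⟩ : H')⟫_ℂ - (t : ℂ) * ⟪R x, R y⟫_ℂ := by
        rw [inner_sub_right, inner_smul_right]
    _ = ⟪(S ⟨R x, hmx⟩ : H'), R y⟫_ℂ - (t : ℂ) * ⟪R x, R y⟫_ℂ := by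
        rw [hsymm ⟨R x, hmx⟩ ⟨R y, hmy⟩]
    _ = ⟪(S ⟨R x, hmx⟩ : H') - (t : ℂ) • R x, R y⟫_ℂ := by
        rw [inner_sub_left, inner_smul_left, Complex.conj_ofReal]
    _ = ⟪x, R y⟫_ℂ := by rw [← hx']

lemma res_spectrum {sm sp μ : ℝ} (hsm : sm < μ) (hsp : μ < sp)
    (hres : ∀ t : ℝ, t ∈ Set.Ioo sm sp → ∃ R : H' →L[ℂ] H', ResolventAt S (t : ℂ) R)
    {R₀ : H' →L[ℂ] H'} (hR₀ : ResolventAt S (μ : ℂ) R₀) :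
    spectrum ℝ R₀ ⊆ Set.Icc (-(μ - sm)⁻¹) ((sp - μ)⁻¹) := by
  intro s hs
  by_contra hmem
  apply spectrum.notMem_iff.mpr ?_ hs
  simp only [Set.mem_Icc, not_and_or, not_le] at hmem
  have hdm : (0:ℝ) < μ - sm := by linarith
  have hdp : (0:ℝ) < sp - μ := by linarith
  have hs0 : s ≠ 0 := by
    rcases hmem with h | h
    · intro h0; rw [h0] at h
      have := inv_pos.mpr hdm; linarith
    · intro h0; rw [h0] at h
      have := inv_pos.mpr hdp; linarith
  have htmem : μ + s⁻¹ ∈ Set.Ioo sm sp := by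
    rcases hmem with h | h
    · have hsneg : s < 0 := by have := inv_pos.mpr hdm; linarith
      have h1 : (μ - sm)⁻¹ < -s := by linarith
      have h2 : (-s)⁻¹ < μ - sm := inv_lt_of_inv_lt₀ hdm h1
      rw [inv_neg] at h2
      have h3 : s⁻¹ < 0 := inv_neg''.mpr hsneg
      exact ⟨by linarith, by linarith⟩
    · have hspos : (0:ℝ) < s := lt_trans (inv_pos.mpr hdp) h
      have h2 : s⁻¹ < sp - μ := inv_lt_of_inv_lt₀ hdp h
      have h3 : (0:ℝ) < s⁻¹ := inv_pos.mpr hspos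
      exact ⟨by linarith, by linarith⟩
  obtain ⟨R₁, hR₁⟩ := hres (μ + s⁻¹) htmem
  have hsc : (s:ℂ) ≠ 0 := by exact_mod_cast hs0
  set Y : H' →L[ℂ] H' := ((s:ℂ))⁻¹ • 1 + (((s:ℂ))⁻¹ * ((s:ℂ))⁻¹) • R₁ with hY
  have hk' : ∀ g : H', ((s:ℂ))⁻¹ • R₀ (R₁ g) = R₁ g - R₀ g := by
    intro g
    have h5 := res_id hR₀ hR₁ g
    have hcast : ((μ + s⁻¹ : ℝ) : ℂ) - ((μ:ℝ):ℂ) = ((s:ℂ))⁻¹ := by push_cast; ring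
    rw [hcast] at h5
    exact eq_sub_of_add_eq' h5
  have hl' : ∀ g : H', ((s:ℂ))⁻¹ • R₁ (R₀ g) = R₁ g - R₀ g := by
    intro g
    have h5 := res_id hR₁ hR₀ g
    have hcast : ((μ:ℝ):ℂ) - ((μ + s⁻¹ : ℝ) : ℂ) = -((s:ℂ))⁻¹ := by push_cast; ring
    rw [hcast, neg_smul] at h5
    have h7 := eq_sub_of_add_eq' h5
    rw [neg_eq_iff_eq_neg] at h7
    rw [h7, neg_sub]
  have hYapp : ∀ x : H', Y x = ((s:ℂ))⁻¹ • x + ((s:ℂ)⁻¹ * (s:ℂ)⁻¹) • R₁ x := by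
    intro x
    rw [hY]
    simp [ContinuousLinearMap.add_apply, ContinuousLinearMap.smul_apply]
  have h1 : (algebraMap ℝ (H' →L[ℂ] H') s - R₀) * Y = 1 := by
    ext g
    simp only [ContinuousLinearMap.mul_apply, ContinuousLinearMap.sub_apply,
      ContinuousLinearMap.smul_apply, ContinuousLinearMap.one_apply,
      Algebra.algebraMap_eq_smul_one]
    rw [hYapp g, map_add, map_smul, map_smul, ← Complex.coe_smul, smul_add,
      smul_smul, smul_smul, mul_inv_cancel₀ hsc, one_smul]
    have hc : (s:ℂ) * ((s:ℂ)⁻¹ * (s:ℂ)⁻¹) = ((s:ℂ))⁻¹ := by field_simp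
    rw [hc]
    have h4 : ((s:ℂ)⁻¹ * (s:ℂ)⁻¹) • R₀ (R₁ g) = ((s:ℂ))⁻¹ • (R₁ g - R₀ g) := by
      rw [← smul_smul, hk' g]
    rw [h4, smul_sub]
    abel
  have h2 : Y * (algebraMap ℝ (H' →L[ℂ] H') s - R₀) = 1 := by
    ext g
    simp only [ContinuousLinearMap.mul_apply, ContinuousLinearMap.sub_apply,
      ContinuousLinearMap.smul_apply, ContinuousLinearMap.one_apply,
      Algebra.algebraMap_eq_smul_one]
    rw [← Complex.coe_smul, hYapp, smul_sub, smul_smul, inv_mul_cancel₀ hsc, one_smul,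
      map_sub, map_smul, smul_sub, smul_smul]
    have hc : ((s:ℂ)⁻¹ * (s:ℂ)⁻¹) * (s:ℂ) = ((s:ℂ))⁻¹ := by field_simp
    rw [hc]
    have h4 : ((s:ℂ)⁻¹ * (s:ℂ)⁻¹) • R₁ (R₀ g) = ((s:ℂ))⁻¹ • (R₁ g - R₀ g) := by
      rw [← smul_smul, hl' g]
    rw [h4, smul_sub]
    abel
  exact ⟨⟨algebraMap ℝ (H' →L[ℂ] H') s - R₀, Y, h1, h2⟩, rfl⟩

lemma quad_nonpos {c2 c1 c0 lo hi : ℝ} (hc2 : 0 ≤ c2) (hlohi : lo < hi)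
    (hqlo : c2 * lo ^ 2 + c1 * lo + c0 ≤ 0) (hqhi : c2 * hi ^ 2 + c1 * hi + c0 ≤ 0) :
    ∀ x ∈ Set.Icc lo hi, c2 * x ^ 2 + c1 * x + c0 ≤ 0 := by
  rintro x ⟨h1, h2⟩
  nlinarith [mul_nonneg (sub_nonneg.2 h2) (neg_nonneg.2 hqlo),
    mul_nonneg (sub_nonneg.2 h1) (neg_nonneg.2 hqhi),
    mul_nonneg (mul_nonneg hc2 (sub_nonneg.2 h1)) (sub_nonneg.2 h2)]

lemma cfc_form {R₀ : H' →L[ℂ] H'} (hsa : IsSelfAdjoint R₀) {lo hi : ℝ}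
    (hspec : spectrum ℝ R₀ ⊆ Set.Icc lo hi) {c2 c1 c0 : ℝ}
    (hq : ∀ x ∈ Set.Icc lo hi, c2 * x ^ 2 + c1 * x + c0 ≤ 0) (h : H') :
    c2 * ‖R₀ h‖ ^ 2 + c1 * Complex.re ⟪h, R₀ h⟫_ℂ + c0 * ‖h‖ ^ 2 ≤ 0 := by
  have hsym := (ContinuousLinearMap.isSelfAdjoint_iff_isSymmetric.mp hsa)
  have hP : cfc (fun x : ℝ => c2 * x ^ 2 + c1 * x + c0) R₀ ≤ 0 :=
    cfc_nonpos _ _ (fun x hx => hq x (hspec hx))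
  have hPeq : cfc (fun x : ℝ => c2 * x ^ 2 + c1 * x + c0) R₀
      = c2 • R₀ ^ 2 + c1 • R₀ + algebraMap ℝ (H' →L[ℂ] H') c0 := by
    rw [cfc_add (a := R₀) _ _, cfc_add (a := R₀) _ _, cfc_const_mul _ _ R₀,
      cfc_const_mul _ _ R₀, cfc_pow_id R₀, cfc_id' ℝ R₀, cfc_const c0 R₀]
  rw [hPeq] at hP
  have h2 := (ContinuousLinearMap.nonneg_iff_isPositive
    (0 - (c2 • R₀ ^ 2 + c1 • R₀ + algebraMap ℝ (H' →L[ℂ] H') c0))).mp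
    (by simpa using neg_nonneg.mpr hP)
  have h3 := h2.inner_nonneg_right h
  have happ : ((0 - (c2 • R₀ ^ 2 + c1 • R₀ + algebraMap ℝ (H' →L[ℂ] H') c0)) : H' →L[ℂ] H') h
      = -(((c2 : ℂ)) • R₀ (R₀ h) + ((c1 : ℂ)) • R₀ h + ((c0 : ℂ)) • h) := by
    simp only [ContinuousLinearMap.sub_apply, ContinuousLinearMap.zero_apply, zero_sub,
      ContinuousLinearMap.add_apply, ContinuousLinearMap.smul_apply,
      Algebra.algebraMap_eq_smul_one, ContinuousLinearMap.one_apply, pow_two,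
      ContinuousLinearMap.mul_apply, ContinuousLinearMap.neg_apply, Complex.coe_smul]
  rw [happ] at h3
  have hRR : ⟪h, R₀ (R₀ h)⟫_ℂ = ⟪R₀ h, R₀ h⟫_ℂ := (hsym h (R₀ h)).symm
  simp only [inner_neg_right, inner_add_right, inner_smul_right, map_neg, map_add, hRR,
    RCLike.re_to_complex, Complex.mul_re, Complex.ofReal_re, Complex.ofReal_im,
    zero_mul, sub_zero] at h3
  have e1 : Complex.re ⟪R₀ h, R₀ h⟫_ℂ = ‖R₀ h‖ ^ 2 := inner_self_eq_norm_sq (𝕜 := ℂ) (R₀ h)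
  have e2 : Complex.re ⟪h, h⟫_ℂ = ‖h‖ ^ 2 := inner_self_eq_norm_sq (𝕜 := ℂ) h
  replace h3 := (Complex.le_def.mp h3).1
  simp only [Complex.zero_re, Complex.neg_re, Complex.add_re, Complex.mul_re, Complex.ofReal_re,
    Complex.ofReal_im, zero_mul, sub_zero] at h3
  rw [e1, e2] at h3
  linarith

end Stmt14Aux
end Stmt14Aux

open scoped InnerProductSpace

variable {H K : Type*}
  [NormedAddCommGroup H] [InnerProductSpace ℂ H] [CompleteSpace H]
  [NormedAddCommGroup K] [InnerProductSpace ℂ K] [CompleteSpace K]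

/-- **Remark 3.6 (preservation of spectral gaps).** Let `S` be self-adjoint,
`‖T f‖² ≤ a ‖f‖² + b ‖S f‖²` with `b < 1`, and let `(σ₋, σ₊)` be a spectral gap of `S`
with `σ₋' := σ₋ + √(a + b σ₋²) < σ₊ - √(a + b σ₊²) =: σ₊'`.  Then every `lam` with
`σ₋' < Re lam < σ₊'` belongs to `ρ(S + T)`. -/
theorem stmt14
    (S : H →ₗ.[ℂ] H) (hS : IsSelfAdjoint S)
    (T : S.domain →ₗ[ℂ] H)
    (a b : ℝ) (ha : 0 ≤ a) (hb0 : 0 ≤ b) (hb1 : b < 1)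
    (hT : ∀ f : S.domain, ‖T f‖ ^ 2 ≤ a * ‖(f : H)‖ ^ 2 + b * ‖S f‖ ^ 2)
    (sm sp : ℝ) (hsmsp : sm < sp)
    (hgap : ∀ t : ℝ, t ∈ Set.Ioo sm sp → (t : ℂ) ∉ Spec S)
    (hsep : sm + Real.sqrt (a + b * sm ^ 2) < sp - Real.sqrt (a + b * sp ^ 2))
    (ST : H →ₗ.[ℂ] H) (hST : ST = ⟨S.domain, S.toFun + T⟩) :
    ∀ lam : ℂ, sm + Real.sqrt (a + b * sm ^ 2) < lam.re →
      lam.re < sp - Real.sqrt (a + b * sp ^ 2) → InResolventSet ST lam := by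
  subst hST
  have hdense : Dense (S.domain : Set H) := hS.dense_domain
  have hsymm : ∀ x y : S.domain, ⟪(S x : H), (y : H)⟫_ℂ = ⟪(x : H), (S y : H)⟫_ℂ := by
    have hFA := LinearPMap.adjoint_isFormalAdjoint hdense
    rw [LinearPMap.isSelfAdjoint_def.mp hS] at hFA
    exact hFA
  intro lam hlam1 hlam2
  set μ : ℝ := lam.re with hμdef
  have hsqnnm := Real.sqrt_nonneg (a + b * sm ^ 2)
  have hsqnnp := Real.sqrt_nonneg (a + b * sp ^ 2)
  have hsmμ : sm < μ := by linarith
  have hspμ : μ < sp := by linarith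
  have hdm : (0:ℝ) < μ - sm := by linarith
  have hdp : (0:ℝ) < sp - μ := by linarith
  have hem : a + b * sm ^ 2 < (μ - sm) ^ 2 := by
    nlinarith [Real.sq_sqrt (by positivity : (0:ℝ) ≤ a + b * sm ^ 2)]
  have hep : a + b * sp ^ 2 < (sp - μ) ^ 2 := by
    nlinarith [Real.sq_sqrt (by positivity : (0:ℝ) ≤ a + b * sp ^ 2)]
  -- resolvents at real gap points
  have hres : ∀ t : ℝ, t ∈ Set.Ioo sm sp → ∃ R : H →L[ℂ] H, ResolventAt S (t : ℂ) R := by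
    intro t ht
    have h := hgap t ht
    simp only [Spec, Set.mem_setOf_eq, not_not] at h
    exact h
  obtain ⟨R₀, hR₀⟩ := hres μ ⟨hsmμ, hspμ⟩
  have hsaR₀ : IsSelfAdjoint R₀ :=
    ContinuousLinearMap.isSelfAdjoint_iff_isSymmetric.mpr
      (fun x y => Stmt14Aux.res_symm hsymm hR₀ x y)
  have hspec := Stmt14Aux.res_spectrum hsmμ hspμ hres hR₀
  -- the constant K
  set Kc : ℝ := max b (max ((a + b * sm ^ 2) / (μ - sm) ^ 2) ((a + b * sp ^ 2) / (sp - μ) ^ 2))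
    with hKc
  have hKb : b ≤ Kc := le_max_left _ _
  have hK0 : 0 ≤ Kc := le_trans hb0 hKb
  have hKm : a + b * sm ^ 2 ≤ Kc * (μ - sm) ^ 2 := by
    have h : (a + b * sm ^ 2) / (μ - sm) ^ 2 ≤ Kc :=
      le_trans (le_max_left ((a + b * sm ^ 2) / (μ - sm) ^ 2) ((a + b * sp ^ 2) / (sp - μ) ^ 2))
        (le_max_right b _)
    calc a + b * sm ^ 2 = ((a + b * sm ^ 2) / (μ - sm) ^ 2) * (μ - sm) ^ 2 := by
          field_simp
      _ ≤ Kc * (μ - sm) ^ 2 := mul_le_mul_of_nonneg_right h (by positivity)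
  have hKp : a + b * sp ^ 2 ≤ Kc * (sp - μ) ^ 2 := by
    have h : (a + b * sp ^ 2) / (sp - μ) ^ 2 ≤ Kc :=
      le_trans (le_max_right ((a + b * sm ^ 2) / (μ - sm) ^ 2) ((a + b * sp ^ 2) / (sp - μ) ^ 2))
        (le_max_right b _)
    calc a + b * sp ^ 2 = ((a + b * sp ^ 2) / (sp - μ) ^ 2) * (sp - μ) ^ 2 := by
          field_simp
      _ ≤ Kc * (sp - μ) ^ 2 := mul_le_mul_of_nonneg_right h (by positivity)
  have hK1 : Kc < 1 := by
    apply max_lt hb1 (max_lt ?_ ?_)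
    · rw [div_lt_one (by positivity)]; exact hem
    · rw [div_lt_one (by positivity)]; exact hep
  -- quadratic nonpositive on the interval
  have hqlo : (a + b * μ ^ 2) * (-(μ - sm)⁻¹) ^ 2 + (2 * b * μ) * (-(μ - sm)⁻¹) + (b - Kc) ≤ 0 := by
    have hne : μ - sm ≠ 0 := ne_of_gt hdm
    have hexp : (a + b * μ ^ 2) * (-(μ - sm)⁻¹) ^ 2 + (2 * b * μ) * (-(μ - sm)⁻¹) + (b - Kc)
        = (a + b * sm ^ 2 - Kc * (μ - sm) ^ 2) / (μ - sm) ^ 2 := by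
      field_simp
      ring
    rw [hexp]
    exact div_nonpos_of_nonpos_of_nonneg (by linarith) (by positivity)
  have hqhi : (a + b * μ ^ 2) * ((sp - μ)⁻¹) ^ 2 + (2 * b * μ) * ((sp - μ)⁻¹) + (b - Kc) ≤ 0 := by
    have hne : sp - μ ≠ 0 := ne_of_gt hdp
    have hexp : (a + b * μ ^ 2) * ((sp - μ)⁻¹) ^ 2 + (2 * b * μ) * ((sp - μ)⁻¹) + (b - Kc)
        = (a + b * sp ^ 2 - Kc * (sp - μ) ^ 2) / (sp - μ) ^ 2 := by
      field_simp
      ring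
    rw [hexp]
    exact div_nonpos_of_nonpos_of_nonneg (by linarith) (by positivity)
  have hq := Stmt14Aux.quad_nonpos (c2 := a + b * μ ^ 2) (c1 := 2 * b * μ) (c0 := b - Kc)
    (by positivity) (by
      have := inv_pos.mpr hdm
      have := inv_pos.mpr hdp
      linarith) hqlo hqhi
  have hform := fun h : H => Stmt14Aux.cfc_form hsaR₀ hspec hq h
  -- the key estimate
  have hstar : ∀ f : S.domain, ‖T f‖ ^ 2 ≤ Kc * ‖(S f : H) - lam • (f : H)‖ ^ 2 := by
    intro f
    set hh : H := (S f : H) - ((μ:ℝ) : ℂ) • (f : H) with hhdef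
    have hR0h : R₀ hh = (f : H) := hR₀.2 f
    have h1 : ⟪(S f : H), (f : H)⟫_ℂ = ⟪(f : H), (S f : H)⟫_ℂ := hsymm f f
    have hrealf : (⟪hh, (f : H)⟫_ℂ).im = 0 := by
      apply Complex.conj_eq_iff_im.mp
      rw [inner_conj_symm]
      rw [hhdef]
      simp only [inner_sub_left, inner_sub_right, inner_smul_left, inner_smul_right,
        Complex.conj_ofReal, h1]
    set w : ℝ := (⟪hh, (f : H)⟫_ℂ).re with hwdef
    have hnormS : ‖(S f : H)‖ ^ 2 = ‖hh‖ ^ 2 + 2 * μ * w + μ ^ 2 * ‖(f : H)‖ ^ 2 := by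
      have hd : (S f : H) = hh + ((μ:ℝ):ℂ) • (f : H) := by rw [hhdef]; abel
      rw [hd, norm_add_sq (𝕜 := ℂ)]
      rw [norm_smul, inner_smul_right]
      simp only [RCLike.re_to_complex, Complex.mul_re, Complex.ofReal_re, Complex.ofReal_im,
        zero_mul, sub_zero, Complex.norm_real, Real.norm_eq_abs]
      rw [mul_pow, sq_abs]
      ring
    have hnormL : ‖(S f : H) - lam • (f : H)‖ ^ 2
        = ‖hh‖ ^ 2 + lam.im ^ 2 * ‖(f : H)‖ ^ 2 := by
      have hlamd : ((μ:ℝ):ℂ) + (lam.im : ℂ) * Complex.I = lam := by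
        rw [hμdef]; exact Complex.re_add_im lam
      have hd : (S f : H) - lam • (f : H) = hh - ((lam.im : ℂ) * Complex.I) • (f : H) := by
        rw [hhdef, sub_sub, ← add_smul, hlamd]
      rw [hd, norm_sub_sq (𝕜 := ℂ)]
      rw [norm_smul, inner_smul_right]
      simp only [RCLike.re_to_complex, Complex.mul_re, Complex.mul_im, Complex.ofReal_re,
        Complex.ofReal_im, Complex.I_re, Complex.I_im, hrealf]
      rw [mul_pow]
      have : ‖(lam.im : ℂ) * Complex.I‖ = |lam.im| := by
        rw [norm_mul, Complex.norm_I, Complex.norm_real, Real.norm_eq_abs, mul_one]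
      rw [this, sq_abs]
      ring
    have hformh := hform hh
    rw [hR0h] at hformh
    rw [← hwdef] at hformh
    have hTf := hT f
    have hb2 : b * ‖(S f : H)‖ ^ 2
        = b * ‖hh‖ ^ 2 + 2 * b * μ * w + b * μ ^ 2 * ‖(f : H)‖ ^ 2 := by rw [hnormS]; ring
    have hK2 : Kc * ‖(S f : H) - lam • (f : H)‖ ^ 2
        = Kc * ‖hh‖ ^ 2 + Kc * (lam.im ^ 2 * ‖(f : H)‖ ^ 2) := by rw [hnormL]; ring
    have hpos : 0 ≤ Kc * (lam.im ^ 2 * ‖(f : H)‖ ^ 2) := by positivity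
    linarith
  -- the resolvent of S at lam
  set cI : ℂ := lam - ((μ:ℝ):ℂ) with hcIdef
  have hA : IsUnit (1 - cI • R₀ : H →L[ℂ] H) := by
    rcases eq_or_ne cI 0 with h0 | hne
    · rw [h0, zero_smul, sub_zero]; exact isUnit_one
    · have hwspec : (cI⁻¹) ∉ spectrum ℂ R₀ := by
        intro hw
        have heqre := hsaR₀.mem_spectrum_eq_re hw
        have hre : (cI⁻¹).re = 0 := by
          rw [Complex.inv_re]
          have : cI.re = 0 := by rw [hcIdef]; simp [hμdef]
          rw [this]; simp
        rw [hre] at heqre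
        simp only [Complex.ofReal_zero] at heqre
        exact hne (inv_eq_zero.mp heqre)
      have hu1 : IsUnit (algebraMap ℂ (H →L[ℂ] H) (cI⁻¹) - R₀) := spectrum.notMem_iff.mp hwspec
      have hu2 : IsUnit (R₀ - algebraMap ℂ (H →L[ℂ] H) (cI⁻¹)) := by
        have := hu1.neg; rwa [neg_sub] at this
      have heq : (1 - cI • R₀ : H →L[ℂ] H)
          = algebraMap ℂ (H →L[ℂ] H) (-cI) * (R₀ - algebraMap ℂ (H →L[ℂ] H) (cI⁻¹)) := by
        rw [mul_sub, ← map_mul, ← Algebra.smul_def]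
        have h9 : -cI * cI⁻¹ = -1 := by field_simp
        rw [h9, map_neg, map_one, sub_neg_eq_add, neg_smul]
        abel
      rw [heq]
      exact (IsUnit.map (algebraMap ℂ (H →L[ℂ] H)) (isUnit_iff_ne_zero.mpr (neg_ne_zero.mpr hne))).mul hu2
  have hUval : (hA.unit : H →L[ℂ] H) = 1 - cI • R₀ := hA.unit_spec
  set Ui : H →L[ℂ] H := ((hA.unit⁻¹ : (H →L[ℂ] H)ˣ) : H →L[ℂ] H) with hUidef
  have hAinv1 : ∀ x : H, (1 - cI • R₀ : H →L[ℂ] H) (Ui x) = x := by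
    intro x
    have h10 := congrArg (fun (M : H →L[ℂ] H) => M x) hA.unit.mul_inv
    simp only [ContinuousLinearMap.mul_apply, ContinuousLinearMap.one_apply] at h10
    rw [hUval] at h10
    exact h10
  have hAinv2 : ∀ x : H, Ui ((1 - cI • R₀ : H →L[ℂ] H) x) = x := by
    intro x
    have h10 := congrArg (fun (M : H →L[ℂ] H) => M x) hA.unit.inv_mul
    simp only [ContinuousLinearMap.mul_apply, ContinuousLinearMap.one_apply] at h10
    rw [hUval] at h10
    exact h10
  set Rlam : H →L[ℂ] H := R₀ * Ui with hRlamdef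
  have hRlam : ResolventAt S lam Rlam := by
    constructor
    · intro f
      have hm : Rlam f ∈ S.domain := Stmt14Aux.res_mem hR₀ (Ui f)
      refine ⟨hm, ?_⟩
      have he := Stmt14Aux.res_eq hR₀ (Ui f) hm
      show S ⟨R₀ (Ui f), hm⟩ - lam • R₀ (Ui f) = f
      rw [he]
      have : Ui f + ((μ:ℝ):ℂ) • R₀ (Ui f) - lam • R₀ (Ui f)
          = (1 - cI • R₀ : H →L[ℂ] H) (Ui f) := by
        simp only [ContinuousLinearMap.sub_apply, ContinuousLinearMap.one_apply,
          ContinuousLinearMap.smul_apply, hcIdef, sub_smul]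
        abel
      rw [this]
      exact hAinv1 f
    · intro g
      have hg : R₀ ((S g : H) - ((μ:ℝ):ℂ) • (g : H)) = (g : H) := hR₀.2 g
      have hst : (S g : H) - lam • (g : H)
          = (1 - cI • R₀ : H →L[ℂ] H) ((S g : H) - ((μ:ℝ):ℂ) • (g : H)) := by
        simp only [ContinuousLinearMap.sub_apply, ContinuousLinearMap.one_apply,
          ContinuousLinearMap.smul_apply, hg, hcIdef, sub_smul]
        abel
      show R₀ (Ui ((S g : H) - lam • (g : H))) = (g : H)
      rw [hst, hAinv2]
      exact hg
  -- the perturbation as a continuous map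
  have hmemR : ∀ x : H, Rlam x ∈ S.domain := fun x => Stmt14Aux.res_mem hRlam x
  set J : H →ₗ[ℂ] S.domain :=
    LinearMap.codRestrict S.domain (Rlam : H →ₗ[ℂ] H) hmemR with hJdef
  set BL : H →ₗ[ℂ] H := T ∘ₗ J with hBLdef
  have hBL : ∀ x : H, ‖BL x‖ ≤ Real.sqrt Kc * ‖x‖ := by
    intro x
    have h2 := hstar ⟨Rlam x, hmemR x⟩
    have h3 : (S ⟨Rlam x, hmemR x⟩ : H) - lam • (Rlam x) = x := (hRlam.1 x).choose_spec
    rw [h3] at h2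
    have hBLx : BL x = T ⟨Rlam x, hmemR x⟩ := rfl
    calc ‖BL x‖ = Real.sqrt (‖BL x‖ ^ 2) := (Real.sqrt_sq (norm_nonneg _)).symm
      _ ≤ Real.sqrt (Kc * ‖x‖ ^ 2) := Real.sqrt_le_sqrt (by rw [hBLx]; exact h2)
      _ = Real.sqrt Kc * ‖x‖ := by
          rw [Real.sqrt_mul hK0, Real.sqrt_sq (norm_nonneg _)]
  set Bop : H →L[ℂ] H := BL.mkContinuous (Real.sqrt Kc) hBL with hBopdef
  have hBopapp : ∀ x : H, Bop x = T ⟨Rlam x, hmemR x⟩ := fun x => rfl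
  have hBnorm : ‖Bop‖ ≤ Real.sqrt Kc := LinearMap.mkContinuous_norm_le _ (Real.sqrt_nonneg Kc) _
  have hKlt : Real.sqrt Kc < 1 := by
    have h := Real.sqrt_lt_sqrt hK0 hK1
    rwa [Real.sqrt_one] at h
  have hBlt : ‖-Bop‖ < 1 := by rw [norm_neg]; exact lt_of_le_of_lt hBnorm hKlt
  set V : (H →L[ℂ] H)ˣ := Units.oneSub (-Bop) hBlt with hVdef
  have hVval : (V : H →L[ℂ] H) = 1 + Bop := by
    show (1 : H →L[ℂ] H) - (-Bop) = 1 + Bop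
    rw [sub_neg_eq_add]
  set Vi : H →L[ℂ] H := ((V⁻¹ : (H →L[ℂ] H)ˣ) : H →L[ℂ] H) with hVidef
  have hVinv1 : ∀ x : H, (1 + Bop : H →L[ℂ] H) (Vi x) = x := by
    intro x
    have h10 := congrArg (fun (M : H →L[ℂ] H) => M x) V.mul_inv
    simp only [ContinuousLinearMap.mul_apply, ContinuousLinearMap.one_apply] at h10
    rw [hVval] at h10
    exact h10
  have hVinv2 : ∀ x : H, Vi ((1 + Bop : H →L[ℂ] H) x) = x := by
    intro x
    have h10 := congrArg (fun (M : H →L[ℂ] H) => M x) V.inv_mul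
    simp only [ContinuousLinearMap.mul_apply, ContinuousLinearMap.one_apply] at h10
    rw [hVval] at h10
    exact h10
  -- final resolvent
  refine ⟨Rlam * Vi, ?_, ?_⟩
  · intro f
    have hm : (Rlam * Vi) f ∈ S.domain := hmemR (Vi f)
    refine ⟨hm, ?_⟩
    have h3 : (S ⟨Rlam (Vi f), hm⟩ : H) - lam • (Rlam (Vi f)) = Vi f :=
      (hRlam.1 (Vi f)).choose_spec
    show (S.toFun + T) ⟨Rlam (Vi f), hm⟩ - lam • (Rlam (Vi f)) = f
    have hS' : S.toFun ⟨Rlam (Vi f), hm⟩ = (S ⟨Rlam (Vi f), hm⟩ : H) := rfl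
    have hT' : T ⟨Rlam (Vi f), hm⟩ = Bop (Vi f) := rfl
    rw [LinearMap.add_apply, hS', hT']
    calc (S ⟨Rlam (Vi f), hm⟩ : H) + Bop (Vi f) - lam • (Rlam (Vi f))
        = ((S ⟨Rlam (Vi f), hm⟩ : H) - lam • (Rlam (Vi f))) + Bop (Vi f) := by abel
      _ = Vi f + Bop (Vi f) := by rw [h3]
      _ = (1 + Bop : H →L[ℂ] H) (Vi f) := by
          simp [ContinuousLinearMap.add_apply]
      _ = f := hVinv1 f
  · intro g
    have h5 : Rlam ((S g : H) - lam • (g : H)) = (g : H) := hRlam.2 g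
    have h7 : (⟨Rlam ((S g : H) - lam • (g : H)),
        hmemR ((S g : H) - lam • (g : H))⟩ : S.domain) = g := Subtype.ext h5
    have h6 : Bop ((S g : H) - lam • (g : H)) = T g := by
      rw [hBopapp, h7]
    have h8 : (S g : H) + T g - lam • (g : H)
        = (1 + Bop : H →L[ℂ] H) ((S g : H) - lam • (g : H)) := by
      simp only [ContinuousLinearMap.add_apply, ContinuousLinearMap.one_apply, h6]
      abel
    show (Rlam * Vi) ((S.toFun + T) g - lam • (g : H)) = (g : H)
    have hSg : S.toFun g = (S g : H) := rfl
    rw [LinearMap.add_apply, hSg]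
    show Rlam (Vi ((S g : H) + T g - lam • (g : H))) = (g : H)
    rw [h8, hVinv2]
    exact h5
end
end

section
/- Let H be a complex Hilbert space and let J, J₀ be bounded operators on H such that J = J* = J⁻¹, J₀² = I, J₀* = J J₀ J, and ⟨J J₀ f, f⟩ ≥ 0 for all f ∈ H. Set τ₀ := ‖J₀‖ and ‖f‖₀² := ⟨J J₀ f, f⟩ (which is real and nonnegative). Then for every f ∈ H: τ₀⁻¹‖f‖² ≤ ‖f‖₀² ≤ τ₀‖f‖², and for every bounded operator T on H and every f ∈ H: ‖T f‖₀ ≤ τ₀·‖T‖·‖f‖₀. -/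
noncomputable section

open ContinuousLinearMap in
/-- Cauchy–Schwarz for a positive self-adjoint operator. -/
lemma aux_cs15 {H : Type*} [NormedAddCommGroup H] [InnerProductSpace ℂ H] [CompleteSpace H]
    (S : H →L[ℂ] H) (hS : ContinuousLinearMap.adjoint S = S)
    (hpos : ∀ f : H, 0 ≤ (inner ℂ (S f) f : ℂ).re) (x y : H) :
    ‖(inner ℂ (S x) y : ℂ)‖ ^ 2 ≤ (inner ℂ (S x) x : ℂ).re * (inner ℂ (S y) y : ℂ).re := by
  have hsymm : ∀ a b : H, (starRingEnd ℂ) (inner ℂ (S b) a) = inner ℂ (S a) b := by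
    intro a b
    rw [inner_conj_symm]
    calc (inner ℂ a (S b) : ℂ) = inner ℂ ((adjoint S) a) b := (adjoint_inner_left S b a).symm
      _ = inner ℂ (S a) b := by rw [hS]
  let core : PreInnerProductSpace.Core ℂ H :=
    { inner := fun a b => (inner ℂ (S a) b : ℂ)
      conj_inner_symm := hsymm
      re_inner_nonneg := hpos
      add_left := fun a b c => by simp [inner_add_left]
      smul_left := fun a b r => by simp [inner_smul_left, mul_comm] }
  have h : ‖(inner ℂ (S x) y : ℂ)‖ * ‖(inner ℂ (S y) x : ℂ)‖ ≤
      (inner ℂ (S x) x : ℂ).re * (inner ℂ (S y) y : ℂ).re :=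
    @InnerProductSpace.Core.inner_mul_inner_self_le ℂ H _ _ _ core x y
  have hxy : ‖(inner ℂ (S y) x : ℂ)‖ = ‖(inner ℂ (S x) y : ℂ)‖ := by
    rw [← hsymm x y, RCLike.norm_conj]
  rw [hxy] at h
  nlinarith [h]

/-- **Lemma 5.1, first part.** Let `J`, `J₀` be bounded operators on the Hilbert space `H`
with `J = J* = J⁻¹`, `J₀² = I`, `J₀* = J J₀ J` and `⟨J J₀ f, f⟩ ≥ 0` for all `f`.  With
`τ₀ = ‖J₀‖` and `‖f‖₀² = ⟨J J₀ f, f⟩`, one has `τ₀⁻¹ ‖f‖² ≤ ‖f‖₀² ≤ τ₀ ‖f‖²` for all `f`,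
and `‖T f‖₀ ≤ τ₀ ‖T‖ ‖f‖₀` for every bounded operator `T` on `H` and every `f`. -/
theorem stmt15 {H : Type*} [NormedAddCommGroup H] [InnerProductSpace ℂ H] [CompleteSpace H]
    (J J0 : H →L[ℂ] H)
    (hJsa : IsSelfAdjoint J) (hJinv : J ∘L J = ContinuousLinearMap.id ℂ H)
    (hJ0inv : J0 ∘L J0 = ContinuousLinearMap.id ℂ H)
    (hJ0adj : ContinuousLinearMap.adjoint J0 = J ∘L J0 ∘L J)
    (hreal : ∀ f : H, (inner ℂ (J (J0 f)) f : ℂ).im = 0)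
    (hpos : ∀ f : H, 0 ≤ (inner ℂ (J (J0 f)) f : ℂ).re) :
    (∀ f : H, ‖J0‖⁻¹ * ‖f‖ ^ 2 ≤ (inner ℂ (J (J0 f)) f : ℂ).re ∧
      (inner ℂ (J (J0 f)) f : ℂ).re ≤ ‖J0‖ * ‖f‖ ^ 2) ∧
    (∀ (T : H →L[ℂ] H) (f : H),
      Real.sqrt ((inner ℂ (J (J0 (T f))) (T f) : ℂ).re) ≤
        ‖J0‖ * ‖T‖ * Real.sqrt ((inner ℂ (J (J0 f)) f : ℂ).re)) := by
  set S : H →L[ℂ] H := J ∘L J0 with hSdef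
  have hSapp : ∀ f : H, S f = J (J0 f) := fun f => rfl
  have hJadj : ContinuousLinearMap.adjoint J = J := hJsa
  have hJJ : ∀ f : H, J (J f) = f := by
    intro f
    have := congrArg (fun A : H →L[ℂ] H => A f) hJinv
    simpa using this
  have hJ0J0 : ∀ f : H, J0 (J0 f) = f := by
    intro f
    have := congrArg (fun A : H →L[ℂ] H => A f) hJ0inv
    simpa using this
  -- J is an isometry
  have hJiso : ∀ f : H, ‖J f‖ = ‖f‖ := by
    intro f
    have h1 : (inner ℂ (J f) (J f) : ℂ) = inner ℂ f f := by
      calc (inner ℂ (J f) (J f) : ℂ)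
          = inner ℂ ((ContinuousLinearMap.adjoint J) (J f)) f :=
            (ContinuousLinearMap.adjoint_inner_left J f (J f)).symm
        _ = inner ℂ (J (J f)) f := by rw [hJadj]
        _ = inner ℂ f f := by rw [hJJ]
    have h2 : ‖J f‖ ^ 2 = ‖f‖ ^ 2 := by
      have := congrArg (RCLike.re (K := ℂ)) h1
      rw [inner_self_eq_norm_sq_to_K, inner_self_eq_norm_sq_to_K] at h1
      exact_mod_cast h1
    nlinarith [norm_nonneg (J f), norm_nonneg f]
  -- S is self-adjoint
  have hSadj : ContinuousLinearMap.adjoint S = S := by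
    rw [hSdef, ContinuousLinearMap.adjoint_comp, hJ0adj, hJadj]
    ext f
    simp [hJJ]
  have hSpos : ∀ f : H, 0 ≤ (inner ℂ (S f) f : ℂ).re := by
    intro f; simpa [hSapp] using hpos f
  -- upper bound
  have hupper : ∀ f : H, (inner ℂ (S f) f : ℂ).re ≤ ‖J0‖ * ‖f‖ ^ 2 := by
    intro f
    have h1 : (inner ℂ (S f) f : ℂ).re ≤ ‖(inner ℂ (S f) f : ℂ)‖ := Complex.re_le_norm _
    have h2 : ‖(inner ℂ (S f) f : ℂ)‖ ≤ ‖S f‖ * ‖f‖ := norm_inner_le_norm _ _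
    have h3 : ‖S f‖ = ‖J0 f‖ := by rw [hSapp]; exact hJiso (J0 f)
    have h4 : ‖J0 f‖ ≤ ‖J0‖ * ‖f‖ := J0.le_opNorm f
    nlinarith [norm_nonneg f]
  -- the key inequality: ‖f‖² ≤ ‖J0‖ * re⟨Sf,f⟩
  have hkey : ∀ f : H, ‖f‖ ^ 2 ≤ ‖J0‖ * (inner ℂ (S f) f : ℂ).re := by
    intro f
    by_cases hf : f = 0
    · simp [hf]
    set g : H := J0 (J f) with hg
    have hSg : S g = f := by rw [hSapp, hg, hJ0J0, hJJ]
    have hcs := aux_cs15 S hSadj hSpos g f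
    have h2 : ‖(inner ℂ (S g) f : ℂ)‖ = ‖f‖ ^ 2 := by
      rw [hSg, inner_self_eq_norm_sq_to_K]
      push_cast
      simp
    have hgn : ‖g‖ ≤ ‖J0‖ * ‖f‖ := by
      rw [hg]
      calc ‖J0 (J f)‖ ≤ ‖J0‖ * ‖J f‖ := J0.le_opNorm _
        _ = ‖J0‖ * ‖f‖ := by rw [hJiso]
    have h3 : (inner ℂ (S g) g : ℂ).re ≤ ‖J0‖ * ‖f‖ ^ 2 := by
      have ha : (inner ℂ (S g) g : ℂ).re ≤ ‖(inner ℂ (S g) g : ℂ)‖ := Complex.re_le_norm _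
      have hb : ‖(inner ℂ (S g) g : ℂ)‖ ≤ ‖S g‖ * ‖g‖ := norm_inner_le_norm _ _
      have hc : ‖S g‖ = ‖f‖ := by rw [hSg]
      nlinarith [norm_nonneg f, norm_nonneg g]
    have hfp : (0:ℝ) < ‖f‖ := norm_pos_iff.mpr hf
    rw [h2] at hcs
    have h5 : ‖f‖ ^ 2 * ‖f‖ ^ 2 ≤ ‖J0‖ * (inner ℂ (S f) f : ℂ).re * ‖f‖ ^ 2 := by
      nlinarith [mul_nonneg (sub_nonneg.mpr h3) (hSpos f)]
    exact le_of_mul_le_mul_right h5 (pow_pos hfp 2)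
  have hJ0pos : ∀ f : H, f ≠ 0 → (0:ℝ) < ‖J0‖ := by
    intro f hf
    rcases eq_or_lt_of_le (norm_nonneg J0) with h | h
    · exfalso
      have : J0 = 0 := by
        rwa [eq_comm, norm_eq_zero] at h
      apply hf
      rw [← hJ0J0 f, this]
      simp
    · exact h
  constructor
  · intro f
    refine ⟨?_, by simpa [hSapp] using hupper f⟩
    by_cases hf : f = 0
    · simpa [hf] using hpos f
    have hJ0 : (0:ℝ) < ‖J0‖ := hJ0pos f hf
    have := hkey f
    rw [hSapp] at this
    rw [inv_mul_le_iff₀ hJ0]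
    linarith
  · intro T f
    by_cases hf : f = 0
    · subst hf
      simp
    have hJ0 : (0:ℝ) < ‖J0‖ := hJ0pos f hf
    set a : ℝ := (inner ℂ (J (J0 (T f))) (T f) : ℂ).re
    set b : ℝ := (inner ℂ (J (J0 f)) f : ℂ).re
    have hb0 : 0 ≤ b := hpos f
    have ha0 : 0 ≤ a := hpos (T f)
    have h1 : a ≤ ‖J0‖ * ‖T f‖ ^ 2 := by simpa [hSapp] using hupper (T f)
    have h2 : ‖T f‖ ≤ ‖T‖ * ‖f‖ := T.le_opNorm f
    have h3 : ‖f‖ ^ 2 ≤ ‖J0‖ * b := by simpa [hSapp] using hkey f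
    have h2' : ‖T f‖ ^ 2 ≤ ‖T‖ ^ 2 * ‖f‖ ^ 2 := by
      nlinarith [norm_nonneg (T f), norm_nonneg f, norm_nonneg T]
    have h4 : a ≤ (‖J0‖ * ‖T‖) ^ 2 * b := by
      calc a ≤ ‖J0‖ * ‖T f‖ ^ 2 := h1
        _ ≤ ‖J0‖ * (‖T‖ ^ 2 * ‖f‖ ^ 2) := by
            exact mul_le_mul_of_nonneg_left h2' hJ0.le
        _ = ‖J0‖ * ‖T‖ ^ 2 * ‖f‖ ^ 2 := by ring
        _ ≤ ‖J0‖ * ‖T‖ ^ 2 * (‖J0‖ * b) := by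
            exact mul_le_mul_of_nonneg_left h3 (by positivity)
        _ = (‖J0‖ * ‖T‖) ^ 2 * b := by ring
    calc Real.sqrt a ≤ Real.sqrt ((‖J0‖ * ‖T‖) ^ 2 * b) := Real.sqrt_le_sqrt h4
      _ = ‖J0‖ * ‖T‖ * Real.sqrt b := by
          rw [Real.sqrt_mul (sq_nonneg _), Real.sqrt_sq (by positivity)]
end
end

section
/- Let H be a complex Hilbert space and let J, J₀ be bounded operators on H such that J = J* = J⁻¹, J₀² = I, J₀* = J J₀ J, and ⟨J J₀ f, f⟩ ≥ 0 for all f ∈ H. Set τ₀ := ‖J₀‖, ‖f‖₀² := ⟨J J₀ f, f⟩, and E_± := (I ± J₀)/2. Then for every f ∈ H and each choice of sign: ‖E_± f‖₀² ≤ ((1 + τ₀)/2)·‖f‖² and ‖E_± f‖² ≤ ((1 + τ₀)/2)·‖f‖₀². -/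
noncomputable section

set_option maxHeartbeats 1600000 in
/-- **Lemma 5.1, second part.** Let `J`, `J₀` be bounded operators on the Hilbert space `H`
with `J = J* = J⁻¹`, `J₀² = I`, `J₀* = J J₀ J` and `⟨J J₀ f, f⟩ ≥ 0` for all `f`.  With
`τ₀ = ‖J₀‖`, `‖f‖₀² = ⟨J J₀ f, f⟩` and `E_± = (I ± J₀)/2`, one has
`‖E_± f‖₀² ≤ ((1 + τ₀)/2) ‖f‖²` and `‖E_± f‖² ≤ ((1 + τ₀)/2) ‖f‖₀²` for every `f`. -/
theorem stmt16 {H : Type*} [NormedAddCommGroup H] [InnerProductSpace ℂ H] [CompleteSpace H]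
    (J J0 : H →L[ℂ] H)
    (hJsa : IsSelfAdjoint J) (hJinv : J ∘L J = ContinuousLinearMap.id ℂ H)
    (hJ0inv : J0 ∘L J0 = ContinuousLinearMap.id ℂ H)
    (hJ0adj : ContinuousLinearMap.adjoint J0 = J ∘L J0 ∘L J)
    (hreal : ∀ f : H, (inner ℂ (J (J0 f)) f : ℂ).im = 0)
    (hpos : ∀ f : H, 0 ≤ (inner ℂ (J (J0 f)) f : ℂ).re)
    (Ep Em : H →L[ℂ] H)
    (hEp : Ep = (2 : ℂ)⁻¹ • (ContinuousLinearMap.id ℂ H + J0))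
    (hEm : Em = (2 : ℂ)⁻¹ • (ContinuousLinearMap.id ℂ H - J0)) :
    ∀ f : H,
      (inner ℂ (J (J0 (Ep f))) (Ep f) : ℂ).re ≤ (1 + ‖J0‖) / 2 * ‖f‖ ^ 2 ∧
      (inner ℂ (J (J0 (Em f))) (Em f) : ℂ).re ≤ (1 + ‖J0‖) / 2 * ‖f‖ ^ 2 ∧
      ‖Ep f‖ ^ 2 ≤ (1 + ‖J0‖) / 2 * (inner ℂ (J (J0 f)) f : ℂ).re ∧
      ‖Em f‖ ^ 2 ≤ (1 + ‖J0‖) / 2 * (inner ℂ (J (J0 f)) f : ℂ).re := by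
  have hJ : ∀ x : H, J (J x) = x := fun x => by
    have := congrArg (fun A : H →L[ℂ] H => A x) hJinv; simpa using this
  have hJ0 : ∀ x : H, J0 (J0 x) = x := fun x => by
    have := congrArg (fun A : H →L[ℂ] H => A x) hJ0inv; simpa using this
  have hJadj : ContinuousLinearMap.adjoint J = J := by
    rw [← ContinuousLinearMap.star_eq_adjoint]; exact hJsa
  -- moving `J` across the inner ℂ product
  have mJ : ∀ x y : H, (inner ℂ (J x) y : ℂ) = inner ℂ x (J y) := fun x y => by
    conv_lhs => rw [← hJadj]
    exact ContinuousLinearMap.adjoint_inner_left J y x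
  -- moving `J0` across the inner ℂ product
  have mJ0 : ∀ x y : H, (inner ℂ x (J0 y) : ℂ) = inner ℂ (J (J0 (J x))) y := fun x y => by
    rw [← ContinuousLinearMap.adjoint_inner_left J0 y x, hJ0adj]
    simp [ContinuousLinearMap.comp_apply]
  -- `‖J‖ ≤ 1` and hence `‖J x‖ ≤ ‖x‖`
  have hJle : ‖J‖ ≤ 1 := by
    have h1 : ‖(ContinuousLinearMap.adjoint J).comp J‖ = ‖J‖ * ‖J‖ :=
      ContinuousLinearMap.norm_adjoint_comp_self J
    rw [hJadj] at h1
    have h2 : ‖J.comp J‖ ≤ 1 := by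
      rw [show J.comp J = J ∘L J from rfl, hJinv]; exact ContinuousLinearMap.norm_id_le
    nlinarith [norm_nonneg J]
  have hJx : ∀ x : H, ‖J x‖ ≤ ‖x‖ := fun x => by
    calc ‖J x‖ ≤ ‖J‖ * ‖x‖ := J.le_opNorm x
      _ ≤ 1 * ‖x‖ := mul_le_mul_of_nonneg_right hJle (norm_nonneg x)
      _ = ‖x‖ := one_mul _
  -- norms of the projections
  have hhalf : ‖(2 : ℂ)⁻¹‖ = 2⁻¹ := by norm_num
  have hEpn : ‖Ep‖ ≤ (1 + ‖J0‖) / 2 := by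
    rw [hEp]
    calc ‖(2 : ℂ)⁻¹ • (ContinuousLinearMap.id ℂ H + J0)‖
        = ‖(2 : ℂ)⁻¹‖ * ‖ContinuousLinearMap.id ℂ H + J0‖ := norm_smul _ _
      _ ≤ 2⁻¹ * (1 + ‖J0‖) := by
          rw [hhalf]
          refine mul_le_mul_of_nonneg_left ?_ (by norm_num)
          calc ‖ContinuousLinearMap.id ℂ H + J0‖ ≤ ‖ContinuousLinearMap.id ℂ H‖ + ‖J0‖ :=
                norm_add_le _ _
            _ ≤ 1 + ‖J0‖ := by
                have := ContinuousLinearMap.norm_id_le (𝕜 := ℂ) (E := H); linarith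
      _ = (1 + ‖J0‖) / 2 := by ring
  have hEmn : ‖Em‖ ≤ (1 + ‖J0‖) / 2 := by
    rw [hEm]
    calc ‖(2 : ℂ)⁻¹ • (ContinuousLinearMap.id ℂ H - J0)‖
        = ‖(2 : ℂ)⁻¹‖ * ‖ContinuousLinearMap.id ℂ H - J0‖ := norm_smul _ _
      _ ≤ 2⁻¹ * (1 + ‖J0‖) := by
          rw [hhalf]
          refine mul_le_mul_of_nonneg_left ?_ (by norm_num)
          calc ‖ContinuousLinearMap.id ℂ H - J0‖ ≤ ‖ContinuousLinearMap.id ℂ H‖ + ‖J0‖ :=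
                norm_sub_le _ _
            _ ≤ 1 + ‖J0‖ := by
                have := ContinuousLinearMap.norm_id_le (𝕜 := ℂ) (E := H); linarith
      _ = (1 + ‖J0‖) / 2 := by ring
  -- pointwise formulas
  have hEpx : ∀ x : H, Ep x = (2 : ℂ)⁻¹ • (x + J0 x) := fun x => by
    rw [hEp]; simp
  have hEmx : ∀ x : H, Em x = (2 : ℂ)⁻¹ • (x - J0 x) := fun x => by
    rw [hEm]; simp
  have hJ0Ep : ∀ x : H, J0 (Ep x) = Ep x := fun x => by
    simp only [hEpx, map_smul, map_add, hJ0]; module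
  have hJ0Em : ∀ x : H, J0 (Em x) = -Em x := fun x => by
    simp only [hEmx, map_smul, map_sub, hJ0]; module
  have hEpJ0 : ∀ x : H, Ep (J0 x) = Ep x := fun x => by
    simp only [hEpx, hJ0]; module
  have hEmJ0 : ∀ x : H, Em (J0 x) = -Em x := fun x => by
    simp only [hEmx, hJ0]; module
  have hEpEp : ∀ x : H, Ep (Ep x) = Ep x := fun x => by
    rw [hEpx (Ep x), hJ0Ep x]; module
  have hEmEm : ∀ x : H, Em (Em x) = Em x := fun x => by
    rw [hEmx (Em x), hJ0Em x]; module
  have hconj : (starRingEnd ℂ) (2 : ℂ)⁻¹ = (2 : ℂ)⁻¹ := by simp [Complex.ext_iff]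
  -- the adjoint relation, in inner-product form
  have hmvP : ∀ a b : H, (inner ℂ (J (Ep (J a))) b : ℂ) = inner ℂ a (Ep b) := fun a b => by
    rw [hEpx (J a), map_smul, map_add, hJ, hEpx b, inner_smul_left, inner_smul_right, hconj,
      inner_add_left, inner_add_right, ← mJ0 a b]
  have hmvM : ∀ a b : H, (inner ℂ (J (Em (J a))) b : ℂ) = inner ℂ a (Em b) := fun a b => by
    rw [hEmx (J a), map_smul, map_sub, hJ, hEmx b, inner_smul_left, inner_smul_right, hconj,
      inner_sub_left, inner_sub_right, ← mJ0 a b]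
  -- Cauchy–Schwarz for the nonnegative form
  have hsym : ∀ u v : H, (inner ℂ (J (J0 v)) u : ℂ).re = (inner ℂ (J (J0 u)) v : ℂ).re := by
    intro u v
    have h1 : (inner ℂ u (J (J0 v)) : ℂ) = inner ℂ (J (J0 u)) v := by
      rw [← mJ u (J0 v), mJ0 (J u) v, hJ u]
    rw [← inner_conj_symm (J (J0 v)) u, Complex.conj_re] at *
    rw [h1]
  have key : ∀ u v : H,
      ((inner ℂ (J (J0 u)) v : ℂ).re) ^ 2 ≤
        (inner ℂ (J (J0 u)) u : ℂ).re * (inner ℂ (J (J0 v)) v : ℂ).re := by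
    intro u v
    have hq : ∀ t : ℝ, 0 ≤ (inner ℂ (J (J0 u)) u : ℂ).re * (t * t) +
        (2 * (inner ℂ (J (J0 u)) v : ℂ).re) * t + (inner ℂ (J (J0 v)) v : ℂ).re := by
      intro t
      have h := hpos ((t : ℂ) • u + v)
      have hexp : (inner ℂ (J (J0 ((t : ℂ) • u + v))) ((t : ℂ) • u + v) : ℂ).re =
          (inner ℂ (J (J0 u)) u : ℂ).re * (t * t) +
            (2 * (inner ℂ (J (J0 u)) v : ℂ).re) * t + (inner ℂ (J (J0 v)) v : ℂ).re := by
        rw [map_add, map_smul, map_add, map_smul, inner_add_left, inner_add_right,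
          inner_add_right, inner_smul_left, inner_smul_right, inner_smul_left,
          inner_smul_right, Complex.conj_ofReal]
        simp only [Complex.add_re, Complex.re_ofReal_mul]
        rw [hsym u v]
        ring
      rw [hexp] at h
      exact h
    have hd := discrim_le_zero hq
    rw [discrim] at hd
    nlinarith [hd]
  intro f
  -- Part 1 for Ep
  have q1p : (inner ℂ (J (J0 (Ep f))) (Ep f) : ℂ) =
      (2 : ℂ)⁻¹ * (inner ℂ (J f) f + inner ℂ (J (J0 f)) f) := by
    rw [hJ0Ep f, hEpx f, map_smul, map_add, inner_smul_left, inner_smul_right, hconj,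
      inner_add_left, inner_add_right, inner_add_right,
      show (inner ℂ (J f) (J0 f) : ℂ) = inner ℂ (J (J0 f)) f by rw [mJ0 (J f) f, hJ f],
      show (inner ℂ (J (J0 f)) (J0 f) : ℂ) = inner ℂ (J f) f by
        rw [mJ0 (J (J0 f)) f, hJ (J0 f), hJ0 f]]
    ring
  have q1m : (inner ℂ (J (J0 (Em f))) (Em f) : ℂ) =
      (2 : ℂ)⁻¹ * (inner ℂ (J (J0 f)) f - inner ℂ (J f) f) := by
    rw [hJ0Em f, map_neg, inner_neg_left, hEmx f, map_smul, map_sub, inner_smul_left,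
      inner_smul_right, hconj, inner_sub_left, inner_sub_right, inner_sub_right,
      show (inner ℂ (J f) (J0 f) : ℂ) = inner ℂ (J (J0 f)) f by rw [mJ0 (J f) f, hJ f],
      show (inner ℂ (J (J0 f)) (J0 f) : ℂ) = inner ℂ (J f) f by
        rw [mJ0 (J (J0 f)) f, hJ (J0 f), hJ0 f]]
    ring
  have hpf : |(inner ℂ (J f) f : ℂ).re| ≤ ‖f‖ ^ 2 := by
    have h1 : ‖(inner ℂ (J f) f : ℂ)‖ ≤ ‖J f‖ * ‖f‖ := norm_inner_le_norm _ _
    have h2 : |(inner ℂ (J f) f : ℂ).re| ≤ ‖(inner ℂ (J f) f : ℂ)‖ := Complex.abs_re_le_norm _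
    have h3 := hJx f
    nlinarith [norm_nonneg f, norm_nonneg (J f)]
  have hqf : (inner ℂ (J (J0 f)) f : ℂ).re ≤ ‖J0‖ * ‖f‖ ^ 2 := by
    have h1 : ‖(inner ℂ (J (J0 f)) f : ℂ)‖ ≤ ‖J (J0 f)‖ * ‖f‖ := norm_inner_le_norm _ _
    have h2 : |(inner ℂ (J (J0 f)) f : ℂ).re| ≤ ‖(inner ℂ (J (J0 f)) f : ℂ)‖ :=
      Complex.abs_re_le_norm _
    have h3 := hJx (J0 f)
    have h4 : ‖J0 f‖ ≤ ‖J0‖ * ‖f‖ := J0.le_opNorm f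
    have h5 : |(inner ℂ (J (J0 f)) f : ℂ).re| ≤ ‖J0‖ * ‖f‖ ^ 2 := by
      nlinarith [norm_nonneg f, norm_nonneg (J (J0 f))]
    exact (le_abs_self _).trans h5
  have hre2 : ∀ z : ℂ, ((2 : ℂ)⁻¹ * z).re = z.re / 2 := fun z => by
    rw [show (2 : ℂ)⁻¹ = ((2⁻¹ : ℝ) : ℂ) by norm_num, Complex.re_ofReal_mul]; ring
  have part1p : (inner ℂ (J (J0 (Ep f))) (Ep f) : ℂ).re ≤ (1 + ‖J0‖) / 2 * ‖f‖ ^ 2 := by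
    rw [q1p, hre2]
    have := abs_le.mp hpf
    simp only [Complex.add_re]
    linarith [hqf, this.2]
  have part1m : (inner ℂ (J (J0 (Em f))) (Em f) : ℂ).re ≤ (1 + ‖J0‖) / 2 * ‖f‖ ^ 2 := by
    rw [q1m, hre2]
    have := abs_le.mp hpf
    simp only [Complex.sub_re]
    linarith [hqf, this.1]
  -- Part 2, generic
  have main2 : ∀ E : H →L[ℂ] H,
      (∀ a b : H, (inner ℂ (J (E (J a))) b : ℂ) = inner ℂ a (E b)) →
      (∀ x : H, ‖E (J0 (E x))‖ = ‖E x‖) → ‖E‖ ≤ (1 + ‖J0‖) / 2 →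
      ‖E f‖ ^ 2 ≤ (1 + ‖J0‖) / 2 * (inner ℂ (J (J0 f)) f : ℂ).re := by
    intro E hmv hw hEn
    set g := E f with hg
    set u := J0 (E (J g)) with hu
    have hTu : J (J0 u) = J (E (J g)) := by rw [hu, hJ0]
    have h1 : (inner ℂ (J (J0 u)) f : ℂ) = inner ℂ g g := by
      rw [hTu, hmv g f, hg]
    have h2 : (inner ℂ (J (J0 u)) u : ℂ) = inner ℂ g (E u) := by rw [hTu, hmv g u]
    have h3 : (inner ℂ (J (J0 u)) u : ℂ).re ≤ (1 + ‖J0‖) / 2 * ‖g‖ ^ 2 := by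
      rw [h2]
      have hb1 : (inner ℂ g (E u) : ℂ).re ≤ ‖g‖ * ‖E u‖ := by
        simpa using re_inner_le_norm (𝕜 := ℂ) g (E u)
      have hb2 : ‖E u‖ = ‖E (J g)‖ := by rw [hu, hw (J g)]
      have hb3 : ‖E (J g)‖ ≤ ‖E‖ * ‖J g‖ := E.le_opNorm _
      have hb4 := hJx g
      have hb5 : ‖E u‖ ≤ (1 + ‖J0‖) / 2 * ‖g‖ := by
        rw [hb2]
        calc ‖E (J g)‖ ≤ ‖E‖ * ‖J g‖ := hb3
          _ ≤ (1 + ‖J0‖) / 2 * ‖g‖ := by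
              have hc : (0 : ℝ) ≤ ‖E‖ := norm_nonneg _
              nlinarith [norm_nonneg (J g), norm_nonneg g]
      calc (inner ℂ g (E u) : ℂ).re ≤ ‖g‖ * ‖E u‖ := hb1
        _ ≤ ‖g‖ * ((1 + ‖J0‖) / 2 * ‖g‖) :=
            mul_le_mul_of_nonneg_left hb5 (norm_nonneg g)
        _ = (1 + ‖J0‖) / 2 * ‖g‖ ^ 2 := by ring
    have h4 := key u f
    rw [h1] at h4
    have h5 : (inner ℂ g g : ℂ).re = ‖g‖ ^ 2 := by
      simpa using inner_self_eq_norm_sq (𝕜 := ℂ) g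
    rw [h5] at h4
    have hQ := hpos f
    have hU := hpos u
    have h6 : (inner ℂ (J (J0 u)) u : ℂ).re * (inner ℂ (J (J0 f)) f : ℂ).re ≤
        ((1 + ‖J0‖) / 2 * ‖g‖ ^ 2) * (inner ℂ (J (J0 f)) f : ℂ).re :=
      mul_le_mul_of_nonneg_right h3 hQ
    by_cases hg0 : ‖g‖ = 0
    · rw [hg0]
      have : (0 : ℝ) ≤ (1 + ‖J0‖) / 2 * (inner ℂ (J (J0 f)) f : ℂ).re :=
        mul_nonneg (by positivity) hQ
      simpa using this
    · have hgpos : 0 < ‖g‖ := lt_of_le_of_ne (norm_nonneg g) (Ne.symm hg0)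
      nlinarith [h4, h6, hgpos, pow_pos hgpos 2]
  have part2p := main2 Ep hmvP (fun x => by rw [hEpJ0 (Ep x), hEpEp x]) hEpn
  have part2m := main2 Em hmvM (fun x => by rw [hEmJ0 (Em x), hEmEm x, norm_neg]) hEmn
  exact ⟨part1p, part1m, part2p, part2m⟩
end
end
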